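/- arXiv:2005.13330 — 9 statements merged into one kernel-verified Lean document; each statement's English description precedes it below -/
import Mathlib

section
/- For every complex number a with Re(a) > 0 and every complex number b, the power series ∑_{k=0}^∞ z^k / Γ(b + a·k) converges absolutely for every z ∈ ℂ, and the function z ↦ ∑_{k=0}^∞ z^k / Γ(b + a·k) is analytic on all of ℂ (i.e., the Mittag-Leffler function E_{a,b} is an entire function). -/
open Complex Finset Set

/-- The Mittag-Leffler function `E_{a,b}(z) = ∑_{k=0}^∞ z^k / Γ(b + a k)`. -/
noncomputable def mittagLeffler (a b z : ℂ) : ℂ :=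
  ∑' k : ℕ, z ^ k / Complex.Gamma (b + a * k)

namespace MittagLefflerAux

open scoped Nat

lemma norm_sin_le (z : ℂ) : ‖Complex.sin z‖ ≤ Real.exp ‖z‖ := by
  have key : ∀ w : ℂ, ‖Complex.exp w‖ ≤ Real.exp ‖w‖ := by
    intro w
    rw [Complex.norm_exp]
    exact Real.exp_le_exp.2 ((le_abs_self _).trans (Complex.abs_re_le_norm w))
  rw [Complex.sin]
  have h1 : ‖Complex.exp (-z * I)‖ ≤ Real.exp ‖z‖ := by
    refine (key _).trans (Real.exp_le_exp.2 ?_)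
    simp [norm_mul]
  have h2 : ‖Complex.exp (z * I)‖ ≤ Real.exp ‖z‖ := by
    refine (key _).trans (Real.exp_le_exp.2 ?_)
    simp [norm_mul]
  calc ‖(Complex.exp (-z * I) - Complex.exp (z * I)) * I / 2‖
      = ‖Complex.exp (-z * I) - Complex.exp (z * I)‖ / 2 := by
        simp [norm_div, norm_mul]
    _ ≤ (‖Complex.exp (-z * I)‖ + ‖Complex.exp (z * I)‖) / 2 := by
        gcongr; exact norm_sub_le _ _
    _ ≤ (Real.exp ‖z‖ + Real.exp ‖z‖) / 2 := by gcongr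
    _ = Real.exp ‖z‖ := by ring

lemma norm_Gamma_le (s : ℂ) (hs : 0 < s.re) : ‖Complex.Gamma s‖ ≤ Real.Gamma s.re := by
  rw [Complex.Gamma_eq_integral hs, Real.Gamma_eq_integral hs, Complex.GammaIntegral]
  refine MeasureTheory.norm_integral_le_of_norm_le (Real.GammaIntegral_convergent hs) ?_
  filter_upwards [MeasureTheory.ae_restrict_mem measurableSet_Ioi] with x hx
  rw [norm_mul,
    Complex.norm_cpow_eq_rpow_re_of_pos hx, Complex.norm_real]
  simp [_root_.abs_of_nonneg (Real.exp_pos (-x)).le, Complex.sub_re]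

/-- A bound for `1/Γ` on the strip `1/2 ≤ Re w ≤ 3/2`. -/
lemma exists_inv_Gamma_strip_bound :
    ∃ A : ℝ, 0 < A ∧ ∀ w : ℂ, w.re ∈ Icc (1/2 : ℝ) (3/2) →
      ‖(Complex.Gamma w)⁻¹‖ ≤ A * Real.exp (Real.pi * ‖w‖) := by
  -- bound for real Gamma on [3/2, 5/2]
  have hcont : ContinuousOn Real.Gamma (Icc (3/2 : ℝ) (5/2)) := by
    intro x hx
    refine (Real.differentiableAt_Gamma fun m => ?_).continuousAt.continuousWithinAt
    have hx' : (0:ℝ) < x := lt_of_lt_of_le (by norm_num) hx.1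
    intro h
    rw [h] at hx'
    have : (0:ℝ) ≤ (m:ℝ) := Nat.cast_nonneg m
    linarith
  obtain ⟨x₀, hx₀mem, hx₀⟩ := (isCompact_Icc : IsCompact (Icc (3/2 : ℝ) (5/2))).exists_isMaxOn
    ⟨3/2, by norm_num, by norm_num⟩ hcont
  set C : ℝ := Real.Gamma x₀ with hC
  -- bound for 1/Γ on the closed disc of radius 1/2 around 1
  have hdisc : ∀ w ∈ Metric.closedBall (1 : ℂ) (1/2), (0:ℝ) < w.re := by
    intro w hw
    rw [Metric.mem_closedBall, Complex.dist_eq] at hw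
    have h1 : |w.re - 1| ≤ 1/2 := by
      have := (Complex.abs_re_le_norm (w - 1)).trans hw
      simpa using this
    have := abs_le.1 h1
    linarith [this.1]
  have hcont2 : ContinuousOn (fun w : ℂ => ‖(Complex.Gamma w)⁻¹‖)
      (Metric.closedBall (1 : ℂ) (1/2)) := by
    refine ContinuousOn.norm ?_
    intro w hw
    refine (((Complex.differentiableAt_Gamma w fun m => ?_).continuousAt).inv₀
      (Complex.Gamma_ne_zero_of_re_pos (hdisc w hw))).continuousWithinAt
    intro h
    have h2 := hdisc w hw
    rw [h] at h2
    simp only [Complex.neg_re, Complex.natCast_re] at h2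
    have : (0:ℝ) ≤ (m:ℝ) := Nat.cast_nonneg m
    linarith
  obtain ⟨w₀, -, hw₀⟩ := (isCompact_closedBall (1 : ℂ) (1/2)).exists_isMaxOn
    ⟨1, by simp⟩ hcont2
  set A₂ : ℝ := ‖(Complex.Gamma w₀)⁻¹‖ with hA₂
  have hA₂0 : 0 ≤ A₂ := norm_nonneg _
  have hCpos : 0 < C := Real.Gamma_pos_of_pos (by linarith [hx₀mem.1])
  refine ⟨A₂ + 4 * C / Real.pi + 1, by positivity, ?_⟩
  intro w hw
  have hwre : 0 < w.re := lt_of_lt_of_le (by norm_num) hw.1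
  have hΓw : Complex.Gamma w ≠ 0 := Complex.Gamma_ne_zero_of_re_pos hwre
  have hexp1 : (1:ℝ) ≤ Real.exp (Real.pi * ‖w‖) := by
    apply Real.one_le_exp; positivity
  have h4C : (0:ℝ) ≤ 4 * C / Real.pi := by positivity
  by_cases hball : w ∈ Metric.closedBall (1 : ℂ) (1/2)
  · calc ‖(Complex.Gamma w)⁻¹‖ ≤ A₂ := hw₀ hball
      _ ≤ (A₂ + 4 * C / Real.pi + 1) * 1 := by linarith
      _ ≤ (A₂ + 4 * C / Real.pi + 1) * Real.exp (Real.pi * ‖w‖) := by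
          gcongr
  · -- use the reflection formula
    rw [Metric.mem_closedBall, not_le, Complex.dist_eq] at hball
    have h1w : (1 : ℂ) - w ≠ 0 := by
      intro h
      have hz : w - 1 = 0 := by linear_combination -h
      rw [hz, norm_zero] at hball
      linarith
    have h2w : (2 : ℂ) - w ≠ 0 := by
      intro h
      have : ((2 : ℂ) - w).re = 0 := by rw [h]; simp
      simp only [Complex.sub_re] at this
      have : w.re = 2 := by
        have h2 : (2:ℂ).re = 2 := by norm_num
        linarith [this, h2]
      linarith [hw.2, this]
    have hsin : Complex.sin (Real.pi * w) ≠ 0 := by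
      intro h
      rw [Complex.sin_eq_zero_iff] at h
      obtain ⟨k, hk⟩ := h
      have hπ : (Real.pi : ℂ) ≠ 0 := Complex.ofReal_ne_zero.2 Real.pi_ne_zero
      have hwk : w = (k : ℂ) := by
        apply mul_left_cancel₀ hπ
        rw [hk]; ring
      have hkre : w.re = (k : ℝ) := by rw [hwk]; simp
      have hkim : w.im = 0 := by rw [hwk]; simp
      have hk1 : k = 1 := by
        have h1 := hw.1
        have h2 := hw.2
        rw [hkre] at h1 h2
        have hk0 : (0:ℤ) < k := by exact_mod_cast lt_of_lt_of_le (by norm_num : (0:ℝ) < 1/2) h1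
        have hklt : (k:ℝ) < 2 := by linarith
        have : k < 2 := by exact_mod_cast hklt
        omega
      rw [hk1] at hwk
      have : ‖w - 1‖ = 0 := by rw [hwk]; simp
      rw [this] at hball
      linarith
    -- the reflection identity for 1/Γ
    have hΓ1w : Complex.Gamma ((1 : ℂ) - w) = (Real.pi : ℂ) / (Complex.sin (Real.pi * w) * Complex.Gamma w) := by
      have h := Complex.Gamma_mul_Gamma_one_sub w
      field_simp at h ⊢
      linear_combination h
    have hG3 : Complex.Gamma ((3 : ℂ) - w) = ((2:ℂ) - w) * ((1:ℂ) - w) * Complex.Gamma ((1:ℂ) - w) := by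
      have e1 : Complex.Gamma (((2:ℂ) - w) + 1) = ((2:ℂ) - w) * Complex.Gamma ((2:ℂ) - w) :=
        Complex.Gamma_add_one _ h2w
      have e2 : Complex.Gamma (((1:ℂ) - w) + 1) = ((1:ℂ) - w) * Complex.Gamma ((1:ℂ) - w) :=
        Complex.Gamma_add_one _ h1w
      have e3 : ((2:ℂ) - w) + 1 = (3:ℂ) - w := by ring
      have e4 : ((1:ℂ) - w) + 1 = (2:ℂ) - w := by ring
      rw [e3] at e1
      rw [e4] at e2
      rw [e1, e2]
      ring
    have hπ0 : (Real.pi : ℂ) ≠ 0 := Complex.ofReal_ne_zero.2 Real.pi_ne_zero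
    have key : (Complex.Gamma w)⁻¹ =
        Complex.sin (Real.pi * w) * Complex.Gamma ((3:ℂ) - w) / ((Real.pi : ℂ) * (((1:ℂ) - w) * ((2:ℂ) - w))) := by
      rw [hG3, hΓ1w]
      field_simp
    rw [key]
    -- now bound the norms
    have hb1 : ‖Complex.sin ((Real.pi : ℂ) * w)‖ ≤ Real.exp (Real.pi * ‖w‖) := by
      refine (norm_sin_le _).trans (Real.exp_le_exp.2 ?_)
      rw [norm_mul]
      simp [Complex.norm_real, _root_.abs_of_nonneg Real.pi_pos.le]
    have hb2 : ‖Complex.Gamma ((3:ℂ) - w)‖ ≤ C := by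
      have hre : ((3:ℂ) - w).re = 3 - w.re := by simp
      have hmem : ((3:ℂ) - w).re ∈ Icc (3/2:ℝ) (5/2) := by
        rw [hre]
        constructor <;> [linarith [hw.2]; linarith [hw.1]]
      refine (norm_Gamma_le _ ?_).trans (hx₀ hmem)
      rw [hre]; linarith [hw.2]
    have hb3 : (1/2 : ℝ) ≤ ‖(1:ℂ) - w‖ := by
      rw [show (1:ℂ) - w = -(w - 1) by ring, norm_neg]
      exact hball.le
    have hb4 : (1/2 : ℝ) ≤ ‖(2:ℂ) - w‖ := by
      refine le_trans ?_ (Complex.abs_re_le_norm _)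
      rw [Complex.sub_re]
      have : (2:ℂ).re = 2 := by norm_num
      rw [this, le_abs]
      left; linarith [hw.2]
    rw [norm_div, norm_mul, norm_mul, norm_mul]
    have hπnorm : ‖(Real.pi : ℂ)‖ = Real.pi := by
      simp [Complex.norm_real, _root_.abs_of_nonneg Real.pi_pos.le]
    rw [hπnorm]
    have hden : Real.pi * (1/2 * (1/2)) ≤ Real.pi * (‖(1:ℂ) - w‖ * ‖(2:ℂ) - w‖) := by
      have hm : (1/2 : ℝ) * (1/2) ≤ ‖(1:ℂ) - w‖ * ‖(2:ℂ) - w‖ :=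
        mul_le_mul hb3 hb4 (by norm_num) (norm_nonneg _)
      exact mul_le_mul_of_nonneg_left hm Real.pi_pos.le
    have hdenpos : 0 < Real.pi * (1/2 * (1/2 : ℝ)) := by positivity
    calc ‖Complex.sin ((Real.pi:ℂ) * w)‖ * ‖Complex.Gamma ((3:ℂ) - w)‖ /
          (Real.pi * (‖(1:ℂ) - w‖ * ‖(2:ℂ) - w‖))
        ≤ Real.exp (Real.pi * ‖w‖) * C / (Real.pi * (1/2 * (1/2))) := by
          apply div_le_div₀ (by positivity) ?_ hdenpos hden
          exact mul_le_mul hb1 hb2 (norm_nonneg _) (Real.exp_pos _).le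
      _ = (4 * C / Real.pi) * Real.exp (Real.pi * ‖w‖) := by
          field_simp
          ring
      _ ≤ (A₂ + 4 * C / Real.pi + 1) * Real.exp (Real.pi * ‖w‖) := by
          gcongr
          linarith

lemma Gamma_add_nat (w : ℂ) (hw : 0 < w.re) (n : ℕ) :
    Complex.Gamma (w + n) = Complex.Gamma w * ∏ j ∈ range n, (w + j) := by
  induction n with
  | zero => simp
  | succ n ih =>
    have hne : w + n ≠ 0 := by
      intro h
      have : (w + (n:ℂ)).re = 0 := by rw [h]; simp
      simp only [Complex.add_re, Complex.natCast_re] at this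
      have : (0:ℝ) ≤ (n:ℝ) := Nat.cast_nonneg n
      linarith
    have e1 : w + ((n:ℕ)+1 : ℕ) = (w + n) + 1 := by push_cast; ring
    rw [e1, Complex.Gamma_add_one _ hne, ih, prod_range_succ]
    ring

lemma inv_Gamma_add_nat_bound (w : ℂ) (hw : 1/2 ≤ w.re) (n : ℕ) :
    ‖(Complex.Gamma (w + n))⁻¹‖ ≤ ‖(Complex.Gamma w)⁻¹‖ * (2 ^ n / n !) := by
  have hw0 : 0 < w.re := lt_of_lt_of_le (by norm_num) hw
  rw [Gamma_add_nat w hw0 n, mul_inv, norm_mul]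
  have hprod : ((n ! : ℝ) / 2 ^ n) ≤ ∏ j ∈ range n, ‖w + (j:ℂ)‖ := by
    have h1 : ∀ j ∈ range n, ((j:ℝ) + 1) / 2 ≤ ‖w + (j:ℂ)‖ := by
      intro j _
      refine le_trans ?_ (le_trans (le_abs_self _) (Complex.abs_re_le_norm _))
      simp only [Complex.add_re, Complex.natCast_re]
      linarith
    calc ((n ! : ℝ) / 2 ^ n) = ∏ j ∈ range n, (((j:ℝ) + 1) / 2) := by
          rw [prod_div_distrib, prod_const]
          congr 1
          · exact_mod_cast (Finset.prod_range_add_one_eq_factorial n).symm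
          · simp
      _ ≤ ∏ j ∈ range n, ‖w + (j:ℂ)‖ :=
          Finset.prod_le_prod (fun j _ => by positivity) h1
  have hnorm : ‖(∏ j ∈ range n, (w + (j:ℂ)))⁻¹‖ = (∏ j ∈ range n, ‖w + (j:ℂ)‖)⁻¹ := by
    rw [norm_inv, norm_prod]
  rw [hnorm]
  have hfac : (0:ℝ) < (n ! : ℝ) / 2 ^ n := by positivity
  have : (∏ j ∈ range n, ‖w + (j:ℂ)‖)⁻¹ ≤ ((n ! : ℝ) / 2 ^ n)⁻¹ :=
    inv_anti₀ hfac hprod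
  calc ‖(Complex.Gamma w)⁻¹‖ * (∏ j ∈ range n, ‖w + (j:ℂ)‖)⁻¹
      ≤ ‖(Complex.Gamma w)⁻¹‖ * ((n ! : ℝ) / 2 ^ n)⁻¹ := by
        gcongr
      _ = ‖(Complex.Gamma w)⁻¹‖ * (2 ^ n / n !) := by
        rw [inv_div]

lemma pow_div_factorial_le_geom (y : ℝ) (hy : 0 ≤ y) (n : ℕ) :
    y ^ n / n ! ≤ (2 * Real.exp y * (2:ℝ) ^ (2*y)) * (1/2) ^ n := by
  have hD1 : (1:ℝ) ≤ 2 * Real.exp y * (2:ℝ) ^ (2*y) := by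
    have h1 : (1:ℝ) ≤ Real.exp y := Real.one_le_exp hy
    have h2 : (1:ℝ) ≤ (2:ℝ) ^ (2*y) := Real.one_le_rpow one_le_two (by linarith)
    nlinarith
  induction n with
  | zero => simpa using hD1
  | succ n ih =>
    rcases le_or_gt y (((n:ℝ) + 1) / 2) with h | h
    · have e1 : y ^ (n+1) / (n+1)! = (y ^ n / n !) * (y / ((n:ℝ) + 1)) := by
        rw [Nat.factorial_succ]
        push_cast
        field_simp
        ring
      rw [e1]
      have h2 : y / ((n:ℝ) + 1) ≤ 1/2 := by
        rw [div_le_div_iff₀ (by positivity) (by norm_num)]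
        linarith
      calc (y ^ n / n !) * (y / ((n:ℝ) + 1))
          ≤ ((2 * Real.exp y * (2:ℝ) ^ (2*y)) * (1/2) ^ n) * (1/2) := by
            apply mul_le_mul ih h2 (by positivity) (by positivity)
        _ = (2 * Real.exp y * (2:ℝ) ^ (2*y)) * (1/2) ^ (n+1) := by ring
    · have h1 : y ^ (n+1) / (n+1)! ≤ Real.exp y := Real.pow_div_factorial_le_exp y hy (n+1)
      have h2 : ((2:ℝ)) ^ ((n:ℝ)+1) ≤ (2:ℝ) ^ (2*y) := by
        apply Real.rpow_le_rpow_of_exponent_le one_le_two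
        linarith
      have h3 : (2:ℝ) ^ ((n:ℝ)+1) = 2 ^ (n+1) := by
        rw [show ((n:ℝ)+1) = ((n+1 : ℕ) : ℝ) by push_cast; ring, Real.rpow_natCast]
      have h4 : (1:ℝ) ≤ 2 * (2:ℝ) ^ (2*y) * (1/2) ^ (n+1) := by
        have h5 : (0:ℝ) < (2:ℝ) ^ (n+1) := by positivity
        have h6 : ((2:ℝ) ^ (n+1)) * ((1:ℝ)/2) ^ (n+1) = 1 := by
          rw [← mul_pow]
          norm_num
        calc (1:ℝ) = ((2:ℝ) ^ (n+1)) * ((1:ℝ)/2) ^ (n+1) := h6.symm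
            _ ≤ (2 * (2:ℝ) ^ (2*y)) * ((1:ℝ)/2) ^ (n+1) := by
              gcongr
              rw [← h3]
              nlinarith [h2, Real.rpow_nonneg (le_of_lt two_pos) (2*y)]
            _ = 2 * (2:ℝ) ^ (2*y) * (1/2) ^ (n+1) := by ring
      calc y ^ (n+1) / (n+1)! ≤ Real.exp y := h1
        _ = Real.exp y * 1 := by ring
        _ ≤ Real.exp y * (2 * (2:ℝ) ^ (2*y) * (1/2) ^ (n+1)) := by
            have := Real.exp_pos y
            nlinarith
        _ = (2 * Real.exp y * (2:ℝ) ^ (2*y)) * (1/2) ^ (n+1) := by ring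

set_option maxHeartbeats 1000000 in
lemma summable_inv_Gamma_mul_pow (a b : ℂ) (ha : 0 < a.re) (r : ℝ) (hr : 0 ≤ r) :
    Summable (fun k : ℕ => ‖(Complex.Gamma (b + a * k))⁻¹‖ * r ^ k) := by
  obtain ⟨A, hA, hbound⟩ := exists_inv_Gamma_strip_bound
  set E : ℝ := Real.exp (Real.pi * |a.im|) with hE
  have hE0 : 0 < E := Real.exp_pos _
  set M : ℝ := r * E + 1 with hM
  have hM1 : 1 ≤ M := by nlinarith
  have hM0 : 0 < M := by linarith
  have hrE : r * E ≤ M := by linarith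
  set y : ℝ := 2 * M ^ (1 / a.re : ℝ) with hy
  have hy0 : 0 ≤ y := by positivity
  set D : ℝ := 2 * Real.exp y * (2:ℝ) ^ (2*y) with hD
  have hD0 : 0 < D := by positivity
  set c₀ : ℝ := 3/2 + |b.re| with hc0
  have hc00 : 0 < c₀ := by positivity
  set ρ : ℝ := (2:ℝ) ^ (-a.re) with hρ
  have hρ0 : 0 ≤ ρ := (Real.rpow_pos_of_pos two_pos _).le
  have hρ1 : ρ < 1 := Real.rpow_lt_one_of_one_lt_of_neg one_lt_two (by linarith)
  set A₁ : ℝ := A * Real.exp (Real.pi * (3/2 + |b.im|)) with hA₁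
  have hA₁0 : 0 < A₁ := by positivity
  set K : ℝ := A₁ * M ^ (c₀ / a.re : ℝ) * (D * (2:ℝ) ^ (c₀ : ℝ)) with hK
  have hK0 : 0 < K := by positivity
  set k₀ : ℕ := ⌈(1/2 + |b.re|) / a.re⌉₊ with hk₀
  have key : ∀ k : ℕ, k₀ ≤ k → ‖(Complex.Gamma (b + a * k))⁻¹‖ * r ^ k ≤ K * ρ ^ k := by
    intro k hk
    have hxk : (b + a * (k:ℂ)).re = b.re + a.re * k := by
      simp [Complex.add_re, Complex.mul_re]
    have him : (b + a * (k:ℂ)).im = b.im + a.im * k := by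
      simp [Complex.add_im, Complex.mul_im]
    have hk' : (1/2 + |b.re|) / a.re ≤ (k:ℝ) := by
      refine le_trans (Nat.le_ceil _) ?_
      exact_mod_cast hk
    have hxk2 : 1/2 + |b.re| ≤ a.re * (k:ℝ) := by
      rw [div_le_iff₀ ha] at hk'
      linarith
    have habs : -|b.re| ≤ b.re := neg_abs_le b.re
    have hx12 : 1/2 ≤ b.re + a.re * k := by linarith
    set n : ℕ := ⌊b.re + a.re * k - 1/2⌋₊ with hn
    set w : ℂ := b + a * k - n with hwdef
    have hwre : w.re = b.re + a.re * k - n := by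
      rw [hwdef, Complex.sub_re, hxk]
      simp
    have hwim : w.im = b.im + a.im * k := by
      rw [hwdef, Complex.sub_im, him]
      simp
    have hfl1 : (n:ℝ) ≤ b.re + a.re * k - 1/2 := Nat.floor_le (by linarith)
    have hfl2 : b.re + a.re * k - 1/2 < n + 1 := Nat.lt_floor_add_one _
    have hw12 : 1/2 ≤ w.re := by rw [hwre]; linarith
    have hw32 : w.re ≤ 3/2 := by rw [hwre]; linarith
    have hwn : w + n = b + a * k := by rw [hwdef]; ring
    have hterm1 : ‖(Complex.Gamma (b + a * k))⁻¹‖ ≤ ‖(Complex.Gamma w)⁻¹‖ * (2 ^ n / n !) := by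
      rw [← hwn]
      exact inv_Gamma_add_nat_bound w hw12 n
    have hterm2 : ‖(Complex.Gamma w)⁻¹‖ ≤ A * Real.exp (Real.pi * ‖w‖) :=
      hbound w ⟨hw12, hw32⟩
    have hnormw : ‖w‖ ≤ 3/2 + |b.im| + |a.im| * k := by
      refine (Complex.norm_le_abs_re_add_abs_im w).trans ?_
      have h1 : |w.re| ≤ 3/2 := abs_le.2 ⟨by linarith, hw32⟩
      have h2 : |w.im| ≤ |b.im| + |a.im| * k := by
        rw [hwim]
        refine (abs_add_le _ _).trans ?_
        rw [abs_mul, Nat.abs_cast]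
      linarith
    have hexpw : Real.exp (Real.pi * ‖w‖) ≤ Real.exp (Real.pi * (3/2 + |b.im|)) * E ^ k := by
      rw [hE, ← Real.exp_nat_mul, ← Real.exp_add]
      apply Real.exp_le_exp.2
      have h := mul_le_mul_of_nonneg_left hnormw Real.pi_pos.le
      ring_nf at h ⊢
      linarith
    have hak : a.re * k ≤ (n:ℝ) + c₀ := by rw [hc0]; linarith
    have hMk : M ^ (k:ℕ) ≤ M ^ (c₀ / a.re : ℝ) * (M ^ (1 / a.re : ℝ)) ^ n := by
      have e1 : (M:ℝ) ^ (k:ℕ) = M ^ ((k:ℕ):ℝ) := (Real.rpow_natCast M k).symm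
      have e2 : (M ^ (1 / a.re : ℝ)) ^ n = M ^ ((n:ℝ) * (1 / a.re)) := by
        rw [← Real.rpow_natCast (M ^ (1 / a.re : ℝ)) n, ← Real.rpow_mul hM0.le]
        ring_nf
      rw [e1, e2, ← Real.rpow_add hM0]
      apply Real.rpow_le_rpow_of_exponent_le hM1
      rw [div_add' _ _ _ (ne_of_gt ha)]
      rw [le_div_iff₀ ha]
      have e3 : (n:ℝ) * (1/a.re) * a.re = n := by field_simp
      linarith
    have hfact : y ^ n / n ! ≤ D * (1/2) ^ n := pow_div_factorial_le_geom y hy0 n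
    have hhalf : ((1:ℝ)/2) ^ n ≤ (2:ℝ) ^ (c₀ : ℝ) * ρ ^ k := by
      have e1 : ((1:ℝ)/2) ^ n = (2:ℝ) ^ (-(n:ℝ)) := by
        rw [Real.rpow_neg (by norm_num), Real.rpow_natCast, one_div, inv_pow]
      have e2 : (2:ℝ) ^ (c₀ : ℝ) * ρ ^ k = (2:ℝ) ^ (c₀ - a.re * k) := by
        rw [hρ, ← Real.rpow_natCast ((2:ℝ) ^ (-a.re : ℝ)) k, ← Real.rpow_mul (by norm_num),
          ← Real.rpow_add two_pos]
        ring_nf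
      rw [e1, e2]
      apply Real.rpow_le_rpow_of_exponent_le one_le_two
      linarith
    have hn0 : (0:ℝ) < (n ! : ℝ) := by positivity
    calc ‖(Complex.Gamma (b + a * k))⁻¹‖ * r ^ k
        ≤ (‖(Complex.Gamma w)⁻¹‖ * (2 ^ n / n !)) * r ^ k := by
          gcongr
      _ ≤ ((A * Real.exp (Real.pi * ‖w‖)) * (2 ^ n / n !)) * r ^ k := by
          gcongr
      _ ≤ ((A * (Real.exp (Real.pi * (3/2 + |b.im|)) * E ^ k)) * (2 ^ n / n !)) * r ^ k := by
          gcongr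
      _ = A₁ * (((r * E) ^ k * 2 ^ n) / n !) := by
          rw [hA₁, mul_pow]
          field_simp
      _ ≤ A₁ * ((M ^ k * 2 ^ n) / n !) := by
          gcongr
      _ ≤ A₁ * (((M ^ (c₀ / a.re : ℝ) * (M ^ (1 / a.re : ℝ)) ^ n) * 2 ^ n) / n !) := by
          gcongr
      _ = (A₁ * M ^ (c₀ / a.re : ℝ)) * (y ^ n / n !) := by
          rw [hy, mul_pow]
          field_simp
      _ ≤ (A₁ * M ^ (c₀ / a.re : ℝ)) * (D * (1/2) ^ n) := by
          gcongr
      _ ≤ (A₁ * M ^ (c₀ / a.re : ℝ)) * (D * ((2:ℝ) ^ (c₀ : ℝ) * ρ ^ k)) := by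
          gcongr
      _ = K * ρ ^ k := by rw [hK]; ring
  rw [← summable_nat_add_iff k₀]
  have hmaj : Summable (fun m : ℕ => K * ρ ^ (m + k₀)) := by
    have h1 : Summable (fun m : ℕ => ρ ^ m) := summable_geometric_of_lt_one hρ0 hρ1
    refine ((h1.mul_left (K * ρ ^ k₀)).congr fun m => ?_)
    rw [pow_add]
    ring
  refine Summable.of_nonneg_of_le (fun m => by positivity) (fun m => ?_) hmaj
  exact key (m + k₀) (Nat.le_add_left _ _)

end MittagLefflerAux

/-- For `Re a > 0` and any `b`, the Mittag-Leffler series converges absolutely for every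
`z ∈ ℂ`, and `E_{a,b}` is an entire function. -/
theorem mittagLeffler_summable_and_entire (a b : ℂ) (ha : 0 < a.re) :
    (∀ z : ℂ, Summable fun k : ℕ => ‖z ^ k / Complex.Gamma (b + a * k)‖) ∧
    (∀ z : ℂ, AnalyticAt ℂ (mittagLeffler a b) z) := by
  have hsum : ∀ z : ℂ, Summable fun k : ℕ => ‖z ^ k / Complex.Gamma (b + a * k)‖ := by
    intro z
    refine (MittagLefflerAux.summable_inv_Gamma_mul_pow a b ha ‖z‖ (norm_nonneg z)).congr
      fun k => ?_
    rw [div_eq_mul_inv, norm_mul, norm_pow, mul_comm]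
  refine ⟨hsum, fun z => ?_⟩
  set c : ℕ → ℂ := fun k => (Complex.Gamma (b + a * k))⁻¹ with hc
  set p := FormalMultilinearSeries.ofScalars ℂ c with hp
  have hnorm : ∀ n, ‖p n‖ = ‖c n‖ := fun n => FormalMultilinearSeries.ofScalars_norm ℂ c n
  have hrad : p.radius = ⊤ := by
    apply ENNReal.eq_top_of_forall_nnreal_le
    intro s
    apply p.le_radius_of_summable_norm
    refine (MittagLefflerAux.summable_inv_Gamma_mul_pow a b ha (s:ℝ) s.coe_nonneg).congr
      fun k => ?_
    rw [hnorm]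
  have hball := p.hasFPowerSeriesOnBall (by rw [hrad]; exact ENNReal.zero_lt_top)
  rw [hrad] at hball
  have hfun : mittagLeffler a b = p.sum := by
    funext x
    rw [mittagLeffler, hp, ← FormalMultilinearSeries.ofScalarsSum,
      FormalMultilinearSeries.ofScalars_sum_eq]
    exact tsum_congr fun k => by rw [smul_eq_mul, div_eq_mul_inv, mul_comm]
  rw [hfun]
  exact hball.analyticAt_of_mem (by simp [EMetric.mem_ball, edist_lt_top])
end

section
/- Cyclotomic (multisection) property: for every positive integer m, every complex number a with Re(a) > 0, every complex number b, and every z ∈ ℂ, one has E_{a·m, b}(z^m) = (1/m) · ∑_{r=0}^{m−1} E_{a,b}(z · e^{2πi r/m}). -/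
open Complex

section MLaux

lemma ml_abs_Gamma_le {s : ℂ} (hs : 0 < s.re) :
    ‖Complex.Gamma s‖ ≤ Real.Gamma s.re := by
  rw [Complex.Gamma_eq_integral hs, Real.Gamma_eq_integral hs, Complex.GammaIntegral]
  calc ‖∫ x in Set.Ioi (0:ℝ), (↑(Real.exp (-x)) * (x:ℂ) ^ (s-1) : ℂ)‖
      ≤ ∫ x in Set.Ioi (0:ℝ), ‖(↑(Real.exp (-x)) * (x:ℂ) ^ (s-1) : ℂ)‖ :=
        MeasureTheory.norm_integral_le_integral_norm _
    _ = ∫ x in Set.Ioi (0:ℝ), Real.exp (-x) * x ^ (s.re - 1) := by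
        apply MeasureTheory.setIntegral_congr_fun measurableSet_Ioi
        intro x hx
        dsimp only
        rw [norm_mul, Complex.norm_real, Real.norm_eq_abs,
          abs_of_pos (Real.exp_pos _), Complex.norm_cpow_eq_rpow_re_of_pos hx]
        simp

lemma ml_Gamma_le_one {x : ℝ} (h1 : 1 ≤ x) (h2 : x ≤ 2) : Real.Gamma x ≤ 1 := by
  have hc := Real.convexOn_Gamma
  have key := hc.2 (show (1:ℝ) ∈ Set.Ioi (0:ℝ) from Set.mem_Ioi.mpr one_pos)
    (show (2:ℝ) ∈ Set.Ioi (0:ℝ) from Set.mem_Ioi.mpr two_pos)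
    (show (0:ℝ) ≤ 2 - x by linarith) (show (0:ℝ) ≤ x - 1 by linarith)
    (show (2 - x) + (x - 1) = 1 by ring)
  simp only [smul_eq_mul, Real.Gamma_one, Real.Gamma_two] at key
  have hx : (2 - x) * 1 + (x - 1) * 2 = x := by ring
  rw [hx] at key
  linarith

lemma ml_abs_sin_le (w : ℂ) : ‖Complex.sin w‖ ≤ Real.exp |w.im| := by
  unfold Complex.sin
  rw [norm_div, norm_mul]
  simp only [Complex.norm_I, Complex.norm_two, mul_one]
  have h1 : ‖Complex.exp (-w * Complex.I) - Complex.exp (w * Complex.I)‖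
      ≤ Real.exp |w.im| + Real.exp |w.im| := by
    refine (norm_sub_le _ _).trans ?_
    have e1 : ‖Complex.exp (-w * Complex.I)‖ = Real.exp w.im := by
      rw [Complex.norm_exp]; congr 1; simp [Complex.mul_re]
    have e2 : ‖Complex.exp (w * Complex.I)‖ = Real.exp (-w.im) := by
      rw [Complex.norm_exp]; congr 1; simp [Complex.mul_re]
    rw [e1, e2]
    gcongr <;> [exact le_abs_self _; exact neg_le_abs _]
  calc ‖Complex.exp (-w * Complex.I) - Complex.exp (w * Complex.I)‖ / 2
      ≤ (Real.exp |w.im| + Real.exp |w.im|) / 2 := by gcongr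
    _ = Real.exp |w.im| := by ring

lemma ml_strip_large_im {w : ℂ} (h1 : 1 ≤ w.re) (h2 : w.re ≤ 2) (him : 1 ≤ |w.im|) :
    Real.pi * Real.exp (-4 * |w.im|) ≤ ‖Complex.Gamma w‖ := by
  set t : ℝ := |w.im| with ht
  have him0 : w.im ≠ 0 := by intro h; rw [ht, h] at him; norm_num at him
  have hGw : Complex.Gamma w ≠ 0 := Complex.Gamma_ne_zero_of_re_pos (by linarith)
  have h1w : ∀ m : ℕ, (1 - w) ≠ -m := by
    intro m h
    apply him0
    have := congrArg Complex.im h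
    simpa using this
  have hG1w : Complex.Gamma (1 - w) ≠ 0 := Complex.Gamma_ne_zero h1w
  have refl := Complex.Gamma_mul_Gamma_one_sub w
  have hsin : Complex.sin (Real.pi * w) ≠ 0 := by
    intro h
    rw [h, div_zero] at refl
    exact mul_ne_zero hGw hG1w refl
  -- abs version of reflection
  have habs : ‖Complex.Gamma w‖ * ‖Complex.Gamma (1 - w)‖
      * ‖Complex.sin (Real.pi * w)‖ = Real.pi := by
    have := congrArg (‖·‖) refl
    rw [norm_mul, norm_div] at this
    have hπ : ‖(Real.pi : ℂ)‖ = Real.pi := by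
      rw [Complex.norm_real, Real.norm_eq_abs, abs_of_pos Real.pi_pos]
    rw [hπ] at this
    field_simp [norm_ne_zero_iff.mpr hsin] at this ⊢
    rw [this, div_mul_cancel₀ _ (by rw [mul_comm]; exact norm_ne_zero_iff.mpr hsin)]
  -- bound abs Γ(1-w) ≤ 1
  have hG3 : Complex.Gamma (3 - w) = (2 - w) * ((1 - w) * Complex.Gamma (1 - w)) := by
    have e1 : (3 : ℂ) - w = (2 - w) + 1 := by ring
    have e2 : (2 : ℂ) - w = (1 - w) + 1 := by ring
    rw [e1, Complex.Gamma_add_one _ (by intro h; apply him0; have := congrArg Complex.im h; simpa using this),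
      e2, Complex.Gamma_add_one _ (by intro h; apply him0; have := congrArg Complex.im h; simpa using this)]
  have hG3le : ‖Complex.Gamma (3 - w)‖ ≤ 1 := by
    have hre : (3 - w).re = 3 - w.re := by simp
    refine (ml_abs_Gamma_le (by rw [hre]; linarith)).trans ?_
    rw [hre]
    exact ml_Gamma_le_one (by linarith) (by linarith)
  have h1wabs : t ≤ ‖1 - w‖ := by
    have : |(1 - w).im| ≤ ‖1 - w‖ := Complex.abs_im_le_norm _
    simpa [ht] using this
  have h2wabs : t ≤ ‖2 - w‖ := by
    have : |(2 - w).im| ≤ ‖2 - w‖ := Complex.abs_im_le_norm _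
    simpa [ht] using this
  have hG1wle : ‖Complex.Gamma (1 - w)‖ ≤ 1 := by
    have habs3 : ‖Complex.Gamma (3 - w)‖
        = ‖2 - w‖ * (‖1 - w‖ * ‖Complex.Gamma (1 - w)‖) := by
      rw [hG3, norm_mul, norm_mul]
    have h12 : 1 ≤ ‖2 - w‖ * ‖1 - w‖ := by
      nlinarith [norm_nonneg (1 - w), norm_nonneg (2 - w)]
    nlinarith [norm_nonneg (Complex.Gamma (1 - w)), norm_nonneg (2 - w),
      norm_nonneg (1 - w), hG3le]
  -- bound abs sin
  have hsinle : ‖Complex.sin (Real.pi * w)‖ ≤ Real.exp (4 * t) := by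
    refine (ml_abs_sin_le _).trans ?_
    apply Real.exp_le_exp.mpr
    have : |((Real.pi : ℂ) * w).im| = Real.pi * t := by
      simp [Complex.mul_im, abs_mul, abs_of_pos Real.pi_pos, ht]
    rw [this]
    nlinarith [Real.pi_lt_d2, abs_nonneg w.im]
  -- combine
  have key : Real.pi ≤ ‖Complex.Gamma w‖ * Real.exp (4 * t) := by
    calc Real.pi = ‖Complex.Gamma w‖ * ‖Complex.Gamma (1 - w)‖
        * ‖Complex.sin (Real.pi * w)‖ := habs.symm
      _ ≤ ‖Complex.Gamma w‖ * 1 * Real.exp (4 * t) := by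
          gcongr
          all_goals first | exact norm_nonneg _ | exact hG1wle | exact hsinle
      _ = ‖Complex.Gamma w‖ * Real.exp (4 * t) := by ring
  have hexp : Real.exp (-4 * t) = (Real.exp (4 * t))⁻¹ := by
    rw [← Real.exp_neg]; ring_nf
  rw [hexp]
  rw [mul_inv_le_iff₀ (Real.exp_pos _)]
  linarith [key]

lemma ml_exists_strip_lower : ∃ c > 0, ∀ w : ℂ, 1 ≤ w.re → w.re ≤ 2 →
    c * Real.exp (-4 * |w.im|) ≤ ‖Complex.Gamma w‖ := by
  set K : Set ℂ := Complex.re ⁻¹' Set.Icc 1 2 ∩ Complex.im ⁻¹' Set.Icc (-1) 1 with hK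
  have hKclosed : IsClosed K :=
    (isClosed_Icc.preimage Complex.continuous_re).inter
      (isClosed_Icc.preimage Complex.continuous_im)
  have hKbdd : Bornology.IsBounded K := by
    apply Bornology.IsBounded.subset (Metric.isBounded_closedBall (x := (0:ℂ)) (r := 3))
    intro w hw
    obtain ⟨⟨hr1, hr2⟩, hi1, hi2⟩ := hw
    rw [Metric.mem_closedBall, dist_zero_right]
    refine (Complex.norm_le_abs_re_add_abs_im w).trans ?_
    rw [abs_of_pos (by linarith : (0:ℝ) < w.re)]
    have : |w.im| ≤ 1 := abs_le.mpr ⟨hi1, hi2⟩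
    linarith
  have hKcomp : IsCompact K := Metric.isCompact_of_isClosed_isBounded hKclosed hKbdd
  have hne : K.Nonempty := ⟨1, by constructor <;> constructor <;> norm_num⟩
  have hcont : ContinuousOn (fun w => ‖Complex.Gamma w‖) K := by
    intro w hw
    have hre : 1 ≤ w.re := hw.1.1
    have hdiff : DifferentiableAt ℂ Complex.Gamma w := by
      apply Complex.differentiableAt_Gamma
      intro m h
      have := congrArg Complex.re h
      simp at this
      have : (0:ℝ) ≤ m := Nat.cast_nonneg m
      linarith [hw.1.1, congrArg Complex.re h, (by simpa using congrArg Complex.re h : w.re = -(m:ℝ))]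
    exact (continuous_norm.continuousAt.comp hdiff.continuousAt).continuousWithinAt
  obtain ⟨w₀, hw₀K, hmin⟩ := hKcomp.exists_isMinOn hne hcont
  have hε : 0 < ‖Complex.Gamma w₀‖ :=
    norm_pos_iff.mpr (Complex.Gamma_ne_zero_of_re_pos (by linarith [hw₀K.1.1]))
  refine ⟨min (‖Complex.Gamma w₀‖) Real.pi, lt_min hε Real.pi_pos, ?_⟩
  intro w h1 h2
  rcases le_total |w.im| 1 with him | him
  · have hwK : w ∈ K := ⟨⟨h1, h2⟩, abs_le.mp him⟩
    have hmin' := hmin hwK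
    have hexp : Real.exp (-4 * |w.im|) ≤ 1 :=
      Real.exp_le_one_iff.mpr (by nlinarith [abs_nonneg w.im])
    calc min (‖Complex.Gamma w₀‖) Real.pi * Real.exp (-4 * |w.im|)
        ≤ ‖Complex.Gamma w₀‖ * 1 := by
          apply mul_le_mul (min_le_left _ _) hexp (Real.exp_pos _).le hε.le
      _ = ‖Complex.Gamma w₀‖ := mul_one _
      _ ≤ ‖Complex.Gamma w‖ := hmin'
  · calc min (‖Complex.Gamma w₀‖) Real.pi * Real.exp (-4 * |w.im|)
        ≤ Real.pi * Real.exp (-4 * |w.im|) := by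
          apply mul_le_mul_of_nonneg_right (min_le_right _ _) (Real.exp_pos _).le
      _ ≤ ‖Complex.Gamma w‖ := ml_strip_large_im h1 h2 him

lemma ml_Gamma_factorial (w : ℂ) (hw : 1 ≤ w.re) :
    ∀ n : ℕ, (n.factorial : ℝ) * ‖Complex.Gamma w‖ ≤
      ‖Complex.Gamma (w + n)‖ := by
  intro n
  induction n with
  | zero => simp
  | succ n ih =>
    have hne : w + (n:ℂ) ≠ 0 := by
      intro h
      have := congrArg Complex.re h
      simp at this
      have h0 : (0:ℝ) ≤ (n:ℝ) := Nat.cast_nonneg n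
      linarith
    have heq : w + ((n+1 : ℕ) : ℂ) = (w + n) + 1 := by push_cast; ring
    rw [heq, Complex.Gamma_add_one _ hne, norm_mul]
    have habs : (n:ℝ) + 1 ≤ ‖w + n‖ := by
      refine le_trans ?_ (Complex.re_le_norm _)
      simp only [Complex.add_re, Complex.natCast_re]
      linarith
    calc ((n+1 : ℕ).factorial : ℝ) * ‖Complex.Gamma w‖
        = ((n:ℝ) + 1) * ((n.factorial : ℝ) * ‖Complex.Gamma w‖) := by
          rw [Nat.factorial_succ]; push_cast; ring
      _ ≤ ‖w + n‖ * ‖Complex.Gamma (w + n)‖ := by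
          apply mul_le_mul habs ih (by positivity) (norm_nonneg _)

lemma ml_summable (a b z : ℂ) (ha : 0 < a.re) :
    Summable (fun k : ℕ => z ^ k / Complex.Gamma (b + a * k)) := by
  obtain ⟨c, hc, hstrip⟩ := ml_exists_strip_lower
  set A : ℝ := ‖z‖ * Real.exp (4 * |a.im|) with hA
  have hA0 : 0 ≤ A := by positivity
  set P : ℝ := 2 * A + 1 with hP
  have hP1 : 1 ≤ P := by linarith
  have hP0 : 0 < P := by linarith
  obtain ⟨M, hM⟩ := exists_nat_gt (max 1 (P ^ (a.re⁻¹)))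
  have hM1 : 1 < (M:ℝ) := lt_of_le_of_lt (le_max_left _ _) hM
  have hM0 : (0:ℝ) < M := by linarith
  have hMP : P ≤ (M:ℝ) ^ (a.re) := by
    have h0 : (0:ℝ) ≤ P ^ a.re⁻¹ := Real.rpow_nonneg (by linarith) _
    have h1 : P ^ a.re⁻¹ ≤ (M:ℝ) := le_of_lt (lt_of_le_of_lt (le_max_right _ _) hM)
    calc P = P ^ (a.re⁻¹ * a.re) := by
          rw [inv_mul_cancel₀ ha.ne', Real.rpow_one]
      _ = (P ^ a.re⁻¹) ^ a.re := Real.rpow_mul (by linarith) _ _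
      _ ≤ (M:ℝ) ^ a.re := Real.rpow_le_rpow h0 h1 ha.le
  set β : ℝ := |b.re| + 2 with hβ
  have hβ0 : (0:ℝ) ≤ β := by positivity
  set N : ℝ := Real.exp (4 * |b.im|) * (M:ℝ)^M * (M:ℝ)^β with hN
  have hN0 : 0 ≤ N := by positivity
  have hev : ∀ᶠ k : ℕ in Filter.atTop, (M:ℝ) + 2 + |b.re| ≤ a.re * k := by
    obtain ⟨K₀, hK₀⟩ := exists_nat_gt (((M:ℝ) + 2 + |b.re|) / a.re)
    rw [Filter.eventually_atTop]
    refine ⟨K₀, fun k hk => ?_⟩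
    rw [div_lt_iff₀ ha] at hK₀
    have : (K₀:ℝ) ≤ (k:ℝ) := Nat.cast_le.mpr hk
    nlinarith
  apply summable_of_isBigO_nat
    (summable_geometric_of_lt_one (by norm_num) (by norm_num : (1/2:ℝ) < 1))
  apply Asymptotics.IsBigO.of_bound (N / c)
  filter_upwards [hev] with k hk
  set s : ℂ := b + a * k with hs
  have hsre : s.re = b.re + a.re * k := by
    simp [hs, Complex.add_re, Complex.mul_re]
  have hsim : |s.im| ≤ |b.im| + |a.im| * k := by
    have h' : s.im = b.im + a.im * k := by simp [hs, Complex.add_im, Complex.mul_im]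
    rw [h']
    refine (abs_add_le _ _).trans (le_of_eq ?_)
    rw [abs_mul, Nat.abs_cast]
  have hx2 : 2 ≤ s.re := by
    rw [hsre]
    have := neg_abs_le b.re
    linarith
  set n : ℕ := (⌊s.re⌋ - 1).toNat with hn
  have hfl2 : (2:ℤ) ≤ ⌊s.re⌋ := Int.le_floor.mpr (by exact_mod_cast hx2)
  have hnr : (n:ℝ) = (⌊s.re⌋:ℝ) - 1 := by
    have h' : (n:ℤ) = ⌊s.re⌋ - 1 := by rw [hn]; exact Int.toNat_of_nonneg (by omega)
    have h'' := congrArg (fun x : ℤ => (x:ℝ)) h'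
    push_cast at h''
    exact h''
  have hnlb : a.re * k - β ≤ (n:ℝ) := by
    rw [hnr, hβ]
    have h1 : s.re - 1 < (⌊s.re⌋:ℝ) := Int.sub_one_lt_floor _
    have h2 := neg_abs_le b.re
    linarith [hsre, h1]
  have hnM : M ≤ n := by
    have : (M:ℝ) ≤ (n:ℝ) := by linarith
    exact_mod_cast this
  set w : ℂ := s - n with hw
  have hwre : w.re = s.re - n := by simp [hw]
  have hw1 : 1 ≤ w.re := by
    rw [hwre, hnr]
    have := Int.floor_le s.re
    linarith
  have hw2 : w.re ≤ 2 := by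
    rw [hwre, hnr]
    have := Int.lt_floor_add_one s.re
    linarith
  have hwim : w.im = s.im := by simp [hw]
  have hws : w + n = s := by rw [hw]; ring
  have hGpos : 0 < ‖Complex.Gamma s‖ :=
    norm_pos_iff.mpr (Complex.Gamma_ne_zero_of_re_pos (by linarith))
  have hGlow : (n.factorial : ℝ) * (c * Real.exp (-4 * |s.im|)) ≤
      ‖Complex.Gamma s‖ := by
    calc (n.factorial : ℝ) * (c * Real.exp (-4 * |s.im|))
        ≤ (n.factorial : ℝ) * ‖Complex.Gamma w‖ :=
          mul_le_mul_of_nonneg_left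
            (by rw [← hwim]; exact hstrip w hw1 hw2) (by positivity)
      _ ≤ ‖Complex.Gamma (w + n)‖ := ml_Gamma_factorial w hw1 n
      _ = ‖Complex.Gamma s‖ := by rw [hws]
  have keyMn : (M:ℝ)^n ≤ (M:ℝ)^M * (n.factorial : ℝ) := by
    have hnat : M^n ≤ M^M * n.factorial := by
      calc M^n = M^M * M^(n - M) := by rw [← pow_add]; congr 1; omega
        _ ≤ M^M * ((M+1)^(n - M) * M.factorial) := by
            apply Nat.mul_le_mul_left
            calc M^(n-M) ≤ (M+1)^(n-M) := Nat.pow_le_pow_left (Nat.le_succ M) _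
              _ ≤ (M+1)^(n-M) * M.factorial := Nat.le_mul_of_pos_right _ M.factorial_pos
        _ ≤ M^M * n.factorial := by
            apply Nat.mul_le_mul_left
            have h := Nat.factorial_mul_pow_le_factorial (m := M) (n := n - M)
            rw [Nat.add_sub_cancel' hnM] at h
            rw [mul_comm]
            exact h
    exact_mod_cast hnat
  have keyPk : P^k ≤ (M:ℝ)^β * (M:ℝ)^n := by
    have h1 : ((M:ℝ)^a.re)^k ≤ (M:ℝ)^β * (M:ℝ)^n := by
      have e1 : ((M:ℝ)^a.re)^k = (M:ℝ) ^ (a.re * k) := by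
        rw [← Real.rpow_natCast ((M:ℝ)^a.re) k, ← Real.rpow_mul hM0.le]
      have e2 : (M:ℝ)^(n:ℕ) = (M:ℝ) ^ ((n:ℕ):ℝ) := (Real.rpow_natCast _ _).symm
      rw [e1, e2, ← Real.rpow_add hM0]
      apply Real.rpow_le_rpow_of_exponent_le hM1.le
      linarith
    calc P^k ≤ ((M:ℝ)^a.re)^k := pow_le_pow_left₀ hP0.le hMP k
      _ ≤ (M:ℝ)^β * (M:ℝ)^n := h1
  have hfin : (‖z‖)^k * Real.exp (4 * |s.im|) ≤
      Real.exp (4*|b.im|) * ((1/2:ℝ)^k * ((M:ℝ)^β * ((M:ℝ)^M * (n.factorial:ℝ)))) := by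
    have hAPk : A^k ≤ (1/2:ℝ)^k * P^k := by
      calc A^k ≤ ((1/2) * P)^k := pow_le_pow_left₀ hA0 (by linarith) k
        _ = (1/2:ℝ)^k * P^k := mul_pow _ _ _
    have hExp : Real.exp (4 * |s.im|) ≤ Real.exp (4*|b.im|) * (Real.exp (4*|a.im|))^k := by
      rw [← Real.exp_nat_mul, ← Real.exp_add]
      apply Real.exp_le_exp.mpr
      have h' : (k:ℝ) * (4 * |a.im|) = 4 * (|a.im| * k) := by ring
      rw [h']
      nlinarith [hsim]
    calc (‖z‖)^k * Real.exp (4 * |s.im|)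
        ≤ (‖z‖)^k * (Real.exp (4*|b.im|) * (Real.exp (4*|a.im|))^k) :=
          mul_le_mul_of_nonneg_left hExp (by positivity)
      _ = Real.exp (4*|b.im|) * A^k := by rw [hA, mul_pow]; ring
      _ ≤ Real.exp (4*|b.im|) * ((1/2:ℝ)^k * P^k) :=
          mul_le_mul_of_nonneg_left hAPk (by positivity)
      _ ≤ Real.exp (4*|b.im|) * ((1/2:ℝ)^k * ((M:ℝ)^β * ((M:ℝ)^M * (n.factorial:ℝ)))) := by
          have : P^k ≤ (M:ℝ)^β * ((M:ℝ)^M * (n.factorial:ℝ)) := by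
            calc P^k ≤ (M:ℝ)^β * (M:ℝ)^n := keyPk
              _ ≤ (M:ℝ)^β * ((M:ℝ)^M * (n.factorial:ℝ)) :=
                  mul_le_mul_of_nonneg_left keyMn (by positivity)
          have h2 : (1/2:ℝ)^k * P^k ≤ (1/2:ℝ)^k * ((M:ℝ)^β * ((M:ℝ)^M * (n.factorial:ℝ))) :=
            mul_le_mul_of_nonneg_left this (by positivity)
          exact mul_le_mul_of_nonneg_left h2 (by positivity)
  have hnorm : ‖z ^ k / Complex.Gamma s‖
      = (‖z‖)^k / ‖Complex.Gamma s‖ := by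
    rw [norm_div, norm_pow]
  have hhalf : ‖(1/2 : ℝ)^k‖ = (1/2:ℝ)^k := by
    rw [Real.norm_eq_abs, abs_of_pos (by positivity)]
  rw [hnorm, hhalf, div_mul_eq_mul_div, div_le_div_iff₀ hGpos hc]
  have he : Real.exp (4*|s.im|) * Real.exp (-4 * |s.im|) = 1 := by
    have h' : 4*|s.im| + -4 * |s.im| = 0 := by ring
    rw [← Real.exp_add, h', Real.exp_zero]
  calc (‖z‖)^k * c
      = ((‖z‖)^k * Real.exp (4*|s.im|)) * (c * Real.exp (-4 * |s.im|)) := by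
        rw [show ((‖z‖)^k * Real.exp (4*|s.im|)) * (c * Real.exp (-4 * |s.im|))
            = (‖z‖)^k * c * (Real.exp (4*|s.im|) * Real.exp (-4 * |s.im|)) from by
          ring, he, mul_one]
    _ ≤ (Real.exp (4*|b.im|) * ((1/2:ℝ)^k * ((M:ℝ)^β * ((M:ℝ)^M * (n.factorial:ℝ)))))
          * (c * Real.exp (-4 * |s.im|)) :=
        mul_le_mul_of_nonneg_right hfin (by positivity)
    _ = N * (1/2:ℝ)^k * ((n.factorial:ℝ) * (c * Real.exp (-4 * |s.im|))) := by
        rw [hN]; ring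
    _ ≤ N * (1/2:ℝ)^k * ‖Complex.Gamma s‖ :=
        mul_le_mul_of_nonneg_left hGlow (by positivity)

end MLaux

/-- Cyclotomic (multisection) property:
`E_{am,b}(z^m) = (1/m) ∑_{r=0}^{m−1} E_{a,b}(z e^{2πi r/m})`. -/
theorem mittagLeffler_multisection (m : ℕ) (hm : 0 < m) (a b : ℂ) (ha : 0 < a.re) (z : ℂ) :
    mittagLeffler (a * m) b (z ^ m)
      = (1 / (m : ℂ)) * ∑ r ∈ Finset.range m,
          mittagLeffler a b (z * Complex.exp (2 * Real.pi * Complex.I * r / m)) := by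
  have hm0 : (m:ℂ) ≠ 0 := Nat.cast_ne_zero.mpr hm.ne'
  set ω : ℂ := Complex.exp (2 * ↑Real.pi * Complex.I / m) with hω
  have hprim : IsPrimitiveRoot ω m := Complex.isPrimitiveRoot_exp m hm.ne'
  have hωm : ω ^ m = 1 := hprim.pow_eq_one
  have hexp : ∀ r : ℕ, Complex.exp (2 * ↑Real.pi * Complex.I * r / m) = ω ^ r := fun r => by
    rw [hω, ← Complex.exp_nat_mul]; congr 1; ring
  have hgeo : ∀ k : ℕ, ∑ r ∈ Finset.range m, (ω ^ k) ^ r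
      = if m ∣ k then (m:ℂ) else 0 := by
    intro k
    by_cases hdvd : m ∣ k
    · rw [if_pos hdvd]
      have h1 : ω ^ k = 1 := (hprim.pow_eq_one_iff_dvd k).mpr hdvd
      simp [h1]
    · rw [if_neg hdvd]
      have hne : ω ^ k ≠ 1 := fun h => hdvd ((hprim.pow_eq_one_iff_dvd k).mp h)
      rw [geom_sum_eq hne]
      rw [← pow_mul, mul_comm k m, pow_mul, hωm, one_pow]
      simp
  have hinner : ∀ k : ℕ, (∑ r ∈ Finset.range m,
      (z * Complex.exp (2 * ↑Real.pi * Complex.I * r / m)) ^ k / Complex.Gamma (b + a * k))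
      = (if m ∣ k then (m:ℂ) else 0) * (z ^ k / Complex.Gamma (b + a * k)) := by
    intro k
    calc ∑ r ∈ Finset.range m,
        (z * Complex.exp (2 * ↑Real.pi * Complex.I * r / m)) ^ k / Complex.Gamma (b + a * k)
        = ∑ r ∈ Finset.range m, (ω ^ k) ^ r * (z ^ k / Complex.Gamma (b + a * k)) := by
          apply Finset.sum_congr rfl
          intro r _
          rw [hexp r, mul_pow, ← pow_mul, pow_mul']
          ring
      _ = (∑ r ∈ Finset.range m, (ω ^ k) ^ r) * (z ^ k / Complex.Gamma (b + a * k)) :=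
          (Finset.sum_mul _ _ _).symm
      _ = _ := by rw [hgeo k]
  have hterm : ∀ k : ℕ, (1/(m:ℂ)) * ((if m ∣ k then (m:ℂ) else 0)
      * (z ^ k / Complex.Gamma (b + a * k)))
      = if m ∣ k then z ^ k / Complex.Gamma (b + a * k) else 0 := by
    intro k
    by_cases h : m ∣ k
    · rw [if_pos h, if_pos h, one_div, inv_mul_cancel_left₀ hm0]
    · rw [if_neg h, if_neg h, zero_mul, mul_zero]
  have hg : Function.Injective (fun j : ℕ => m * j) := fun x y h =>
    Nat.eq_of_mul_eq_mul_left hm h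
  have hsupp : Function.support (fun k : ℕ => if m ∣ k then
      z ^ k / Complex.Gamma (b + a * k) else 0) ⊆ Set.range (fun j : ℕ => m * j) := by
    intro x hx
    by_cases h : m ∣ x
    · obtain ⟨j, rfl⟩ := h; exact ⟨j, rfl⟩
    · simp only [Function.mem_support, if_neg h, ne_eq, not_true_eq_false] at hx
  unfold mittagLeffler
  have main : (1 / (m:ℂ)) * ∑ r ∈ Finset.range m, ∑' (k : ℕ),
      (z * Complex.exp (2 * ↑Real.pi * Complex.I * ↑r / ↑m)) ^ k / Complex.Gamma (b + a * ↑k)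
      = ∑' (k : ℕ), (z ^ m) ^ k / Complex.Gamma (b + a * ↑m * ↑k) := by
    calc (1 / (m:ℂ)) * ∑ r ∈ Finset.range m, ∑' (k : ℕ),
        (z * Complex.exp (2 * ↑Real.pi * Complex.I * ↑r / ↑m)) ^ k / Complex.Gamma (b + a * ↑k)
        = (1 / (m:ℂ)) * ∑' (k : ℕ), ∑ r ∈ Finset.range m,
            (z * Complex.exp (2 * ↑Real.pi * Complex.I * ↑r / ↑m)) ^ k
              / Complex.Gamma (b + a * ↑k) := by
          rw [Summable.tsum_finsetSum (fun r _ => ml_summable a b _ ha)]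
      _ = (1 / (m:ℂ)) * ∑' (k : ℕ), (if m ∣ k then (m:ℂ) else 0)
            * (z ^ k / Complex.Gamma (b + a * ↑k)) := by
          rw [tsum_congr hinner]
      _ = ∑' (k : ℕ), if m ∣ k then z ^ k / Complex.Gamma (b + a * ↑k) else 0 := by
          rw [← tsum_mul_left]
          exact tsum_congr hterm
      _ = ∑' (j : ℕ), if m ∣ (m * j) then z ^ (m * j) / Complex.Gamma (b + a * ↑(m * j)) else 0 :=
          (Function.Injective.tsum_eq hg hsupp).symm
      _ = ∑' (k : ℕ), (z ^ m) ^ k / Complex.Gamma (b + a * ↑m * ↑k) := by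
          apply tsum_congr
          intro j
          rw [if_pos (dvd_mul_right m j), pow_mul]
          congr 2
          push_cast
          ring
  exact main.symm
end

section
/- Differentiation rule: for every complex number a with Re(a) > 0, every complex number b, and every z ∈ ℂ, one has a · z · (d/dz E_{a,b})(z) = E_{a,b−1}(z) − (b − 1) · E_{a,b}(z), where d/dz E_{a,b} denotes the complex derivative of the entire function z ↦ E_{a,b}(z). -/
lemma gammaRatio (x y : ℝ) (hx : 2 ≤ x) (hy : 0 < y) :
    Real.Gamma x * (x - 1) ^ y ≤ Real.Gamma (x + y) := by
  have hx1 : (0:ℝ) < x - 1 := by linarith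
  have hy1 : (0:ℝ) < y + 1 := by linarith
  have ha : (0:ℝ) < 1 / (y + 1) := by positivity
  have hb : (0:ℝ) < y / (y + 1) := by positivity
  have hab : 1 / (y + 1) + y / (y + 1) = 1 := by
    rw [← add_div, add_comm, div_self (ne_of_gt hy1)]
  have key := Real.Gamma_mul_add_mul_le_rpow_Gamma_mul_rpow_Gamma
    (s := x + y) (t := x - 1) (by linarith) hx1 ha hb hab
  have hcomb : 1 / (y + 1) * (x + y) + y / (y + 1) * (x - 1) = x := by
    field_simp; ring
  rw [hcomb] at key
  set a := 1 / (y + 1)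
  set b := y / (y + 1)
  have hGx : 0 < Real.Gamma x := Real.Gamma_pos_of_pos (by linarith)
  have hGxy : 0 < Real.Gamma (x + y) := Real.Gamma_pos_of_pos (by linarith)
  have hGx1 : Real.Gamma (x - 1) = Real.Gamma x / (x - 1) := by
    have := Real.Gamma_add_one (ne_of_gt hx1)
    rw [sub_add_cancel] at this
    field_simp [this]
    linarith [this]
  rw [hGx1, Real.div_rpow hGx.le hx1.le] at key
  set A := Real.Gamma (x + y)
  set G := Real.Gamma x
  -- key : G ≤ A ^ a * (G ^ b / (x-1) ^ b)
  have key2 : G * (x-1)^b ≤ A ^ a * G ^ b := by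
    have := mul_le_mul_of_nonneg_right key (le_of_lt (Real.rpow_pos_of_pos hx1 b))
    rwa [mul_assoc, div_mul_cancel₀ _ (ne_of_gt (Real.rpow_pos_of_pos hx1 b))] at this
  have hGa : G ^ a = G / G ^ b := by
    have : a = 1 - b := by rw [← hab]; ring
    rw [this, Real.rpow_sub hGx, Real.rpow_one]
  have h2 : G ^ a * (x-1) ^ b ≤ A ^ a := by
    rw [hGa, div_mul_eq_mul_div, div_le_iff₀ (Real.rpow_pos_of_pos hGx b)]
    exact key2
  have h3 := Real.rpow_le_rpow (by positivity) h2 hy1.le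
  rw [Real.mul_rpow (by positivity) (by positivity), ← Real.rpow_mul hGx.le,
    ← Real.rpow_mul hx1.le, ← Real.rpow_mul hGxy.le] at h3
  have ea : a * (y + 1) = 1 := one_div_mul_cancel (ne_of_gt hy1)
  have eb : b * (y + 1) = y := div_mul_cancel₀ _ (ne_of_gt hy1)
  rw [ea, eb] at h3
  simpa using h3


open intervalIntegral MeasureTheory Set in
lemma betaNormLe (u v : ℂ) (hu : 0 < u.re) (hv : 0 < v.re) :
    ‖Complex.betaIntegral u v‖ ≤
      Real.Gamma u.re * Real.Gamma v.re / Real.Gamma (u.re + v.re) := by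
  set x := u.re
  set y := v.re
  have hxc : (0:ℝ) < (Complex.ofReal x).re := by simpa using hu
  have hyc : (0:ℝ) < (Complex.ofReal y).re := by simpa using hv
  set f₀ : ℝ → ℂ := fun t => (t:ℂ) ^ ((x:ℂ) - 1) * ((1:ℂ) - t) ^ ((y:ℂ) - 1) with hf₀
  have hconv : IntervalIntegrable f₀ volume 0 1 := Complex.betaIntegral_convergent hxc hyc
  have h1 : ∀ᵐ t : ℝ, t ≠ (1:ℝ) := by
    have h0 : volume ({1} : Set ℝ) = 0 := measure_singleton 1
    rw [ae_iff]
    simpa [not_not, Set.setOf_eq_eq_singleton] using h0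
  -- key pointwise facts on Ioo 0 1
  have hnorm : ∀ t : ℝ, t ∈ Set.Ioo (0:ℝ) 1 →
      (‖f₀ t‖ = t ^ (x-1) * (1-t) ^ (y-1) ∧
       ‖(t:ℂ) ^ (u - 1) * ((1:ℂ) - t) ^ (v - 1)‖ = t ^ (x-1) * (1-t) ^ (y-1) ∧
       f₀ t = ((t ^ (x-1) * (1-t) ^ (y-1) : ℝ) : ℂ)) := by
    intro t ht
    have ht0 : 0 < t := ht.1
    have ht1 : 0 < 1 - t := by linarith [ht.2]
    have e1 : ‖(t:ℂ) ^ ((x:ℂ) - 1)‖ = t ^ (x - 1) := by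
      rw [Complex.norm_cpow_eq_rpow_re_of_pos ht0]
      norm_num
    have e2 : ‖((1:ℂ) - t) ^ ((y:ℂ) - 1)‖ = (1-t) ^ (y - 1) := by
      rw [show ((1:ℂ) - t) = ((1 - t : ℝ) : ℂ) by push_cast; ring,
        Complex.norm_cpow_eq_rpow_re_of_pos ht1]
      norm_num
    have e3 : ‖(t:ℂ) ^ (u - 1)‖ = t ^ (x - 1) := by
      rw [Complex.norm_cpow_eq_rpow_re_of_pos ht0]
      norm_num
      rfl
    have e4 : ‖((1:ℂ) - t) ^ (v - 1)‖ = (1-t) ^ (y - 1) := by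
      rw [show ((1:ℂ) - t) = ((1 - t : ℝ) : ℂ) by push_cast; ring,
        Complex.norm_cpow_eq_rpow_re_of_pos ht1]
      norm_num
      rfl
    refine ⟨by rw [hf₀]; simp only [norm_mul]; rw [e1, e2],
      by simp only [norm_mul]; rw [e3, e4], ?_⟩
    rw [hf₀]
    simp only []
    rw [show ((t:ℂ)) ^ ((x:ℂ) - 1) = ((t ^ (x-1) : ℝ) : ℂ) by
        rw [show ((x:ℂ) - 1) = ((x - 1 : ℝ) : ℂ) by push_cast; ring,
          ← Complex.ofReal_cpow ht0.le],
      show ((1:ℂ) - t) ^ ((y:ℂ) - 1) = (((1-t) ^ (y-1) : ℝ) : ℂ) by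
        rw [show ((1:ℂ) - t) = ((1 - t : ℝ) : ℂ) by push_cast; ring,
          show ((y:ℂ) - 1) = ((y - 1 : ℝ) : ℂ) by push_cast; ring,
          ← Complex.ofReal_cpow ht1.le]]
    push_cast
    ring
  set g : ℝ → ℝ := fun t => ‖f₀ t‖ with hgdef
  have hgint : IntervalIntegrable g volume 0 1 := hconv.norm
  -- step 1 : norm bound
  have step1 : ‖Complex.betaIntegral u v‖ ≤ |∫ t in (0:ℝ)..1, g t| := by
    rw [Complex.betaIntegral]
    refine intervalIntegral.norm_integral_le_abs_of_norm_le ?_ hgint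
    rw [MeasureTheory.ae_restrict_iff' measurableSet_uIoc]
    filter_upwards [h1] with t ht1 htI
    rw [Set.uIoc_of_le (by norm_num : (0:ℝ) ≤ 1)] at htI
    have htIoo : t ∈ Set.Ioo (0:ℝ) 1 := ⟨htI.1, lt_of_le_of_ne htI.2 ht1⟩
    obtain ⟨n1, n2, n3⟩ := hnorm t htIoo
    show _ ≤ g t
    rw [n2, show g t = t ^ (x-1) * (1-t) ^ (y-1) from n1]
  -- step 2 : the real integral equals the Gamma quotient
  have hGpos : (0:ℝ) < Real.Gamma (x + y) := Real.Gamma_pos_of_pos (by positivity)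
  have step2 : (∫ t in (0:ℝ)..1, g t) = Real.Gamma x * Real.Gamma y / Real.Gamma (x + y) := by
    have e₁ : Complex.betaIntegral x y = ((∫ t in (0:ℝ)..1, g t : ℝ) : ℂ) := by
      rw [Complex.betaIntegral, ← intervalIntegral.integral_ofReal]
      refine intervalIntegral.integral_congr_ae ?_
      filter_upwards [h1] with t ht1 htI
      rw [Set.uIoc_of_le (by norm_num : (0:ℝ) ≤ 1)] at htI
      have htIoo : t ∈ Set.Ioo (0:ℝ) 1 := ⟨htI.1, lt_of_le_of_ne htI.2 ht1⟩
      obtain ⟨n1, n2, n3⟩ := hnorm t htIoo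
      show f₀ t = ((g t : ℝ) : ℂ)
      rw [n3, show g t = t ^ (x-1) * (1-t) ^ (y-1) from n1]
    have e₂ := Complex.Gamma_mul_Gamma_eq_betaIntegral hxc hyc
    rw [e₁, ← Complex.ofReal_add, Complex.Gamma_ofReal, Complex.Gamma_ofReal,
      Complex.Gamma_ofReal, ← Complex.ofReal_mul, ← Complex.ofReal_mul] at e₂
    have := Complex.ofReal_injective e₂
    rw [eq_div_iff (ne_of_gt hGpos), mul_comm]
    exact this.symm
  rw [step2] at step1
  calc ‖Complex.betaIntegral u v‖ ≤ |Real.Gamma x * Real.Gamma y / Real.Gamma (x + y)| := step1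
    _ = Real.Gamma x * Real.Gamma y / Real.Gamma (x + y) := by
        rw [abs_of_nonneg]
        positivity


open Filter in
lemma summableML (a b : ℂ) (ha : 0 < a.re) (R : ℝ) (hR : 0 < R) :
    Summable (fun k : ℕ => ((k:ℝ) + 1) * R ^ k * ‖Complex.Gamma (b + a * k)‖⁻¹) := by
  set y := a.re with hy
  have hGa : 0 < ‖Complex.Gamma a‖ :=
    norm_pos_iff.2 (Complex.Gamma_ne_zero_of_re_pos ha)
  have hGy : 0 < Real.Gamma y := Real.Gamma_pos_of_pos ha
  set Ga := ‖Complex.Gamma a‖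
  set C := 4 * R * Real.Gamma y / Ga with hC
  have hre : ∀ k : ℕ, (b + a * k).re = b.re + y * k := by
    intro k
    simp [Complex.add_re, Complex.mul_re]
    left; rfl
  have hx_tendsto : Tendsto (fun k : ℕ => b.re + y * k) atTop atTop := by
    apply tendsto_atTop_add_const_left
    exact Tendsto.const_mul_atTop ha (tendsto_natCast_atTop_atTop)
  have F1 : ∀ᶠ k : ℕ in atTop, 2 ≤ b.re + y * k := hx_tendsto.eventually_ge_atTop 2
  have F2 : ∀ᶠ k : ℕ in atTop, C ≤ (b.re + y * k - 1) ^ y := by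
    have h := (tendsto_rpow_atTop ha).comp
      (tendsto_atTop_add_const_right atTop (-1 : ℝ) hx_tendsto)
    exact (h.eventually_ge_atTop C).mono (fun k hk => by simpa [sub_eq_add_neg] using hk)
  refine summable_of_ratio_norm_eventually_le (r := 1/2) (by norm_num) ?_
  filter_upwards [F1, F2] with k h2k hCk
  set x := b.re + y * k with hxk
  set s := b + a * k with hs
  have hsre : s.re = x := hre k
  have hs'eq : b + a * (k + 1 : ℕ) = s + a := by push_cast; ring
  have hs're : (s + a).re = x + y := by rw [Complex.add_re, hsre]
  have hxpos : (0:ℝ) < x := by linarith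
  have hx1 : (0:ℝ) < x - 1 := by linarith
  have hGs : 0 < ‖Complex.Gamma s‖ :=
    norm_pos_iff.2 (Complex.Gamma_ne_zero_of_re_pos (by rw [hsre]; linarith))
  have hGs' : 0 < ‖Complex.Gamma (s + a)‖ :=
    norm_pos_iff.2 (Complex.Gamma_ne_zero_of_re_pos (by rw [hs're]; positivity))
  set Gs := ‖Complex.Gamma s‖
  set Gs' := ‖Complex.Gamma (s + a)‖
  -- beta identity
  have hbeta : Gs * Ga = Gs' * ‖Complex.betaIntegral s a‖ := by
    rw [← norm_mul, ← norm_mul, Complex.Gamma_mul_Gamma_eq_betaIntegral (by rw [hsre]; exact hxpos) ha]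
  -- beta bound
  have hβle : ‖Complex.betaIntegral s a‖ ≤ Ga / (4 * R) := by
    have b1 := betaNormLe s a (by rw [hsre]; exact hxpos) ha
    rw [hsre] at b1
    have b2 : Real.Gamma x * Real.Gamma y / Real.Gamma (x + y) ≤ Real.Gamma y / (x-1)^y := by
      rw [div_le_div_iff₀ (Real.Gamma_pos_of_pos (by positivity)) (by positivity)]
      calc Real.Gamma x * Real.Gamma y * (x-1)^y
          = Real.Gamma y * (Real.Gamma x * (x-1)^y) := by ring
        _ ≤ Real.Gamma y * Real.Gamma (x + y) :=
            mul_le_mul_of_nonneg_left (gammaRatio x y h2k ha) hGy.le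
    have hCpos : (0:ℝ) < C := by rw [hC]; positivity
    have b3 : Real.Gamma y / (x-1)^y ≤ Real.Gamma y / C := by
      gcongr
    have b4 : Real.Gamma y / C = Ga / (4 * R) := by
      rw [hC]
      field_simp
    calc ‖Complex.betaIntegral s a‖ ≤ _ := b1
      _ ≤ _ := b2
      _ ≤ _ := b3
      _ = _ := b4
  -- main numeric inequality
  have hβpos : 0 < ‖Complex.betaIntegral s a‖ := by
    rcases lt_or_eq_of_le (norm_nonneg (Complex.betaIntegral s a)) with h | h
    · exact h
    · exfalso; rw [← h, mul_zero] at hbeta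
      exact absurd hbeta (ne_of_gt (by positivity : (0:ℝ) < Gs * Ga))
  have main : (((k:ℝ) + 1) + 1) * R ^ (k+1) * Gs ≤ (1/2 * (((k:ℝ)+1) * R^k)) * Gs' := by
    have hGseq : Gs = Gs' * ‖Complex.betaIntegral s a‖ / Ga := by
      rw [← hbeta]; field_simp
    rw [hGseq, pow_succ]
    have hk2 : ((k:ℝ) + 1) + 1 ≤ 2 * ((k:ℝ) + 1) := by
      have : (0:ℝ) ≤ (k:ℝ) := Nat.cast_nonneg k
      linarith
    calc (((k:ℝ) + 1) + 1) * (R ^ k * R) * (Gs' * ‖Complex.betaIntegral s a‖ / Ga)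
        = (((k:ℝ) + 1) + 1) * R ^ k * Gs' * (R * ‖Complex.betaIntegral s a‖ / Ga) := by ring
      _ ≤ (((k:ℝ) + 1) + 1) * R ^ k * Gs' * (R * (Ga / (4*R)) / Ga) := by gcongr
      _ = (((k:ℝ) + 1) + 1) * (R ^ k * Gs') / 4 := by field_simp
      _ ≤ (2 * ((k:ℝ) + 1)) * (R ^ k * Gs') / 4 := by gcongr <;> positivity
      _ = (1/2 * (((k:ℝ)+1) * R^k)) * Gs' := by ring
  -- conclude
  rw [hs'eq]
  push_cast
  rw [Real.norm_eq_abs, Real.norm_eq_abs, abs_of_nonneg (by positivity), abs_of_nonneg (by positivity),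
    ← div_eq_mul_inv, ← div_eq_mul_inv, mul_div_assoc', div_le_div_iff₀ hGs' hGs]
  ring_nf
  ring_nf at main
  linarith [main]


/-- Differentiation rule: `a z E_{a,b}'(z) = E_{a,b−1}(z) − (b−1) E_{a,b}(z)`. -/
theorem mittagLeffler_deriv (a b : ℂ) (ha : 0 < a.re) (z : ℂ) :
    a * z * deriv (mittagLeffler a b) z
      = mittagLeffler a (b - 1) z - (b - 1) * mittagLeffler a b z := by
  set R := ‖z‖ + 1 with hRdef
  have hR : 0 < R := by positivity
  have hR1 : 1 ≤ R := by rw [hRdef]; have := norm_nonneg z; linarith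
  have hzR : ‖z‖ < R := by rw [hRdef]; linarith
  set u := fun k : ℕ => ((k:ℝ) + 1) * R ^ k * ‖Complex.Gamma (b + a * k)‖⁻¹ with hu_def
  have hu : Summable u := summableML a b ha R hR
  set g : ℕ → ℂ → ℂ := fun k w => w ^ k / Complex.Gamma (b + a * k) with hg_def
  set g' : ℕ → ℂ → ℂ := fun k w => (k:ℂ) * w ^ (k-1) / Complex.Gamma (b + a * k) with hg'_def
  have hgderiv : ∀ k : ℕ, ∀ w ∈ Metric.ball (0:ℂ) R, HasDerivAt (g k) (g' k w) w :=
    fun k w _ => (hasDerivAt_pow k w).div_const _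
  have hnorm_le : ∀ (w : ℂ) (k : ℕ), ‖w‖ ≤ R → ‖g k w‖ ≤ u k := by
    intro w k hw
    rw [hg_def, hu_def]
    simp only [norm_div, norm_pow]
    rw [div_eq_mul_inv]
    gcongr ?_ * _
    calc ‖w‖ ^ k ≤ R ^ k := pow_le_pow_left₀ (norm_nonneg w) hw k
      _ ≤ ((k:ℝ) + 1) * R ^ k := by
          have : (0:ℝ) ≤ (k:ℝ) := Nat.cast_nonneg k
          nlinarith [pow_pos hR k]
  have hg'bound : ∀ (k : ℕ) (w : ℂ), w ∈ Metric.ball (0:ℂ) R → ‖g' k w‖ ≤ u k := by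
    intro k w hw
    have hw' : ‖w‖ ≤ R := le_of_lt (by simpa using hw)
    rw [hg'_def, hu_def]
    simp only [norm_div, norm_mul, norm_pow, Complex.norm_natCast]
    rw [div_eq_mul_inv]
    gcongr ?_ * _
    calc (k:ℝ) * ‖w‖ ^ (k-1) ≤ ((k:ℝ) + 1) * R ^ (k-1) :=
          mul_le_mul (by linarith) (pow_le_pow_left₀ (norm_nonneg w) hw' _)
            (by positivity) (by positivity)
      _ ≤ ((k:ℝ) + 1) * R ^ k :=
          mul_le_mul_of_nonneg_left (pow_le_pow_right₀ hR1 (Nat.sub_le k 1)) (by positivity)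
  have hg0 : Summable fun k => g k 0 := by
    refine Summable.of_norm_bounded hu ?_
    intro k
    exact hnorm_le 0 k (by simpa using hR.le)
  have hd : HasDerivAt (mittagLeffler a b) (∑' k, g' k z) z := by
    have := hasDerivAt_tsum_of_isPreconnected hu Metric.isOpen_ball
      (convex_ball (0:ℂ) R).isPreconnected hgderiv hg'bound
      (by simpa using hR : (0:ℂ) ∈ Metric.ball (0:ℂ) R) hg0
      (by simpa using hzR : z ∈ Metric.ball (0:ℂ) R)
    exact this
  -- summability of the two series on the RHS
  have h1 : Summable (fun k : ℕ => z ^ k / Complex.Gamma ((b-1) + a * k)) := by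
    refine Summable.of_norm_bounded (summableML a (b-1) ha R hR) ?_
    intro k
    simp only [norm_div, norm_pow]
    rw [div_eq_mul_inv]
    gcongr ?_ * _
    calc ‖z‖ ^ k ≤ R ^ k := pow_le_pow_left₀ (norm_nonneg z) hzR.le k
      _ ≤ ((k:ℝ) + 1) * R ^ k := by
          have : (0:ℝ) ≤ (k:ℝ) := Nat.cast_nonneg k
          nlinarith [pow_pos hR k]
  have h2 : Summable (fun k : ℕ => z ^ k / Complex.Gamma (b + a * k)) := by
    refine Summable.of_norm_bounded hu ?_
    intro k
    exact hnorm_le z k hzR.le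
  have term_eq : ∀ k : ℕ, a * z * g' k z
      = z ^ k / Complex.Gamma ((b-1) + a * k) - (b-1) * (z ^ k / Complex.Gamma (b + a * k)) := by
    intro k
    have hG := Complex.one_div_Gamma_eq_self_mul_one_div_Gamma_add_one ((b-1) + a * k)
    rw [show (b-1) + a * k + 1 = b + a * k by ring] at hG
    rw [hg'_def]
    cases k with
    | zero =>
      simp only [Nat.cast_zero, mul_zero, add_zero] at hG ⊢
      simp only [pow_zero, Nat.zero_sub, zero_mul, zero_div, mul_zero, one_div,
        Nat.cast_ofNat]
      rw [hG]
      ring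
    | succ j =>
      simp only [Nat.add_sub_cancel]
      rw [div_eq_mul_inv, div_eq_mul_inv, div_eq_mul_inv,
        show (Complex.Gamma ((b-1) + a * (j+1:ℕ)))⁻¹
          = ((b-1) + a * (j+1:ℕ)) * (Complex.Gamma (b + a * (j+1:ℕ)))⁻¹ by
            have := Complex.one_div_Gamma_eq_self_mul_one_div_Gamma_add_one ((b-1) + a * (j+1:ℕ))
            rw [show (b-1) + a * (j+1:ℕ) + 1 = b + a * (j+1:ℕ) by ring] at this
            simpa [one_div] using this]
      push_cast
      rw [pow_succ]
      ring
  calc a * z * deriv (mittagLeffler a b) z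
      = a * z * ∑' k, g' k z := by rw [hd.deriv]
    _ = ∑' k, a * z * g' k z := tsum_mul_left.symm
    _ = ∑' k : ℕ, (z ^ k / Complex.Gamma ((b-1) + a * k)
          - (b-1) * (z ^ k / Complex.Gamma (b + a * k))) := tsum_congr term_eq
    _ = (∑' k : ℕ, z ^ k / Complex.Gamma ((b-1) + a * k))
          - ∑' k : ℕ, (b-1) * (z ^ k / Complex.Gamma (b + a * k)) :=
        Summable.tsum_sub h1 (h2.mul_left _)
    _ = mittagLeffler a (b - 1) z - (b - 1) * mittagLeffler a b z := by
        rw [mittagLeffler, mittagLeffler, tsum_mul_left]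
end

section
/- Iterated differentiation recursion: let a > 0 and b, x be real numbers and m a natural number. Then for every real z > 0, the m-th derivative of the function z ↦ z^{b−1} · E_{a,b}(x · z^a) (a real function of the real variable z > 0) satisfies (d^m/dz^m){ z^{b−1} · E_{a,b}(x · z^a) } = z^{b−1−m} · E_{a,b−m}(x · z^a). -/
open Real Set

/-- The (real) Mittag-Leffler function `E_{a,b}(x) = ∑_{k=0}^∞ x^k / Γ(b + a k)` for real
parameters and real argument. -/
noncomputable def mittagLefflerReal (a b x : ℝ) : ℝ :=
  ∑' k : ℕ, x ^ k / Real.Gamma (b + a * k)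

-- Γ(s) ≥ 1 for s ≥ 2
lemma ML.one_le_Gamma {s : ℝ} (hs : 2 ≤ s) : 1 ≤ Real.Gamma s := by
  rcases eq_or_lt_of_le hs with h | h
  · rw [← h, Real.Gamma_two]
  · have := Real.Gamma_strictMonoOn_Ici (by norm_num : (2:ℝ) ∈ Ici 2) (mem_Ici.mpr hs) h
    rw [Real.Gamma_two] at this
    exact this.le

-- n! ≤ Γ(s) for n + 2 ≤ s
lemma ML.factorial_le_Gamma : ∀ (n : ℕ) (s : ℝ), (n : ℝ) + 2 ≤ s →
    (n.factorial : ℝ) ≤ Real.Gamma s := by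
  intro n
  induction n with
  | zero => intro s hs; simpa using ML.one_le_Gamma (by simpa using hs)
  | succ n ih =>
    intro s hs
    push_cast at hs
    have h1 : (n : ℝ) + 2 ≤ s - 1 := by linarith
    have h0 : s - 1 ≠ 0 := by nlinarith [Nat.cast_nonneg (α := ℝ) n]
    have hG : Real.Gamma s = (s - 1) * Real.Gamma (s - 1) := by
      have := Real.Gamma_add_one h0
      simpa using this
    have h2 := ih (s - 1) h1
    have hfpos : (0:ℝ) ≤ (n.factorial : ℝ) := by positivity
    calc ((n+1).factorial : ℝ) = ((n:ℝ) + 1) * n.factorial := by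
          push_cast [Nat.factorial_succ]; ring
      _ ≤ (s - 1) * Real.Gamma (s - 1) := by
          apply mul_le_mul (by linarith) h2 hfpos (by linarith)
      _ = Real.Gamma s := hG.symm

-- M^n ≤ n! * M^M for M ≤ n
lemma ML.pow_le_factorial_mul (M : ℕ) : ∀ n : ℕ, M ≤ n → M ^ n ≤ n.factorial * M ^ M := by
  intro n
  induction n with
  | zero => intro h; interval_cases M; simp
  | succ n ih =>
    intro h
    rcases Nat.lt_or_ge M (n+1) with h' | h'
    · have hMn : M ≤ n := Nat.lt_succ_iff.mp h'
      calc M ^ (n+1) = M ^ n * M := by ring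
        _ ≤ (n.factorial * M ^ M) * (n+1) := by
            exact Nat.mul_le_mul (ih hMn) (by omega)
        _ = (n+1).factorial * M ^ M := by rw [Nat.factorial_succ]; ring
    · have : M = n + 1 := le_antisymm h h'
      subst this
      exact Nat.le_mul_of_pos_left _ (Nat.factorial_pos _)

-- master summability lemma
lemma ML.summable_aux (a : ℝ) (ha : 0 < a) (c R : ℝ) (hR : 0 ≤ R) :
    Summable (fun k : ℕ => ((k : ℝ) + 1) * R ^ k / |Real.Gamma (c + a * k)|) := by
  set M : ℕ := ⌈R ^ (1/a)⌉₊ + 2 with hMdef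
  have hM2 : (2:ℝ) ≤ (M:ℝ) := by
    have : (2:ℕ) ≤ M := by omega
    exact_mod_cast this
  have hM1 : (1:ℝ) ≤ (M:ℝ) := by linarith
  have hM0 : (0:ℝ) < (M:ℝ) := by linarith
  have hMR : R < (M:ℝ) ^ a := by
    have h1 : R ^ (1/a) < (M:ℝ) := by
      have := Nat.le_ceil (R ^ (1/a))
      have h2 : ((⌈R ^ (1/a)⌉₊ : ℝ)) < (M:ℝ) := by
        rw [hMdef]; push_cast; linarith
      linarith
    have h3 : (R ^ (1/a)) ^ a < (M:ℝ) ^ a :=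
      Real.rpow_lt_rpow (Real.rpow_nonneg hR _) h1 ha
    rwa [← Real.rpow_mul hR, one_div, inv_mul_cancel₀ ha.ne', Real.rpow_one] at h3
  have hMa0 : (0:ℝ) < (M:ℝ) ^ a := Real.rpow_pos_of_pos hM0 a
  set ρ : ℝ := R / (M:ℝ) ^ a with hρdef
  have hρ0 : 0 ≤ ρ := div_nonneg hR hMa0.le
  have hρ1 : ρ < 1 := (div_lt_one hMa0).mpr hMR
  set K : ℕ := ⌈((M:ℝ) + 2 - c) / a⌉₊ with hKdef
  -- the comparison series
  have hsum : Summable (fun k : ℕ => ((k:ℝ) + 1) * ρ ^ k) := by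
    have h1 : Summable (fun k : ℕ => (k:ℝ) ^ 1 * ρ ^ k) :=
      summable_pow_mul_geometric_of_norm_lt_one 1 (by rwa [Real.norm_eq_abs, abs_of_nonneg hρ0])
    have h2 : Summable (fun k : ℕ => ρ ^ k) :=
      summable_geometric_of_lt_one hρ0 hρ1
    simpa [pow_one, add_mul, one_mul] using h1.add h2
  rw [← summable_nat_add_iff K]
  set D : ℝ := ((M:ℝ) ^ (M:ℕ) * (M:ℝ) ^ (3 - c)) * (((K:ℝ) + 1) * ρ ^ K) with hDdef
  refine Summable.of_nonneg_of_le (fun k => ?_) (fun k => ?_) (hsum.mul_left D)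
  · positivity
  · set j : ℕ := k + K with hjdef
    have hsj : (M:ℝ) + 2 ≤ c + a * j := by
      have h1 : ((M:ℝ) + 2 - c)/a ≤ (K:ℝ) := Nat.le_ceil _
      have h2 : (M:ℝ) + 2 - c ≤ a * K := by
        rw [div_le_iff₀ ha] at h1; linarith
      have h3 : (K:ℝ) ≤ (j:ℝ) := by exact_mod_cast Nat.le_add_left K k
      nlinarith
    have hsj0 : (0:ℝ) ≤ c + a * j := by linarith
    set n : ℕ := ⌊c + a * j⌋₊ - 2 with hndef
    have hfl : (M + 2 : ℕ) ≤ ⌊c + a * j⌋₊ := by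
      apply Nat.le_floor
      have : ((M:ℝ)+2) ≤ c + a * j := hsj
      exact_mod_cast this
    have hn2 : n + 2 = ⌊c + a * j⌋₊ := by omega
    have hMn : M ≤ n := by omega
    have hng : ((n:ℝ)) + 2 ≤ c + a * j := by
      have h5 := Nat.floor_le hsj0
      calc ((n:ℝ)) + 2 = ((n + 2 : ℕ) : ℝ) := by push_cast; ring
        _ = (⌊c + a * j⌋₊ : ℝ) := by rw [hn2]
        _ ≤ c + a * j := h5
    have hGn : (n.factorial : ℝ) ≤ Real.Gamma (c + a * j) :=
      ML.factorial_le_Gamma n _ hng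
    have hfac1 : (1:ℝ) ≤ (n.factorial : ℝ) := by
      exact_mod_cast Nat.one_le_iff_ne_zero.mpr (Nat.factorial_pos n).ne'
    have hGpos : (0:ℝ) < Real.Gamma (c + a * j) := lt_of_lt_of_le (by linarith) hGn
    have hsn : c + a * j - 3 ≤ (n:ℝ) := by
      have h6 := Nat.lt_floor_add_one (c + a * j)
      have h4 : (⌊c + a * j⌋₊ : ℝ) = (n:ℝ) + 2 := by rw [← hn2]; push_cast; ring
      rw [h4] at h6; linarith
    have hkey : (M:ℝ) ^ (c + a * (j:ℝ) - 3) ≤ (n.factorial : ℝ) * (M:ℝ) ^ (M:ℕ) := by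
      calc (M:ℝ) ^ (c + a * (j:ℝ) - 3) ≤ (M:ℝ) ^ ((n:ℝ)) :=
            Real.rpow_le_rpow_of_exponent_le hM1 hsn
        _ = ((M ^ n : ℕ) : ℝ) := by rw [Real.rpow_natCast]; push_cast; ring
        _ ≤ ((n.factorial * M ^ M : ℕ) : ℝ) := by
            exact_mod_cast ML.pow_le_factorial_mul M n hMn
        _ = (n.factorial : ℝ) * (M:ℝ) ^ (M:ℕ) := by push_cast; ring
    have hMexp : (M:ℝ) ^ (c + a * (j:ℝ) - 3) = (M:ℝ) ^ (c - 3) * ((M:ℝ) ^ a) ^ j := by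
      rw [show c + a * (j:ℝ) - 3 = (c - 3) + a * j by ring, Real.rpow_add hM0,
        Real.rpow_mul hM0.le, Real.rpow_natCast]
    have habs : |Real.Gamma (c + a * j)| = Real.Gamma (c + a * j) := abs_of_pos hGpos
    have hjk : ((j:ℝ)) + 1 ≤ ((k:ℝ) + 1) * ((K:ℝ) + 1) := by
      push_cast [hjdef]; nlinarith [Nat.cast_nonneg (α := ℝ) k, Nat.cast_nonneg (α := ℝ) K]
    have hRj : R ^ j = ρ ^ j * ((M:ℝ)^a) ^ j := by
      rw [hρdef, div_pow, div_mul_cancel₀]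
      positivity
    have h1G : 1 / Real.Gamma (c + a * j) ≤ (M:ℝ) ^ (M:ℕ) / (M:ℝ) ^ (c + a * (j:ℝ) - 3) := by
      rw [div_le_div_iff₀ hGpos (by positivity), one_mul]
      calc (M:ℝ) ^ (c + a * (j:ℝ) - 3) ≤ (n.factorial : ℝ) * (M:ℝ) ^ (M:ℕ) := hkey
        _ ≤ Real.Gamma (c + a * j) * (M:ℝ) ^ (M:ℕ) :=
            mul_le_mul_of_nonneg_right hGn (by positivity)
        _ = (M:ℝ) ^ (M:ℕ) * Real.Gamma (c + a * j) := mul_comm _ _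
    have h6 : (M:ℝ) ^ ((3:ℝ)-c) = ((M:ℝ) ^ (c-3))⁻¹ := by
      rw [← Real.rpow_neg hM0.le]; norm_num
    have e1 : ((j:ℝ)+1) * R ^ j * ((M:ℝ)^(M:ℕ) / (M:ℝ)^(c + a*(j:ℝ) - 3))
        = ((j:ℝ)+1) * ρ ^ j * ((M:ℝ)^(M:ℕ) * (M:ℝ)^((3:ℝ)-c)) := by
      rw [hMexp, hRj, h6]
      have hz1 : ((M:ℝ)^a)^j ≠ 0 := by positivity
      have hz2 : (M:ℝ)^(c-3) ≠ 0 := by positivity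
      field_simp
    calc ((j:ℝ) + 1) * R ^ j / |Real.Gamma (c + a * j)|
        = ((j:ℝ) + 1) * R ^ j * (1 / Real.Gamma (c + a * j)) := by
          rw [habs]; ring
      _ ≤ ((j:ℝ) + 1) * R ^ j * ((M:ℝ) ^ (M:ℕ) / (M:ℝ) ^ (c + a * (j:ℝ) - 3)) := by
          apply mul_le_mul_of_nonneg_left h1G (by positivity)
      _ = ((j:ℝ)+1) * ρ ^ j * ((M:ℝ)^(M:ℕ) * (M:ℝ)^((3:ℝ)-c)) := e1
      _ ≤ (((k:ℝ) + 1) * ((K:ℝ) + 1)) * ρ ^ j * ((M:ℝ)^(M:ℕ) * (M:ℝ)^((3:ℝ)-c)) := by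
          apply mul_le_mul_of_nonneg_right (mul_le_mul_of_nonneg_right hjk (by positivity))
            (by positivity)
      _ = D * (((k:ℝ) + 1) * ρ ^ k) := by
          rw [hjdef, pow_add]; rw [hDdef]; ring

lemma ML.div_le_div_abs {A B C : ℝ} (h : A ≤ B) (hC : 0 ≤ C) : A / C ≤ B / C := by
  rcases eq_or_lt_of_le hC with h0 | h0
  · rw [← h0]; simp
  · exact (div_le_div_iff_of_pos_right h0).mpr h

lemma ML.recip_gamma (s : ℝ) : s / Real.Gamma (s + 1) = 1 / Real.Gamma s := by
  rcases eq_or_ne s 0 with rfl | hs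
  · simp [Real.Gamma_zero]
  · rw [Real.Gamma_add_one hs, div_mul_eq_div_div, div_self hs]

lemma ML.eq_tsum (a p q x : ℝ) {t : ℝ} (ht : 0 < t) :
    t ^ p * mittagLefflerReal a q (x * t ^ a)
      = ∑' k : ℕ, x ^ k * t ^ (p + a * k) / Real.Gamma (q + a * k) := by
  rw [mittagLefflerReal, ← tsum_mul_left]
  refine tsum_congr fun k => ?_
  rw [mul_pow, ← Real.rpow_natCast (t ^ a) k, ← Real.rpow_mul ht.le, Real.rpow_add ht]
  ring

lemma ML.hasDerivAt (a : ℝ) (ha : 0 < a) (c x : ℝ) {z : ℝ} (hz : 0 < z) :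
    HasDerivAt (fun t : ℝ => t ^ (c - 1) * mittagLefflerReal a c (x * t ^ a))
      (z ^ (c - 2) * mittagLefflerReal a (c - 1) (x * z ^ a)) z := by
  set s : Set ℝ := Ioo (z/2) (2*z) with hsdef
  have hzs : z ∈ s := ⟨by linarith, by linarith⟩
  have hspos : ∀ t ∈ s, (0:ℝ) < t := fun t ht => lt_trans (by linarith) ht.1
  set g : ℕ → ℝ → ℝ := fun k t => x ^ k * t ^ (c - 1 + a * k) / Real.Gamma (c + a * k)
    with hgdef
  set g' : ℕ → ℝ → ℝ :=
    fun k t => x ^ k * ((c - 1 + a * k) * t ^ (c - 2 + a * k)) / Real.Gamma (c + a * k)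
    with hg'def
  -- bound constant
  set B : ℝ := max ((z/2) ^ (c-2)) ((2*z) ^ (c-2)) with hBdef
  have hB0 : 0 ≤ B := le_max_of_le_left (by positivity)
  set u : ℕ → ℝ :=
    fun k => ((|c - 1| + a) * B) * (((k:ℝ) + 1) * (|x| * (2*z) ^ a) ^ k
      / |Real.Gamma (c + a * k)|) with hudef
  have hu : Summable u :=
    (ML.summable_aux a ha c (|x| * (2*z) ^ a) (by positivity)).mul_left _
  have hg : ∀ k : ℕ, ∀ t ∈ s, HasDerivAt (g k) (g' k t) t := by
    intro k t ht
    have ht0 : t ≠ 0 := (hspos t ht).ne'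
    have h := (Real.hasDerivAt_rpow_const (x := t) (p := c - 1 + a * k) (Or.inl ht0))
    have h2 := (h.const_mul (x ^ k)).div_const (Real.Gamma (c + a * k))
    rw [show c - 1 + a * k - 1 = c - 2 + a * k by ring] at h2
    exact h2
  have hg' : ∀ k : ℕ, ∀ t ∈ s, ‖g' k t‖ ≤ u k := by
    intro k t ht
    have ht0 : 0 < t := hspos t ht
    have htu : t ≤ 2*z := ht.2.le
    have h1 : t ^ (c - 2 + a * k) = t ^ (c-2) * t ^ (a * k) := Real.rpow_add ht0 _ _
    have h2 : t ^ (c-2) ≤ B := by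
      rcases le_or_gt 0 (c-2) with hc | hc
      · exact le_max_of_le_right (Real.rpow_le_rpow ht0.le htu hc)
      · exact le_max_of_le_left (Real.rpow_le_rpow_of_nonpos (by linarith) ht.1.le hc.le)
    have h3 : t ^ (a * k) ≤ ((2*z) ^ a) ^ k := by
      rw [← Real.rpow_natCast ((2*z) ^ a) k, ← Real.rpow_mul (by linarith)]
      exact Real.rpow_le_rpow ht0.le htu (by positivity)
    have h4 : |c - 1 + a * k| ≤ (|c - 1| + a) * ((k:ℝ) + 1) := by
      have := abs_add_le (c-1) (a * k)
      have hk : |a * (k:ℝ)| = a * k := abs_of_nonneg (by positivity)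
      have hknn : (0:ℝ) ≤ k := Nat.cast_nonneg k
      have habs : (0:ℝ) ≤ |c-1| := abs_nonneg _
      nlinarith
    have hnorm : ‖g' k t‖
        = |x| ^ k * (|c - 1 + a * k| * t ^ (c - 2 + a * k)) / |Real.Gamma (c + a * k)| := by
      rw [hg'def, Real.norm_eq_abs, abs_div, abs_mul, abs_pow, abs_mul,
        abs_of_nonneg (Real.rpow_nonneg ht0.le _)]
    rw [hnorm]
    show _ ≤ (|c - 1| + a) * B
      * (((k:ℝ) + 1) * (|x| * (2*z) ^ a) ^ k / |Real.Gamma (c + a * k)|)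
    have key : |x| ^ k * (|c - 1 + a * k| * t ^ (c - 2 + a * k))
        ≤ (|c - 1| + a) * B * (((k:ℝ) + 1) * (|x| * (2*z) ^ a) ^ k) := by
      rw [h1, mul_pow]
      calc |x| ^ k * (|c - 1 + a * k| * (t ^ (c-2) * t ^ (a*(k:ℕ))))
          ≤ |x| ^ k * (((|c-1|+a) * ((k:ℝ)+1)) * (B * ((2*z)^a)^k)) := by
            apply mul_le_mul_of_nonneg_left _ (by positivity)
            apply mul_le_mul h4 (mul_le_mul h2 h3 (by positivity) hB0)
              (by positivity) (by positivity)
        _ = (|c-1|+a) * B * (((k:ℝ)+1) * (|x|^k * ((2*z)^a)^k)) := by ring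
    rw [mul_div_assoc']
    exact ML.div_le_div_abs key (abs_nonneg _)
  -- summability at the point z
  have hg0 : Summable fun k => g k z := by
    apply Summable.of_norm
    refine Summable.of_nonneg_of_le (fun k => norm_nonneg _) (fun k => ?_)
      ((ML.summable_aux a ha c (|x| * z ^ a) (by positivity)).mul_left (z ^ (c-1)))
    have hnz : ‖g k z‖ = (|x| * z ^ a) ^ k * z ^ (c-1) / |Real.Gamma (c + a * k)| := by
      rw [hgdef, Real.norm_eq_abs, abs_div, abs_mul, abs_pow,
        abs_of_nonneg (Real.rpow_nonneg hz.le _), Real.rpow_add hz, mul_pow,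
        ← Real.rpow_natCast (z ^ a) k, ← Real.rpow_mul hz.le]
      ring_nf
    rw [hnz, mul_div_assoc']
    apply ML.div_le_div_abs _ (abs_nonneg _)
    have hk1 : (1:ℝ) ≤ (k:ℝ) + 1 := by
      have := Nat.cast_nonneg (α := ℝ) k; linarith
    nlinarith [mul_nonneg (mul_nonneg (Real.rpow_nonneg hz.le (c-1))
      (pow_nonneg (by positivity : (0:ℝ) ≤ |x| * z ^ a) k)) (Nat.cast_nonneg (α := ℝ) k)]
  have H := hasDerivAt_tsum_of_isPreconnected hu isOpen_Ioo isPreconnected_Ioo hg hg' hzs hg0 hzs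
  have heq : (fun t : ℝ => t ^ (c - 1) * mittagLefflerReal a c (x * t ^ a))
      =ᶠ[nhds z] (fun y => ∑' k, g k y) := by
    filter_upwards [isOpen_Ioo.mem_nhds hzs] with t ht
    exact ML.eq_tsum a (c-1) c x (hspos t ht)
  have Hf := H.congr_of_eventuallyEq heq
  have hval : (∑' k, g' k z) = z ^ (c - 2) * mittagLefflerReal a (c-1) (x * z ^ a) := by
    rw [ML.eq_tsum a (c-2) (c-1) x hz]
    refine tsum_congr fun k => ?_
    have hr := ML.recip_gamma (c - 1 + a * k)
    rw [show c - 1 + a * k + 1 = c + a * k by ring] at hr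
    have e : x ^ k * ((c - 1 + a * k) * z ^ (c - 2 + a * k)) / Real.Gamma (c + a * k)
        = x ^ k * z ^ (c - 2 + a * k) * ((c - 1 + a * k) / Real.Gamma (c + a * k)) := by
      ring
    show x ^ k * ((c - 1 + a * k) * z ^ (c - 2 + a * k)) / Real.Gamma (c + a * k) = _
    rw [e, hr]
    ring
  rw [← hval]
  exact Hf

/-- Iterated differentiation recursion: for `a > 0`, real `b, x` and `z > 0`,
`(d^m/dz^m) { z^{b−1} E_{a,b}(x z^a) } = z^{b−1−m} E_{a,b−m}(x z^a)`,
the derivatives being taken within `(0, ∞)`. -/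
theorem mittagLeffler_iteratedDeriv (a b x : ℝ) (ha : 0 < a) (m : ℕ) (z : ℝ) (hz : 0 < z) :
    iteratedDerivWithin m
        (fun t : ℝ => t ^ (b - 1) * mittagLefflerReal a b (x * t ^ a)) (Set.Ioi 0) z
      = z ^ (b - 1 - m) * mittagLefflerReal a (b - m) (x * z ^ a) := by
  induction m generalizing z with
  | zero => simp [iteratedDerivWithin_zero]
  | succ m ih =>
    have hz     : z ∈ Ioi (0:ℝ) := hz
    rw [iteratedDerivWithin_succ,
      derivWithin_of_isOpen isOpen_Ioi hz]
    have heq : iteratedDerivWithin m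
        (fun t : ℝ => t ^ (b - 1) * mittagLefflerReal a b (x * t ^ a)) (Set.Ioi 0)
        =ᶠ[nhds z] (fun t : ℝ => t ^ ((b - m) - 1) * mittagLefflerReal a (b - m) (x * t ^ a)) := by
      filter_upwards [isOpen_Ioi.mem_nhds hz] with t ht
      rw [ih t ht, show b - 1 - (m:ℝ) = (b - m) - 1 by ring]
    rw [heq.deriv_eq, (ML.hasDerivAt a ha (b - m) x hz).deriv,
      show (b:ℝ) - m - 2 = b - 1 - (m+1 : ℕ) by push_cast; ring,
      show (b:ℝ) - m - 1 = b - (m+1 : ℕ) by push_cast; ring]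
end

section
/- Wiman-type closed form for rational parameter 1/n: let n be a positive integer and x > 0 a real number. (i) If b > 1 is real, then E_{1/n, b}(x) = x^{(1−b)·n} · e^{x^n} · ∑_{j=0}^{n−1} (1/Γ(b − 1 + j/n)) · ∫_0^{x^n}ت t^{(b−1+j/n)−1} e^{−t} dt. (ii) For b = 1, E_{1/n}(x) = e^{x^n} · ( 1 + ∫_0^{x^n} e^{−t} · ∑_{j=1}^{n−1} t^{j/n − 1} / Γ(j/n) dt ). -/
open intervalIntegral

section MLaux

open intervalIntegral MeasureTheory Nat


private lemma ML_pos {s : ℝ} (hs : 0 < s) (M : ℕ) : (0:ℝ) < s + M :=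
  add_pos_of_pos_of_nonneg hs (Nat.cast_nonneg M)

private lemma ML_integrable {u y : ℝ} (hu : -1 < u) :
    IntervalIntegrable (fun t : ℝ => t ^ u * Real.exp (-t)) volume 0 y :=
  (intervalIntegral.intervalIntegrable_rpow' hu).mul_continuousOn
    (Continuous.continuousOn (Real.continuous_exp.comp continuous_neg))

private lemma ML_rec {s y : ℝ} (hs : 0 < s) (hy : 0 ≤ y) :
    ∫ t in (0:ℝ)..y, t ^ s * Real.exp (-t)
      = s * (∫ t in (0:ℝ)..y, t ^ (s - 1) * Real.exp (-t)) - y ^ s * Real.exp (-y) := by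
  have hder : ∀ t ∈ Set.Ioo (0:ℝ) y,
      HasDerivAt (fun t : ℝ => -(Real.exp (-t) * t ^ s))
        (t ^ s * Real.exp (-t) - s * (t ^ (s - 1) * Real.exp (-t))) t := by
    intro t ht
    have d1 : HasDerivAt (fun t : ℝ => Real.exp (-t)) (-Real.exp (-t)) t := by
      simpa using ((hasDerivAt_id t).neg).exp
    have d2 : HasDerivAt (fun t : ℝ => t ^ s) (s * t ^ (s - 1)) t :=
      Real.hasDerivAt_rpow_const (Or.inl ht.1.ne')
    have : HasDerivAt (fun t : ℝ => -(Real.exp (-t) * t ^ s)) _ t := (d1.mul d2).neg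
    convert this using 1
    ring
  have hcont : ContinuousOn (fun t : ℝ => -(Real.exp (-t) * t ^ s)) (Set.Icc 0 y) := by
    apply Continuous.continuousOn
    have : Continuous fun t : ℝ => t ^ s := by
      rw [continuous_iff_continuousAt]
      intro t
      exact Real.continuousAt_rpow_const t s (Or.inr hs.le)
    exact ((Real.continuous_exp.comp continuous_neg).mul this).neg
  have hint : IntervalIntegrable
      (fun t : ℝ => t ^ s * Real.exp (-t) - s * (t ^ (s - 1) * Real.exp (-t))) volume 0 y :=
    (ML_integrable (by linarith)).sub ((ML_integrable (by linarith)).const_mul s)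
  have := integral_eq_sub_of_hasDerivAt_of_le hy hcont hder hint
  rw [intervalIntegral.integral_sub (ML_integrable (by linarith))
      ((ML_integrable (by linarith)).const_mul s),
    intervalIntegral.integral_const_mul] at this
  rw [Real.zero_rpow hs.ne'] at this
  simp only [mul_zero, neg_zero, sub_zero] at this
  linarith [this]

private lemma ML_fact_le {s : ℝ} (hs : 0 < s) :
    ∀ M : ℕ, (M ! : ℝ) * Real.Gamma (s + 1) ≤ Real.Gamma (s + M + 1) := by
  intro M
  induction M with
  | zero => simp
  | succ M ih =>
    have h1 : (0:ℝ) < s + M + 1 := by linarith [ML_pos hs M]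
    have : Real.Gamma (s + (M + 1) + 1) = (s + M + 1) * Real.Gamma (s + M + 1) := by
      rw [show s + ((M:ℝ) + 1) + 1 = (s + M + 1) + 1 by ring, Real.Gamma_add_one h1.ne']
    push_cast [Nat.factorial_succ]
    rw [this]
    calc ((M:ℝ) + 1) * M ! * Real.Gamma (s + 1) = (M + 1) * ((M ! : ℝ) * Real.Gamma (s + 1)) := by
          ring
      _ ≤ (s + M + 1) * Real.Gamma (s + M + 1) := by
          apply mul_le_mul (by linarith [ML_pos hs M]) ih (by positivity) (by linarith [h1])

private lemma ML_series {s y : ℝ} (hs : 0 < s) (hy : 0 < y) :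
    HasSum (fun m : ℕ => y ^ (s + m) / Real.Gamma (s + m + 1))
      (Real.exp y / Real.Gamma s * ∫ t in (0:ℝ)..y, t ^ (s - 1) * Real.exp (-t)) := by
  set G : ℝ → ℝ := fun u => ∫ t in (0:ℝ)..y, t ^ (u - 1) * Real.exp (-t) with hG
  have hGpos : ∀ u : ℝ, 0 < u → 0 ≤ G u := by
    intro u hu
    apply intervalIntegral.integral_nonneg hy.le
    intro t ht
    exact mul_nonneg (Real.rpow_nonneg ht.1 _) (Real.exp_pos _).le
  have hGle : ∀ u : ℝ, 0 < u → G u ≤ y ^ u / u := by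
    intro u hu
    have h1 : G u ≤ ∫ t in (0:ℝ)..y, t ^ (u - 1) := by
      apply intervalIntegral.integral_mono_on hy.le (ML_integrable (by linarith))
        (intervalIntegral.intervalIntegrable_rpow' (by linarith))
      intro t ht
      calc t ^ (u-1) * Real.exp (-t) ≤ t ^ (u-1) * 1 := by
            apply mul_le_mul_of_nonneg_left (Real.exp_le_one_iff.mpr (by linarith [ht.1]))
              (Real.rpow_nonneg ht.1 _)
        _ = t ^ (u-1) := mul_one _
    have h2 : (∫ t in (0:ℝ)..y, t ^ (u - 1)) = y ^ u / u := by
      rw [integral_rpow (Or.inl (by linarith))]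
      rw [Real.zero_rpow (by intro h; rw [sub_add_cancel] at h; exact hu.ne' h), sub_add_cancel, sub_zero]
    linarith
  have hclaim : ∀ M : ℕ, G s = Real.Gamma s * Real.exp (-y) *
      (∑ m ∈ Finset.range M, y ^ (s + m) / Real.Gamma (s + m + 1))
      + Real.Gamma s / Real.Gamma (s + M) * G (s + M) := by
    intro M
    induction M with
    | zero =>
      simp [div_self (Real.Gamma_pos_of_pos hs).ne']
    | succ M ih =>
      have hsM : (0:ℝ) < s + M := ML_pos hs M
      have hrec : G (s + M + 1) = (s + M) * G (s + M) - y ^ (s + (M:ℝ)) * Real.exp (-y) := by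
        have := ML_rec hsM hy.le
        rw [hG]
        simp only [show s + (M:ℝ) + 1 - 1 = s + M by ring]
        exact this
      have hGam : Real.Gamma (s + M + 1) = (s + M) * Real.Gamma (s + M) :=
        Real.Gamma_add_one hsM.ne'
      have hGamPos := Real.Gamma_pos_of_pos hsM
      have hGamPos' := Real.Gamma_pos_of_pos (show (0:ℝ) < s + M + 1 by linarith)
      rw [ih, Finset.sum_range_succ]
      push_cast
      rw [show s + ((M:ℝ) + 1) = s + M + 1 by ring]
      have hGM : G (s + M) = (G (s + M + 1) + y ^ (s + (M:ℝ)) * Real.exp (-y)) / (s + M) := by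
        rw [eq_div_iff hsM.ne', hrec]
        ring
      rw [hGM, hGam]
      field_simp
      ring
  have hRle : ∀ M : ℕ, Real.Gamma s / Real.Gamma (s + M) * G (s + M)
      ≤ (Real.Gamma s * y ^ s / Real.Gamma (s + 1)) * (y ^ M / (M ! : ℝ)) := by
    intro M
    have hsM : (0:ℝ) < s + M := ML_pos hs M
    have hGamPos := Real.Gamma_pos_of_pos hsM
    have hGamSPos := Real.Gamma_pos_of_pos hs
    have h1 : Real.Gamma s / Real.Gamma (s + M) * G (s + M)
        ≤ Real.Gamma s / Real.Gamma (s + M) * (y ^ (s + (M:ℝ)) / (s + M)) := by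
      apply mul_le_mul_of_nonneg_left (hGle _ hsM) (by positivity)
    have h2 : Real.Gamma s / Real.Gamma (s + M) * (y ^ (s + (M:ℝ)) / (s + M))
        = Real.Gamma s * y ^ (s + (M:ℝ)) / Real.Gamma (s + M + 1) := by
      rw [Real.Gamma_add_one hsM.ne']
      field_simp
    have h3 : Real.Gamma s * y ^ (s + (M:ℝ)) / Real.Gamma (s + M + 1)
        ≤ Real.Gamma s * y ^ (s + (M:ℝ)) / ((M ! : ℝ) * Real.Gamma (s + 1)) := by
      apply div_le_div_of_nonneg_left (by positivity) (by positivity) (ML_fact_le hs M)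
    have h4 : Real.Gamma s * y ^ (s + (M:ℝ)) / ((M ! : ℝ) * Real.Gamma (s + 1))
        = (Real.Gamma s * y ^ s / Real.Gamma (s + 1)) * (y ^ M / M !) := by
      rw [Real.rpow_add hy, Real.rpow_natCast]
      have g1 : (0:ℝ) < Real.Gamma (s+1) := Real.Gamma_pos_of_pos (by linarith)
      have : (0:ℝ) < (M ! : ℝ) := by positivity
      field_simp
    linarith
  have hRnonneg : ∀ M : ℕ, 0 ≤ Real.Gamma s / Real.Gamma (s + M) * G (s + M) := by
    intro M
    have hsM : (0:ℝ) < s + M := ML_pos hs M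
    have := Real.Gamma_pos_of_pos hsM
    have := Real.Gamma_pos_of_pos hs
    have := hGpos _ hsM
    positivity
  have hR0 : Filter.Tendsto (fun M : ℕ => Real.Gamma s / Real.Gamma (s + M) * G (s + M))
      Filter.atTop (nhds 0) := by
    apply squeeze_zero hRnonneg hRle
    have := (Real.summable_pow_div_factorial y).tendsto_atTop_zero
    simpa using this.const_mul (Real.Gamma s * y ^ s / Real.Gamma (s + 1))
  rw [hasSum_iff_tendsto_nat_of_nonneg]
  · have hGamSPos := Real.Gamma_pos_of_pos hs
    have key : ∀ M : ℕ, (∑ m ∈ Finset.range M, y ^ (s + m) / Real.Gamma (s + m + 1))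
        = (G s - Real.Gamma s / Real.Gamma (s + M) * G (s + M)) * Real.exp y / Real.Gamma s := by
      intro M
      have := hclaim M
      rw [Real.exp_neg] at this
      field_simp at this ⊢
      linarith [this]
    simp only [key]
    have : Filter.Tendsto (fun M : ℕ =>
        (G s - Real.Gamma s / Real.Gamma (s + M) * G (s + M)) * Real.exp y / Real.Gamma s)
        Filter.atTop (nhds ((G s - 0) * Real.exp y / Real.Gamma s)) := by
      exact (((tendsto_const_nhds).sub hR0).mul_const _).div_const _
    simpa [mul_comm, mul_div_assoc, div_mul_eq_mul_div] using this
  · intro m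
    have : (0:ℝ) < s + m + 1 := by linarith [ML_pos hs m]
    have := Real.Gamma_pos_of_pos this
    positivity

private lemma ML_fiber {n : ℕ} (hn : 0 < n) {x : ℝ} (hx : 0 < x) {b : ℝ} (j : ℕ)
    (hbj : 0 < b - 1 + (j:ℝ) / n) :
    HasSum (fun m : ℕ => x ^ (m * n + j) / Real.Gamma (b + 1 / (n:ℝ) * ↑(m * n + j)))
      (x ^ ((1 - b) * (n:ℝ)) * (Real.exp (x ^ n) / Real.Gamma (b - 1 + (j:ℝ) / n) *
        ∫ t in (0:ℝ)..(x ^ n), t ^ ((b - 1 + (j:ℝ) / n) - 1) * Real.exp (-t))) := by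
  have hn' : (n:ℝ) ≠ 0 := Nat.cast_ne_zero.mpr hn.ne'
  have hy : (0:ℝ) < x ^ n := pow_pos hx n
  have H := (ML_series hbj hy).mul_left (x ^ ((1 - b) * (n:ℝ)))
  have key : (fun m : ℕ => x ^ ((1 - b) * (n:ℝ)) *
      ((x ^ n) ^ (b - 1 + (j:ℝ) / n + m) / Real.Gamma (b - 1 + (j:ℝ) / n + m + 1)))
      = fun m : ℕ => x ^ (m * n + j) / Real.Gamma (b + 1 / (n:ℝ) * ↑(m * n + j)) := by
    funext m
    have hGamArg : b - 1 + (j:ℝ) / n + m + 1 = b + 1 / (n:ℝ) * ↑(m * n + j) := by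
      push_cast
      field_simp
      ring
    have hpow : x ^ ((1 - b) * (n:ℝ)) * (x ^ n) ^ (b - 1 + (j:ℝ) / n + (m:ℝ))
        = x ^ (m * n + j) := by
      rw [← Real.rpow_natCast x n, ← Real.rpow_mul hx.le, ← Real.rpow_add hx]
      rw [show (1 - b) * (n:ℝ) + (n:ℝ) * (b - 1 + (j:ℝ) / n + (m:ℝ))
          = ((m * n + j : ℕ) : ℝ) by push_cast; field_simp; ring]
      exact Real.rpow_natCast x _
    rw [hGamArg, ← hpow]
    ring
  rwa [key] at H

private lemma ML_split {n : ℕ} (hn : 0 < n) {x : ℝ} (hx : 0 < x) {b : ℝ} (hb : 1 ≤ b)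
    (T : Fin n → ℝ)
    (hT : ∀ j : Fin n, HasSum
      (fun m : ℕ => x ^ (m * n + (j:ℕ)) / Real.Gamma (b + 1 / (n:ℝ) * ↑(m * n + (j:ℕ)))) (T j)) :
    mittagLefflerReal (1 / n) b x = ∑ j : Fin n, T j := by
  haveI : NeZero n := ⟨hn.ne'⟩
  have hn' : (n:ℝ) ≠ 0 := Nat.cast_ne_zero.mpr hn.ne'
  set f : ℕ → ℝ := fun k => x ^ k / Real.Gamma (b + 1 / (n:ℝ) * k) with hf
  have hfe : ∀ p : Fin n × ℕ, f (((Equiv.prodComm (Fin n) ℕ).trans (Nat.divModEquiv n).symm) p)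
      = x ^ (p.2 * n + (p.1:ℕ)) / Real.Gamma (b + 1 / (n:ℝ) * ↑(p.2 * n + (p.1:ℕ))) := by
    intro p
    rfl
  have hnonneg : ∀ k : ℕ, 0 ≤ f k := by
    intro k
    have h1 : (0:ℝ) ≤ 1 / (n:ℝ) * k := by positivity
    have h2 : (0:ℝ) < b + 1 / (n:ℝ) * k := by linarith
    exact div_nonneg (pow_nonneg hx.le _) (Real.Gamma_pos_of_pos h2).le
  have hsum : Summable fun p : Fin n × ℕ =>
      f (((Equiv.prodComm (Fin n) ℕ).trans (Nat.divModEquiv n).symm) p) := by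
    rw [summable_prod_of_nonneg (fun p => hnonneg _)]
    constructor
    · intro j
      have := (hT j).summable
      simp only [hfe]
      exact this
    · exact Summable.of_finite
  unfold mittagLefflerReal
  calc (∑' k : ℕ, x ^ k / Real.Gamma (b + 1 / (n:ℝ) * k))
      = ∑' p : Fin n × ℕ, f (((Equiv.prodComm (Fin n) ℕ).trans (Nat.divModEquiv n).symm) p) :=
        (Equiv.tsum_eq _ f).symm
    _ = ∑' (j : Fin n), ∑' (m : ℕ),
          f (((Equiv.prodComm (Fin n) ℕ).trans (Nat.divModEquiv n).symm) (j, m)) :=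
        Summable.tsum_prod' hsum fun j => by
          have := (hT j).summable
          simp only [hfe]
          exact this
    _ = ∑ j : Fin n, T j := by
        rw [tsum_fintype]
        refine Finset.sum_congr rfl fun j _ => ?_
        have := (hT j).tsum_eq
        simp only [hfe]
        exact this

private lemma ML_part_i (n : ℕ) (hn : 0 < n) (x : ℝ) (hx : 0 < x) :
    ∀ b : ℝ, 1 < b →
      mittagLefflerReal (1 / n) b x
        = x ^ ((1 - b) * n) * Real.exp (x ^ n) *
            ∑ j ∈ Finset.range n, (1 / Real.Gamma (b - 1 + j / n)) *
              ∫ t in (0:ℝ)..(x ^ n), t ^ ((b - 1 + j / n) - 1) * Real.exp (-t) := by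
  intro b hb
  have hn' : (n:ℝ) ≠ 0 := Nat.cast_ne_zero.mpr hn.ne'
  set F : ℕ → ℝ := fun j => x ^ ((1 - b) * (n:ℝ)) * (Real.exp (x ^ n) / Real.Gamma (b - 1 + (j:ℝ) / n) *
      ∫ t in (0:ℝ)..(x ^ n), t ^ ((b - 1 + (j:ℝ) / n) - 1) * Real.exp (-t)) with hF
  have step : mittagLefflerReal (1 / n) b x = ∑ j : Fin n, F (j:ℕ) := by
    apply ML_split hn hx hb.le
    intro j
    apply ML_fiber hn hx
    have : (0:ℝ) ≤ (j:ℝ) / n := by positivity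
    linarith
  rw [step, Fin.sum_univ_eq_sum_range F, Finset.mul_sum]
  refine Finset.sum_congr rfl fun j _ => ?_
  rw [hF]
  ring

private lemma ML_part_ii (n : ℕ) (hn : 0 < n) (x : ℝ) (hx : 0 < x) :
    mittagLefflerReal (1 / n) 1 x
      = Real.exp (x ^ n) *
          (1 + ∫ t in (0:ℝ)..(x ^ n),
            Real.exp (-t) * ∑ j ∈ Finset.Ioo 0 n, t ^ ((j : ℝ) / n - 1) / Real.Gamma (j / n)) := by
  have hn' : (n:ℝ) ≠ 0 := Nat.cast_ne_zero.mpr hn.ne'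
  have hy : (0:ℝ) < x ^ n := pow_pos hx n
  set F : ℕ → ℝ := fun j => if j = 0 then Real.exp (x ^ n) else
    Real.exp (x ^ n) / Real.Gamma ((j:ℝ) / n) *
      ∫ t in (0:ℝ)..(x ^ n), t ^ ((j:ℝ) / n - 1) * Real.exp (-t) with hF
  have step : mittagLefflerReal (1 / n) 1 x = ∑ j : Fin n, F (j:ℕ) := by
    apply ML_split hn hx le_rfl
    intro j
    rcases eq_or_ne (j:ℕ) 0 with hj | hj
    · rw [hj]
      have hexp : HasSum (fun m : ℕ => (x ^ n) ^ m / (m ! : ℝ)) (Real.exp (x ^ n)) := by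
        rw [Real.exp_eq_exp_ℝ]
        exact NormedSpace.expSeries_div_hasSum_exp (x ^ n)
      have heq : (fun m : ℕ => (x ^ n) ^ m / (m ! : ℝ))
          = fun m : ℕ => x ^ (m * n + 0) / Real.Gamma (1 + 1 / (n:ℝ) * ↑(m * n + 0)) := by
        funext m
        rw [add_zero, ← pow_mul']
        congr 1
        rw [show (1:ℝ) + 1 / (n:ℝ) * ↑(m * n) = (m:ℝ) + 1 by push_cast; field_simp; ring]
        exact (Real.Gamma_nat_eq_factorial m).symm
      rw [heq] at hexp
      simpa [hF] using hexp
    · have hj1 : 1 ≤ (j:ℕ) := Nat.one_le_iff_ne_zero.mpr hj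
      have hbj : (0:ℝ) < 1 - 1 + ((j:ℕ):ℝ) / n := by
        rw [sub_self, zero_add]
        positivity
      have := ML_fiber hn hx (b := 1) (j:ℕ) hbj
      rw [hF]
      simp only [if_neg hj]
      have e1 : (1:ℝ) - 1 + ((j:ℕ):ℝ) / n = ((j:ℕ):ℝ) / n := by ring
      have e2 : x ^ ((1 - (1:ℝ)) * (n:ℝ)) = 1 := by
        rw [show (1 - (1:ℝ)) * (n:ℝ) = 0 by ring, Real.rpow_zero]
      rw [e1, e2, one_mul] at this
      exact this
  have hint : (∫ t in (0:ℝ)..(x ^ n),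
      Real.exp (-t) * ∑ j ∈ Finset.Ioo 0 n, t ^ ((j : ℝ) / n - 1) / Real.Gamma (j / n))
      = ∑ j ∈ Finset.Ioo 0 n, (Real.Gamma ((j:ℝ) / n))⁻¹ *
          ∫ t in (0:ℝ)..(x ^ n), t ^ ((j:ℝ) / n - 1) * Real.exp (-t) := by
    have hrw : (fun t : ℝ => Real.exp (-t) * ∑ j ∈ Finset.Ioo 0 n, t ^ ((j : ℝ) / n - 1) / Real.Gamma (j / n))
        = fun t : ℝ => ∑ j ∈ Finset.Ioo 0 n, (Real.Gamma ((j:ℝ) / n))⁻¹ * (t ^ ((j:ℝ) / n - 1) * Real.exp (-t)) := by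
      funext t
      rw [Finset.mul_sum]
      exact Finset.sum_congr rfl fun j _ => by ring
    rw [hrw, intervalIntegral.integral_finset_sum]
    · exact Finset.sum_congr rfl fun j _ => intervalIntegral.integral_const_mul _ _
    · intro j hj
      have hj1 : 1 ≤ j := (Finset.mem_Ioo.mp hj).1
      have : (0:ℝ) < (j:ℝ) / n := by positivity
      exact (ML_integrable (by linarith)).const_mul _
  rw [step, hint, Fin.sum_univ_eq_sum_range F, Finset.range_eq_Ico,
    ← Finset.Ioo_insert_left hn, Finset.sum_insert (by simp)]
  have hF0 : F 0 = Real.exp (x ^ n) := by simp [hF]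
  rw [hF0, mul_add, mul_one, Finset.mul_sum]
  congr 1
  refine Finset.sum_congr rfl fun j hj => ?_
  have hj0 : j ≠ 0 := (Finset.mem_Ioo.mp hj).1.ne'
  rw [hF]
  simp only [if_neg hj0]
  ring

/-- Wiman-type closed form for parameter `1/n`: for `x > 0`,
(i) if `b > 1` then
`E_{1/n,b}(x) = x^{(1−b)n} e^{x^n} ∑_{j=0}^{n−1} (1/Γ(b−1+j/n)) ∫_0^{x^n} t^{(b−1+j/n)−1} e^{−t} dt`;
(ii) for `b = 1`,
`E_{1/n}(x) = e^{x^n} (1 + ∫_0^{x^n} e^{−t} ∑_{j=1}^{n−1} t^{j/n−1}/Γ(j/n) dt)`. -/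
theorem mittagLeffler_one_div_nat (n : ℕ) (hn : 0 < n) (x : ℝ) (hx : 0 < x) :
    (∀ b : ℝ, 1 < b →
      mittagLefflerReal (1 / n) b x
        = x ^ ((1 - b) * n) * Real.exp (x ^ n) *
            ∑ j ∈ Finset.range n, (1 / Real.Gamma (b - 1 + j / n)) *
              ∫ t in (0:ℝ)..(x ^ n), t ^ ((b - 1 + j / n) - 1) * Real.exp (-t)) ∧
    mittagLefflerReal (1 / n) 1 x
      = Real.exp (x ^ n) *
          (1 + ∫ t in (0:ℝ)..(x ^ n),
            Real.exp (-t) * ∑ j ∈ Finset.Ioo 0 n, t ^ ((j : ℝ) / n - 1) / Real.Gamma (j / n)) :=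
  ⟨fun b hb => ML_part_i n hn x hx b hb, ML_part_ii n hn x hx⟩


end MLaux
end

section
/- Laplace transform of the Mittag-Leffler function: let a > 0 and b > 0 be real numbers, x a real number, and s > 0 a real number with s^a > |x|. Then ∫_0^∞ e^{−s·t} · t^{b−1} · E_{a,b}(x · t^a) dt = s^{a−b} / (s^a − x). -/
open MeasureTheory

lemma ml_integrable {p s : ℝ} (hp : 0 < p) (hs : 0 < s) :
    IntegrableOn (fun t : ℝ => t ^ (p - 1) * Real.exp (-(s * t))) (Set.Ioi 0) := by
  have h := integrableOn_rpow_mul_exp_neg_mul_rpow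
    (by linarith : (-1:ℝ) < p - 1) zero_lt_one hs
  refine h.congr_fun (fun t ht => ?_) measurableSet_Ioi
  beta_reduce; rw [Real.rpow_one]; ring_nf

lemma ml_pointwise {a b s : ℝ} (y : ℝ) (k : ℕ) {t : ℝ} (ht : 0 < t) :
    Real.exp (-(s * t)) * t ^ (b - 1) * ((y * t ^ a) ^ k / Real.Gamma (b + a * k))
      = (y ^ k / Real.Gamma (b + a * k)) * (t ^ (b + a * k - 1) * Real.exp (-(s * t))) := by
  have h1 : (t ^ a) ^ k = t ^ (a * k) := by
    rw [← Real.rpow_natCast (t ^ a) k, ← Real.rpow_mul ht.le]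
  have h2 : t ^ (b - 1) * t ^ (a * (k:ℝ)) = t ^ (b + a * k - 1) := by
    rw [← Real.rpow_add ht]; ring_nf
  rw [mul_pow, h1]
  rw [show Real.exp (-(s*t)) * t ^ (b-1) * (y ^ k * t ^ (a*(k:ℝ)) / Real.Gamma (b + a*k))
      = (y ^ k / Real.Gamma (b + a*k)) * ((t ^ (b-1) * t ^ (a*(k:ℝ))) * Real.exp (-(s*t))) by ring,
    h2]

lemma ml_key {a b s : ℝ} (ha : 0 < a) (hb : 0 < b) (hs : 0 < s) (y : ℝ) (k : ℕ) :
    ∫ t in Set.Ioi (0:ℝ),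
        Real.exp (-(s * t)) * t ^ (b - 1) * ((y * t ^ a) ^ k / Real.Gamma (b + a * k))
      = (s ^ b)⁻¹ * (y / s ^ a) ^ k := by
  have hp : 0 < b + a * k := by positivity
  have hΓ : 0 < Real.Gamma (b + a * k) := Real.Gamma_pos_of_pos hp
  rw [setIntegral_congr_fun measurableSet_Ioi (fun t ht => ml_pointwise y k ht)]
  rw [MeasureTheory.integral_const_mul, Real.integral_rpow_mul_exp_neg_mul_Ioi hp hs]
  have h1 : ((1:ℝ)/s) ^ (b + a * k) = (s ^ b)⁻¹ * ((s ^ a)⁻¹) ^ k := by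
    rw [one_div, Real.inv_rpow hs.le, ← Real.rpow_neg hs.le, neg_add,
      Real.rpow_add hs, Real.rpow_neg hs.le, ← neg_mul,
      show (-a) * (k:ℝ) = (-a) * k from rfl]
    congr 1
    rw [Real.rpow_mul hs.le, Real.rpow_natCast, Real.rpow_neg hs.le, inv_pow]
  rw [h1, div_pow, inv_pow]
  field_simp

lemma ml_norm {a b s : ℝ} (x : ℝ) (k : ℕ) {t : ℝ} (ht : 0 < t)
    (hG : 0 < Real.Gamma (b + a * k)) :
    ‖Real.exp (-(s * t)) * t ^ (b - 1) * ((x * t ^ a) ^ k / Real.Gamma (b + a * k))‖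
      = Real.exp (-(s * t)) * t ^ (b - 1) * ((|x| * t ^ a) ^ k / Real.Gamma (b + a * k)) := by
  have h1 : (0:ℝ) ≤ t ^ a := Real.rpow_nonneg ht.le a
  have h2 : (0:ℝ) ≤ t ^ (b - 1) := Real.rpow_nonneg ht.le _
  rw [Real.norm_eq_abs, abs_mul, abs_mul, abs_div, abs_pow, abs_mul, abs_of_nonneg h1,
    abs_of_nonneg h2, abs_of_pos (Real.exp_pos _), abs_of_pos hG]

/-- Laplace transform of the Mittag-Leffler function: for real `a > 0`, `b > 0`, real `x`
and `s > 0` with `s^a > |x|`,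
`∫_0^∞ e^{−st} t^{b−1} E_{a,b}(x t^a) dt = s^{a−b}/(s^a − x)`. -/
theorem mittagLeffler_laplace (a b x s : ℝ) (ha : 0 < a) (hb : 0 < b) (hs : 0 < s)
    (hsx : |x| < s ^ a) :
    ∫ t in Set.Ioi (0:ℝ),
        Real.exp (-(s * t)) * t ^ (b - 1) * mittagLefflerReal a b (x * t ^ a)
      = s ^ (a - b) / (s ^ a - x) := by
  have hsa : (0:ℝ) < s ^ a := Real.rpow_pos_of_pos hs a
  set F : ℕ → ℝ → ℝ := fun k t =>
    Real.exp (-(s * t)) * t ^ (b - 1) * ((x * t ^ a) ^ k / Real.Gamma (b + a * k)) with hF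
  -- measurability
  have hmeas : ∀ k : ℕ, AEStronglyMeasurable (F k) (volume.restrict (Set.Ioi (0:ℝ))) := by
    intro k
    apply Measurable.aestronglyMeasurable
    fun_prop
  -- the norm integral bound
  have hsum : ∑' k : ℕ, ∫⁻ t, ‖F k t‖ₑ ∂(volume.restrict (Set.Ioi (0:ℝ))) ≠ ⊤ := by
    have hnorm : ∀ k : ℕ, ∫⁻ t, ‖F k t‖ₑ ∂(volume.restrict (Set.Ioi (0:ℝ)))
        = ENNReal.ofReal ((s ^ b)⁻¹ * (|x| / s ^ a) ^ k) := by
      intro k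
      have hp : 0 < b + a * k := by positivity
      have hΓ : 0 < Real.Gamma (b + a * k) := Real.Gamma_pos_of_pos hp
      have hint : Integrable (F k) (volume.restrict (Set.Ioi (0:ℝ))) := by
        refine ((ml_integrable hp hs).const_mul (|x| ^ k / Real.Gamma (b + a*k))).mono'
          (hmeas k) ?_
        refine (ae_restrict_iff' measurableSet_Ioi).2 (Filter.Eventually.of_forall fun t ht => ?_)
        have : ‖F k t‖ = Real.exp (-(s * t)) * t ^ (b - 1)
            * ((|x| * t ^ a) ^ k / Real.Gamma (b + a * k)) := ml_norm x k ht hΓ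
        rw [this, ml_pointwise |x| k ht]
      rw [← ofReal_integral_norm_eq_lintegral_enorm hint]
      congr 1
      have : ∀ t ∈ Set.Ioi (0:ℝ), ‖F k t‖
          = Real.exp (-(s * t)) * t ^ (b - 1) * ((|x| * t ^ a) ^ k / Real.Gamma (b + a * k)) :=
        fun t ht => ml_norm x k ht hΓ
      rw [setIntegral_congr_fun measurableSet_Ioi this, ml_key ha hb hs |x| k]
    rw [tsum_congr hnorm]
    have hq : (0:ℝ) ≤ |x| / s ^ a := by positivity
    have hq1 : |x| / s ^ a < 1 := (div_lt_one hsa).2 hsx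
    have hsummable : Summable (fun k : ℕ => (s ^ b)⁻¹ * (|x| / s ^ a) ^ k) :=
      (summable_geometric_of_lt_one hq hq1).mul_left _
    rw [← ENNReal.ofReal_tsum_of_nonneg (fun k => by positivity) hsummable]
    exact ENNReal.ofReal_ne_top
  -- rewrite integrand as a tsum
  have hEq : ∀ t ∈ Set.Ioi (0:ℝ),
      Real.exp (-(s * t)) * t ^ (b - 1) * mittagLefflerReal a b (x * t ^ a)
        = ∑' k : ℕ, F k t := by
    intro t ht
    rw [mittagLefflerReal, ← tsum_mul_left]
  rw [setIntegral_congr_fun measurableSet_Ioi hEq, integral_tsum hmeas hsum]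
  have : ∀ k : ℕ, ∫ t in Set.Ioi (0:ℝ), F k t = (s ^ b)⁻¹ * (x / s ^ a) ^ k :=
    fun k => ml_key ha hb hs x k
  rw [tsum_congr this, tsum_mul_left, tsum_geometric_of_norm_lt_one
    (by rw [Real.norm_eq_abs, abs_div, abs_of_pos hsa]; exact (div_lt_one hsa).2 hsx)]
  have hne : s ^ a - x ≠ 0 := by
    have : x < s ^ a := lt_of_le_of_lt (le_abs_self x) hsx
    linarith
  rw [Real.rpow_sub hs]
  field_simp
end

section
/- Integration of a product of Mittag-Leffler functions: let a > 0, b > 0, w > 0 be real numbers, λ ≠ μ real numbers, and x > 0 a real number. Then ∫_0^x (x − u)^{w−1} · u^{b−1} · E_{a,b}(λ · u^a) · E_{a,w}(μ · (x − u)^a) du = x^{b+w−1} · ( λ · E_{a,b+w}(λ · x^a) − μ · E_{a,b+w}(μ · x^a) ) / (λ − μ). -/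
open intervalIntegral
section MLaux

open Filter MeasureTheory

set_option maxHeartbeats 2000000

lemma ml_summable_abs {α β : ℝ} (hα : 0 < α) (hβ : 0 < β) (z : ℝ) :
    Summable fun n : ℕ => |z| ^ n / Real.Gamma (β + α * n) := by
  set m : ℕ := ⌈1 / α⌉₊ with hm
  have hm1 : 1 ≤ m := Nat.one_le_iff_ne_zero.mpr (by
    simp [hm, Nat.ceil_eq_zero, not_le]
    positivity)
  haveI : NeZero m := ⟨by omega⟩
  have hαm : 1 ≤ α * m := by
    have h1 := Nat.le_ceil (1 / α)
    rw [div_le_iff₀ hα] at h1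
    calc (1:ℝ) ≤ ↑⌈1 / α⌉₊ * α := h1
    _ = α * m := by rw [hm]; ring
  -- summability on each residue class
  have hres : ∀ r : ℕ, Summable fun n : ℕ =>
      |z| ^ (m * n + r) / Real.Gamma (β + α * ((m * n + r : ℕ) : ℝ)) := by
    intro r
    apply summable_of_ratio_norm_eventually_le (r := 1 / 2) (by norm_num)
    have htends : Tendsto (fun n : ℕ => β + α * (m * (n : ℝ) + r)) atTop atTop := by
      apply tendsto_atTop_add_const_left
      apply Tendsto.const_mul_atTop hα
      apply tendsto_atTop_add_const_right
      apply Tendsto.const_mul_atTop (by exact_mod_cast hm1 : (0:ℝ) < m)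
      exact tendsto_natCast_atTop_atTop
    filter_upwards [htends.eventually_ge_atTop (max 2 (2 * |z| ^ m))] with n hn
    set s : ℝ := β + α * (m * (n : ℝ) + r) with hs
    have hs2 : 2 ≤ s := le_trans (le_max_left _ _) hn
    have hsz : 2 * |z| ^ m ≤ s := le_trans (le_max_right _ _) hn
    have hsΓ : 0 < Real.Gamma s := Real.Gamma_pos_of_pos (by linarith)
    have hmono : Real.Gamma (s + 1) ≤ Real.Gamma (s + α * m) := by
      apply (Real.Gamma_strictMonoOn_Ici.monotoneOn) (by simp [Set.mem_Ici]; linarith)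
        (by simp [Set.mem_Ici]; linarith) (by linarith)
    have hΓbig : s * Real.Gamma s ≤ Real.Gamma (s + α * m) :=
      (Real.Gamma_add_one (by linarith : s ≠ 0)) ▸ hmono
    have hΓs' : 0 < Real.Gamma (s + α * m) := Real.Gamma_pos_of_pos (by linarith)
    have harg : β + α * ((m * (n + 1) + r : ℕ) : ℝ) = s + α * m := by
      push_cast; ring
    have hargn : β + α * ((m * n + r : ℕ) : ℝ) = s := by push_cast; ring
    have hpow : |z| ^ (m * (n + 1) + r) = |z| ^ m * |z| ^ (m * n + r) := by
      rw [← pow_add]; ring_nf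
    rw [Real.norm_eq_abs, Real.norm_eq_abs, harg, hargn, hpow,
      abs_of_nonneg (div_nonneg (by positivity) hΓs'.le),
      abs_of_nonneg (div_nonneg (by positivity) hsΓ.le),
      div_le_iff₀ hΓs']
    calc |z| ^ m * |z| ^ (m * n + r)
        ≤ s / 2 * |z| ^ (m * n + r) :=
          mul_le_mul_of_nonneg_right (by linarith) (by positivity)
      _ = 1 / 2 * (|z| ^ (m * n + r) / Real.Gamma s) * (s * Real.Gamma s) := by
          field_simp
      _ ≤ 1 / 2 * (|z| ^ (m * n + r) / Real.Gamma s) * Real.Gamma (s + α * m) :=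
          mul_le_mul_of_nonneg_left hΓbig (by positivity)
  -- assemble residue classes
  rw [Finset.sum_indicator_mod m (fun n : ℕ => |z| ^ n / Real.Gamma (β + α * n))]
  rw [Finset.sum_fn]
  apply summable_sum
  intro k _
  rw [← ZMod.natCast_zmod_val k, summable_indicator_mod_iff_summable]
  have := hres k.val
  simpa [mul_comm] using this

lemma ml_summable_s11 {α β : ℝ} (hα : 0 < α) (hβ : 0 < β) (z : ℝ) :
    Summable fun n : ℕ => z ^ n / Real.Gamma (β + α * n) := by
  apply Summable.of_abs
  have : ∀ n : ℕ, |z ^ n / Real.Gamma (β + α * n)| = |z| ^ n / Real.Gamma (β + α * n) := by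
    intro n
    rw [abs_div, abs_pow, abs_of_pos (Real.Gamma_pos_of_pos (by positivity))]
  simpa only [this] using ml_summable_abs hα hβ z

lemma ml_summable_pair {α β : ℝ} (hα : 0 < α) (hβ : 0 < β) (c d : ℝ) :
    Summable fun p : ℕ × ℕ =>
      |c| ^ p.1 * |d| ^ p.2 / Real.Gamma (β + α * (p.1 + p.2)) := by
  set M : ℝ := max |c| |d| with hM
  have hM0 : 0 ≤ M := le_trans (abs_nonneg c) (le_max_left _ _)
  set z : ℝ := 2 * M + 2 with hz
  have hz0 : 0 < z := by positivity
  set q : ℝ := M / z with hq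
  have hq0 : 0 ≤ q := div_nonneg hM0 hz0.le
  have hq1 : q < 1 := by
    rw [hq, div_lt_one hz0]; linarith
  have hK := ml_summable_abs hα hβ z
  set K : ℝ := ∑' n : ℕ, |z| ^ n / Real.Gamma (β + α * n) with hKdef
  have hKb : ∀ n : ℕ, z ^ n / Real.Gamma (β + α * n) ≤ K := by
    intro n
    rw [show z ^ n = |z| ^ n by rw [abs_of_pos hz0]]
    exact Summable.le_tsum hK n fun i _ =>
      div_nonneg (by positivity) (Real.Gamma_pos_of_pos (by positivity)).le
  have hmaj : Summable fun p : ℕ × ℕ => K * (q ^ p.1 * q ^ p.2) :=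
    ((summable_geometric_of_lt_one hq0 hq1).mul_of_nonneg
      (summable_geometric_of_lt_one hq0 hq1) (fun k => pow_nonneg hq0 k)
      fun j => pow_nonneg hq0 j).mul_left K
  apply Summable.of_nonneg_of_le _ _ hmaj
  · intro p
    exact div_nonneg (by positivity) (Real.Gamma_pos_of_pos (by positivity)).le
  · rintro ⟨k, j⟩
    have hΓ : 0 < Real.Gamma (β + α * ((k : ℝ) + j)) :=
      Real.Gamma_pos_of_pos (by positivity)
    calc |c| ^ k * |d| ^ j / Real.Gamma (β + α * ((k : ℝ) + j))
        ≤ M ^ k * M ^ j / Real.Gamma (β + α * ((k : ℝ) + j)) := by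
          gcongr
          · exact le_max_left _ _
          · exact le_max_right _ _
      _ = q ^ k * q ^ j * (z ^ (k + j) / Real.Gamma (β + α * ((k : ℝ) + j))) := by
          rw [hq]
          rw [div_pow, div_pow, pow_add]
          have hzk : z ^ k ≠ 0 := pow_ne_zero _ hz0.ne'
          have hzj : z ^ j ≠ 0 := pow_ne_zero _ hz0.ne'
          field_simp
      _ ≤ q ^ k * q ^ j * K := by
          apply mul_le_mul_of_nonneg_left _ (by positivity)
          have := hKb (k + j)
          rwa [Nat.cast_add] at this
      _ = K * (q ^ k * q ^ j) := by ring

lemma real_betaIntegral {p q : ℝ} (hp : 0 < p) (hq : 0 < q) :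
    ∫ t in (0:ℝ)..1, t ^ (p - 1) * (1 - t) ^ (q - 1)
      = Real.Gamma p * Real.Gamma q / Real.Gamma (p + q) := by
  have key := Complex.Gamma_mul_Gamma_eq_betaIntegral
    (s := (p : ℂ)) (t := (q : ℂ)) (by simpa using hp) (by simpa using hq)
  have hbeta : Complex.betaIntegral p q
      = ((∫ t in (0:ℝ)..1, t ^ (p - 1) * (1 - t) ^ (q - 1) : ℝ) : ℂ) := by
    rw [Complex.betaIntegral, ← intervalIntegral.integral_ofReal]
    apply intervalIntegral.integral_congr
    intro t ht
    rw [Set.uIcc_of_le (zero_le_one)] at ht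
    dsimp only
    rw [show ((p:ℂ) - 1) = ((p - 1 : ℝ) : ℂ) by push_cast; ring,
      show ((q:ℂ) - 1) = ((q - 1 : ℝ) : ℂ) by push_cast; ring,
      show (1 - (t:ℂ)) = ((1 - t : ℝ) : ℂ) by push_cast; ring,
      ← Complex.ofReal_cpow ht.1, ← Complex.ofReal_cpow (by linarith [ht.2])]
    norm_cast
  rw [hbeta, ← Complex.ofReal_add, Complex.Gamma_ofReal, Complex.Gamma_ofReal,
    Complex.Gamma_ofReal, ← Complex.ofReal_mul, ← Complex.ofReal_mul] at key
  have := Complex.ofReal_injective key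
  have hΓ : Real.Gamma (p + q) ≠ 0 := (Real.Gamma_pos_of_pos (by linarith)).ne'
  field_simp
  linarith [this]

lemma real_betaIntegral_scaled {p q x : ℝ} (hp : 0 < p) (hq : 0 < q) (hx : 0 < x) :
    ∫ u in (0:ℝ)..x, u ^ (p - 1) * (x - u) ^ (q - 1)
      = x ^ (p + q - 1) * (Real.Gamma p * Real.Gamma q / Real.Gamma (p + q)) := by
  have hsub := intervalIntegral.integral_comp_mul_right
    (a := (0:ℝ)) (b := 1) (fun u => u ^ (p - 1) * (x - u) ^ (q - 1)) hx.ne'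
  simp only [zero_mul, one_mul, smul_eq_mul] at hsub
  have hcongr : ∫ t in (0:ℝ)..1, (t * x) ^ (p - 1) * (x - t * x) ^ (q - 1)
      = ∫ t in (0:ℝ)..1, x ^ (p - 1) * x ^ (q - 1) * (t ^ (p - 1) * (1 - t) ^ (q - 1)) := by
    apply intervalIntegral.integral_congr
    intro t ht
    rw [Set.uIcc_of_le (zero_le_one)] at ht
    dsimp only
    rw [show x - t * x = (1 - t) * x by ring, Real.mul_rpow ht.1 hx.le,
      Real.mul_rpow (by linarith [ht.2]) hx.le]
    ring
  rw [hcongr, intervalIntegral.integral_const_mul, real_betaIntegral hp hq] at hsub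
  have hxne : x ≠ 0 := hx.ne'
  have : (∫ u in (0:ℝ)..x, u ^ (p - 1) * (x - u) ^ (q - 1))
      = x * (x ^ (p - 1) * x ^ (q - 1) * (Real.Gamma p * Real.Gamma q / Real.Gamma (p + q))) := by
    rw [hsub, ← mul_assoc, mul_inv_cancel₀ hxne, one_mul]
  rw [this, show p + q - 1 = 1 + (p - 1) + (q - 1) by ring, Real.rpow_add hx,
    Real.rpow_add hx, Real.rpow_one]
  ring

lemma betaKernel_intervalIntegrable {p q x : ℝ} (hp : 0 < p) (hq : 0 < q) (hx : 0 < x) :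
    IntervalIntegrable (fun u => u ^ (p - 1) * (x - u) ^ (q - 1)) volume 0 x := by
  have hhalf : (0:ℝ) ≤ x / 2 := by linarith
  -- on [0, x/2]
  have h1 : IntervalIntegrable (fun u : ℝ => u ^ (p - 1)) volume 0 (x / 2) :=
    intervalIntegrable_rpow' (by linarith)
  have c1 : ContinuousOn (fun u : ℝ => (x - u) ^ (q - 1)) (Set.uIcc 0 (x / 2)) := by
    apply ContinuousOn.rpow_const ((continuous_const.sub continuous_id).continuousOn)
    intro u hu
    rw [Set.uIcc_of_le hhalf] at hu
    exact Or.inl (by show x - u ≠ 0; intro h; nlinarith [hu.2])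
  have part1 := h1.mul_continuousOn c1
  -- on [x/2, x]
  have h2' : IntervalIntegrable (fun u : ℝ => u ^ (q - 1)) volume 0 (x / 2) :=
    intervalIntegrable_rpow' (by linarith)
  have h2 : IntervalIntegrable (fun u : ℝ => (x - u) ^ (q - 1)) volume (x / 2) x := by
    have := (h2'.comp_sub_left x).symm
    simpa [show x - x / 2 = x / 2 by ring] using this
  have c2 : ContinuousOn (fun u : ℝ => u ^ (p - 1)) (Set.uIcc (x / 2) x) := by
    apply ContinuousOn.rpow_const continuousOn_id
    intro u hu
    rw [Set.uIcc_of_le (by linarith : x / 2 ≤ x)] at hu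
    exact Or.inl (by simp only [id]; intro h; nlinarith [hu.1])
  have part2' := h2.mul_continuousOn c2
  have part2 : IntervalIntegrable (fun u : ℝ => u ^ (p - 1) * (x - u) ^ (q - 1))
      volume (x / 2) x := by
    have heq : (fun u : ℝ => u ^ (p - 1) * (x - u) ^ (q - 1))
        = fun u : ℝ => (x - u) ^ (q - 1) * u ^ (p - 1) := by
      funext u; ring
    rw [heq]; exact part2'
  exact part1.trans part2

lemma ml_norm_summable {α β : ℝ} (hα : 0 < α) (hβ : 0 < β) (z : ℝ) :
    Summable fun n : ℕ => ‖z ^ n / Real.Gamma (β + α * n)‖ :=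
  (ml_summable_abs hα hβ z).congr fun n => by
    rw [Real.norm_eq_abs, abs_div, abs_pow, abs_of_pos (Real.Gamma_pos_of_pos (by positivity))]

lemma rpow_helper {u s t : ℝ} (hu : 0 < u) (k : ℕ) :
    u ^ (s + t * k - 1) = u ^ (s - 1) * (u ^ t) ^ k := by
  rw [← Real.rpow_natCast (u ^ t) k, ← Real.rpow_mul hu.le, ← Real.rpow_add hu]
  ring_nf

end MLaux

open Filter MeasureTheory in
set_option maxHeartbeats 2000000 in
/-- Integration of a product of Mittag-Leffler functions: for real `a, b, w > 0`, real
`λ ≠ μ` and `x > 0`,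
`∫_0^x (x−u)^{w−1} u^{b−1} E_{a,b}(λ u^a) E_{a,w}(μ (x−u)^a) du
  = x^{b+w−1} (λ E_{a,b+w}(λ x^a) − μ E_{a,b+w}(μ x^a))/(λ − μ)`. -/
theorem mittagLeffler_integration_product (a b w lam mu x : ℝ) (ha : 0 < a) (hb : 0 < b)
    (hw : 0 < w) (hlm : lam ≠ mu) (hx : 0 < x) :
    (∫ u in (0:ℝ)..x, (x - u) ^ (w - 1) * u ^ (b - 1) *
        mittagLefflerReal a b (lam * u ^ a) * mittagLefflerReal a w (mu * (x - u) ^ a))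
      = x ^ (b + w - 1) *
          (lam * mittagLefflerReal a (b + w) (lam * x ^ a)
            - mu * mittagLefflerReal a (b + w) (mu * x ^ a)) / (lam - mu) := by
  have hbw : 0 < b + w := by linarith
  have hΓb : ∀ k : ℕ, 0 < Real.Gamma (b + a * k) :=
    fun k => Real.Gamma_pos_of_pos (by positivity)
  have hΓw : ∀ j : ℕ, 0 < Real.Gamma (w + a * j) :=
    fun j => Real.Gamma_pos_of_pos (by positivity)
  have hΓbw : ∀ t : ℝ, 0 ≤ t → 0 < Real.Gamma (b + w + a * t) :=
    fun t ht => Real.Gamma_pos_of_pos (by positivity)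
  have hxa : 0 < x ^ a := Real.rpow_pos_of_pos hx a
  set A : ℝ := lam * x ^ a with hA
  set B : ℝ := mu * x ^ a with hB
  set F : ℕ × ℕ → ℝ → ℝ := fun p u =>
    lam ^ p.1 / Real.Gamma (b + a * p.1) * (mu ^ p.2 / Real.Gamma (w + a * p.2)) *
      (u ^ (b + a * p.1 - 1) * (x - u) ^ (w + a * p.2 - 1)) with hF
  -- pointwise series expansion of the integrand
  have hpt : ∀ u ∈ Set.Ioo (0:ℝ) x,
      (x - u) ^ (w - 1) * u ^ (b - 1) * mittagLefflerReal a b (lam * u ^ a) *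
        mittagLefflerReal a w (mu * (x - u) ^ a) = ∑' p : ℕ × ℕ, F p u := by
    intro u hu
    have hu0 : 0 < u := hu.1
    have hux : 0 < x - u := by linarith [hu.2]
    rw [mittagLefflerReal, mittagLefflerReal,
      show (x - u) ^ (w - 1) * u ^ (b - 1) *
          (∑' k : ℕ, (lam * u ^ a) ^ k / Real.Gamma (b + a * k)) *
          (∑' j : ℕ, (mu * (x - u) ^ a) ^ j / Real.Gamma (w + a * j))
        = ((∑' k : ℕ, (lam * u ^ a) ^ k / Real.Gamma (b + a * k)) *
          (∑' j : ℕ, (mu * (x - u) ^ a) ^ j / Real.Gamma (w + a * j))) *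
          ((x - u) ^ (w - 1) * u ^ (b - 1)) by ring,
      tsum_mul_tsum_of_summable_norm (ml_norm_summable ha hb (lam * u ^ a))
        (ml_norm_summable ha hw (mu * (x - u) ^ a)),
      ← tsum_mul_right]
    apply tsum_congr
    rintro ⟨k, j⟩
    rw [hF]
    dsimp only
    rw [rpow_helper hu0 k, rpow_helper hux j, mul_pow, mul_pow]
    ring
  -- integrability of each term
  have hker : ∀ p : ℕ × ℕ, IntervalIntegrable
      (fun u : ℝ => u ^ (b + a * p.1 - 1) * (x - u) ^ (w + a * p.2 - 1)) volume 0 x :=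
    fun p => betaKernel_intervalIntegrable (by positivity) (by positivity) hx
  have hint : ∀ p : ℕ × ℕ, Integrable (F p) (volume.restrict (Set.Ioo 0 x)) := by
    intro p
    apply Integrable.const_mul
    exact ((hker p).1).mono_set Set.Ioo_subset_Ioc_self
  -- value of each term integral
  have hkerval : ∀ p : ℕ × ℕ, ∫ u in Set.Ioo (0:ℝ) x,
      u ^ (b + a * p.1 - 1) * (x - u) ^ (w + a * p.2 - 1)
      = x ^ (b + a * p.1 + (w + a * p.2) - 1) *
        (Real.Gamma (b + a * p.1) * Real.Gamma (w + a * p.2) /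
          Real.Gamma (b + a * p.1 + (w + a * p.2))) := by
    intro p
    rw [← MeasureTheory.integral_Ioc_eq_integral_Ioo,
      ← intervalIntegral.integral_of_le hx.le]
    exact real_betaIntegral_scaled (by positivity) (by positivity) hx
  have hkernonneg : ∀ p : ℕ × ℕ, ∀ u ∈ Set.Ioo (0:ℝ) x,
      0 ≤ u ^ (b + a * p.1 - 1) * (x - u) ^ (w + a * p.2 - 1) := by
    intro p u hu
    have h1 : (0:ℝ) ≤ u := hu.1.le
    have h2 : (0:ℝ) ≤ x - u := by linarith [hu.2.le]
    positivity
  have hkey : ∀ p : ℕ × ℕ, (∫ u in Set.Ioo (0:ℝ) x, F p u)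
      = x ^ (b + w - 1) * (A ^ p.1 * B ^ p.2 /
          Real.Gamma (b + w + a * ((p.1 : ℝ) + p.2))) := by
    intro p
    rw [hF]
    dsimp only
    rw [MeasureTheory.integral_const_mul _ _, hkerval p]
    have e1 : b + a * p.1 + (w + a * p.2) = b + w + a * ((p.1 : ℝ) + p.2) := by ring
    rw [e1]
    have e2 : x ^ (b + w + a * ((p.1 : ℝ) + p.2) - 1)
        = x ^ (b + w - 1) * (x ^ a) ^ p.1 * (x ^ a) ^ p.2 := by
      rw [← Real.rpow_natCast (x ^ a) p.1, ← Real.rpow_natCast (x ^ a) p.2,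
        ← Real.rpow_mul hx.le, ← Real.rpow_mul hx.le, ← Real.rpow_add hx,
        ← Real.rpow_add hx]
      ring_nf
    rw [e2, hA, hB, mul_pow, mul_pow]
    have g1 := (hΓb p.1).ne'
    have g2 := (hΓw p.2).ne'
    have g3 := (hΓbw ((p.1 : ℝ) + p.2) (by positivity)).ne'
    field_simp
  -- norm integrals
  have hnorm : ∀ p : ℕ × ℕ, (∫ u in Set.Ioo (0:ℝ) x, ‖F p u‖)
      = |∫ u in Set.Ioo (0:ℝ) x, F p u| := by
    intro p
    have hC : ∀ u ∈ Set.Ioo (0:ℝ) x, ‖F p u‖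
        = |lam ^ p.1 / Real.Gamma (b + a * p.1) * (mu ^ p.2 / Real.Gamma (w + a * p.2))| *
          (u ^ (b + a * p.1 - 1) * (x - u) ^ (w + a * p.2 - 1)) := by
      intro u hu
      rw [hF]
      dsimp only
      rw [Real.norm_eq_abs, abs_mul, abs_of_nonneg (hkernonneg p u hu)]
    rw [MeasureTheory.setIntegral_congr_fun measurableSet_Ioo hC,
      MeasureTheory.integral_const_mul _ _]
    have hFsplit : (∫ u in Set.Ioo (0:ℝ) x, F p u)
        = lam ^ p.1 / Real.Gamma (b + a * p.1) * (mu ^ p.2 / Real.Gamma (w + a * p.2)) *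
          ∫ u in Set.Ioo (0:ℝ) x, u ^ (b + a * p.1 - 1) * (x - u) ^ (w + a * p.2 - 1) := by
      rw [hF]; dsimp only; rw [MeasureTheory.integral_const_mul _ _]
    rw [hFsplit]
    conv_rhs => rw [abs_mul, abs_mul]
    rw [abs_of_nonneg (MeasureTheory.setIntegral_nonneg measurableSet_Ioo (hkernonneg p)),
      abs_mul]
  -- summability of the norm integrals
  have hsum : Summable fun p : ℕ × ℕ => ∫ u in Set.Ioo (0:ℝ) x, ‖F p u‖ := by
    have base := ((ml_summable_pair ha hbw A B).mul_left (x ^ (b + w - 1)))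
    refine base.congr fun p => ?_
    rw [hnorm p, hkey p]
    conv_rhs => rw [abs_mul, abs_div, abs_mul, abs_pow, abs_pow]
    rw [abs_of_pos (Real.rpow_pos_of_pos hx _),
      abs_of_pos (hΓbw ((p.1 : ℝ) + p.2) (by positivity))]
  -- swap integral and sum
  have hswap := MeasureTheory.integral_tsum_of_summable_integral_norm hint hsum
  rw [intervalIntegral.integral_of_le hx.le, MeasureTheory.integral_Ioc_eq_integral_Ioo,
    MeasureTheory.setIntegral_congr_fun measurableSet_Ioo hpt, ← hswap]
  rw [tsum_congr hkey, tsum_mul_left]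
  -- evaluate the double sum
  have habs : Summable fun p : ℕ × ℕ =>
      |A ^ p.1 * B ^ p.2 / Real.Gamma (b + w + a * ((p.1:ℝ) + p.2))| := by
    refine (ml_summable_pair ha hbw A B).congr fun p => ?_
    symm
    rw [abs_div, abs_mul, abs_pow, abs_pow,
      abs_of_pos (hΓbw ((p.1:ℝ) + p.2) (by positivity))]
  have hsum_h : Summable fun p : ℕ × ℕ =>
      A ^ p.1 * B ^ p.2 / Real.Gamma (b + w + a * ((p.1:ℝ) + p.2)) := habs.of_abs
  have hsigma : (∑' p : ℕ × ℕ, A ^ p.1 * B ^ p.2 / Real.Gamma (b + w + a * ((p.1:ℝ) + p.2)))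
      = ∑' n : ℕ, ∑ kl ∈ Finset.HasAntidiagonal.antidiagonal n,
          A ^ kl.1 * B ^ kl.2 / Real.Gamma (b + w + a * ((kl.1:ℝ) + kl.2)) := by
    conv_rhs => congr; ext; rw [← Finset.sum_finset_coe, ← tsum_fintype (L := .unconditional _)]
    rw [← Finset.HasAntidiagonal.sigmaAntidiagonalEquivProd.tsum_eq
      (fun p : ℕ × ℕ => A ^ p.1 * B ^ p.2 / Real.Gamma (b + w + a * ((p.1:ℝ) + p.2)))]
    exact Summable.tsum_sigma' (fun n => (hasSum_fintype _).summable)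
      (Finset.HasAntidiagonal.sigmaAntidiagonalEquivProd.summable_iff.mpr hsum_h)
  have hanti : ∀ n : ℕ, (∑ kl ∈ Finset.HasAntidiagonal.antidiagonal n,
        A ^ kl.1 * B ^ kl.2 / Real.Gamma (b + w + a * ((kl.1:ℝ) + kl.2)))
      = (lam * A ^ n - mu * B ^ n) / ((lam - mu) * Real.Gamma (b + w + a * n)) := by
    intro n
    have h1 : ∀ kl ∈ Finset.HasAntidiagonal.antidiagonal n,
        A ^ kl.1 * B ^ kl.2 / Real.Gamma (b + w + a * ((kl.1:ℝ) + kl.2))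
        = A ^ kl.1 * B ^ kl.2 / Real.Gamma (b + w + a * n) := by
      intro kl hkl
      rw [Finset.HasAntidiagonal.mem_antidiagonal] at hkl
      have : ((kl.1:ℝ) + kl.2) = (n:ℝ) := by exact_mod_cast congrArg (Nat.cast : ℕ → ℝ) hkl
      rw [this]
    rw [Finset.sum_congr rfl h1, ← Finset.sum_div]
    have hS : (∑ kl ∈ Finset.HasAntidiagonal.antidiagonal n, A ^ kl.1 * B ^ kl.2)
        = (lam * A ^ n - mu * B ^ n) / (lam - mu) := by
      rw [Finset.Nat.sum_antidiagonal_eq_sum_range_succ (fun i j => A ^ i * B ^ j)]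
      rw [eq_div_iff (sub_ne_zero.mpr hlm)]
      have key : (∑ i ∈ Finset.range (n+1), A ^ i * B ^ (n - i)) * (A - B)
          = A ^ (n+1) - B ^ (n+1) := by
        simpa using geom_sum₂_mul A B (n + 1)
      apply mul_right_cancel₀ hxa.ne'
      calc (∑ i ∈ Finset.range (n+1), A ^ i * B ^ (n - i)) * (lam - mu) * x ^ a
          = (∑ i ∈ Finset.range (n+1), A ^ i * B ^ (n - i)) * (A - B) := by
            rw [hA, hB]; ring
        _ = A ^ (n+1) - B ^ (n+1) := key
        _ = (lam * A ^ n - mu * B ^ n) * x ^ a := by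
            rw [pow_succ, pow_succ, hA, hB]; ring
    rw [hS, div_div]
  rw [hsigma, tsum_congr hanti]
  have hsA := ml_summable_s11 ha hbw A
  have hsB := ml_summable_s11 ha hbw B
  have hsplit : (∑' n : ℕ, (lam * A ^ n - mu * B ^ n) / ((lam - mu) * Real.Gamma (b + w + a * n)))
      = (lam * (∑' n : ℕ, A ^ n / Real.Gamma (b + w + a * n))
        - mu * (∑' n : ℕ, B ^ n / Real.Gamma (b + w + a * n))) / (lam - mu) := by
    rw [eq_div_iff (sub_ne_zero.mpr hlm), ← tsum_mul_right]
    have hterm : ∀ n : ℕ, (lam * A ^ n - mu * B ^ n) /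
          ((lam - mu) * Real.Gamma (b + w + a * n)) * (lam - mu)
        = lam * (A ^ n / Real.Gamma (b + w + a * n))
          - mu * (B ^ n / Real.Gamma (b + w + a * n)) := by
      intro n
      have hg := (hΓbw n (Nat.cast_nonneg n)).ne'
      have hd := sub_ne_zero.mpr hlm
      field_simp
    rw [tsum_congr hterm, Summable.tsum_sub (hsA.mul_left lam) (hsB.mul_left mu),
      tsum_mul_left, tsum_mul_left]
  rw [hsplit, mittagLefflerReal, mittagLefflerReal, mul_div_assoc]
end

section
/- Integral duplication formula: let a > 0 and b > −1/2 be real numbers and z ≥ 0 a real number. Then E_{a,b}(−z) = (2^{2b−1}/√π) · ∫_0^∞ t^{b−1/2} · e^{−t} · E_{2a,2b}(−z·(4t)^a) dt. -/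
open MeasureTheory Real Filter

lemma gamma_growth {a y : ℝ} (ha : 0 < a) (hy : 2 ≤ y) :
    Real.Gamma y * ((1/2) * (y+1) ^ min a 1) ≤ Real.Gamma (y + a) := by
  set m : ℝ := min a 1 with hmdef
  have hm0 : 0 < m := lt_min ha one_pos
  have hm1 : m ≤ 1 := min_le_right _ _
  have hma : m ≤ a := min_le_left _ _
  have hy0 : 0 < y := by linarith
  have hym : 0 < y + m := by linarith
  have hGy : 0 < Real.Gamma y := Real.Gamma_pos_of_pos hy0
  have hGym : 0 < Real.Gamma (y + m) := Real.Gamma_pos_of_pos hym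
  have hGy1 : 0 < Real.Gamma (y + 1) := Real.Gamma_pos_of_pos (by linarith)
  have hmono : Real.Gamma (y + m) ≤ Real.Gamma (y + a) := by
    rcases eq_or_lt_of_le hma with h | h
    · rw [h]
    · exact (Real.Gamma_strictMonoOn_Ici (by simp only [Set.mem_Ici]; linarith)
        (by simp only [Set.mem_Ici]; linarith) (by linarith)).le
  have hconv := convexOn_log_Gamma.2 (Set.mem_Ioi.mpr hym)
      (Set.mem_Ioi.mpr (by linarith : (0:ℝ) < y + m + 1)) hm0.le
      (by linarith : (0:ℝ) ≤ 1 - m) (by ring)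
  simp only [smul_eq_mul, Function.comp_apply] at hconv
  rw [show m * (y + m) + (1 - m) * (y + m + 1) = y + 1 by ring] at hconv
  rw [show y + m + 1 = (y + m) + 1 by ring, Real.Gamma_add_one (ne_of_gt hym),
    Real.log_mul (ne_of_gt hym) (ne_of_gt hGym)] at hconv
  have hconv' : Real.log (Real.Gamma (y+1)) ≤
      Real.log (Real.Gamma (y+m)) + (1-m) * Real.log (y+m) := by nlinarith [hconv]
  have hexp : Real.Gamma (y+1) ≤ Real.Gamma (y+m) * (y+m) ^ (1-m) := by
    have h := Real.exp_le_exp.mpr hconv'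
    rwa [Real.exp_log hGy1, Real.exp_add, Real.exp_log hGym,
      mul_comm (1-m) (Real.log (y+m)), ← Real.rpow_def_of_pos hym] at h
  have hyG : y * Real.Gamma y ≤ Real.Gamma (y+m) * (y+m) ^ (1-m) := by
    rwa [Real.Gamma_add_one (ne_of_gt hy0)] at hexp
  have hpow : (y+m) ^ (1-m) ≤ (y+1) ^ (1-m) :=
    Real.rpow_le_rpow (le_of_lt hym) (by linarith) (by linarith)
  have hc : (0:ℝ) < (y+1) ^ (1-m) := Real.rpow_pos_of_pos (by linarith) _
  refine le_trans ?_ hmono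
  rw [← mul_le_mul_iff_of_pos_right hc]
  have h1 : Real.Gamma y * ((1/2) * (y+1) ^ m) * (y+1) ^ (1-m)
      = Real.Gamma y * (1/2) * (y+1) := by
    rw [mul_assoc, mul_assoc, ← Real.rpow_add (by linarith : (0:ℝ) < y+1),
      show m + (1-m) = (1:ℝ) by ring, Real.rpow_one]
    ring
  rw [h1]
  nlinarith [mul_le_mul_of_nonneg_left hpow hGym.le, hyG, hGy, hy]

lemma ml_abs_summable {a b x : ℝ} (ha : 0 < a) (hx : 0 ≤ x) :
    Summable (fun k : ℕ => x ^ k / |Real.Gamma (b + a * k)|) := by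
  set m : ℝ := min a 1 with hmdef
  have hm0 : 0 < m := lt_min ha one_pos
  set R : ℝ := 4 * x + 4 with hRdef
  have hR0 : (0:ℝ) < R := by linarith
  have htend : Tendsto (fun k : ℕ => b + a * k) atTop atTop :=
    tendsto_atTop_add_const_left atTop b (Tendsto.const_mul_atTop ha tendsto_natCast_atTop_atTop)
  apply summable_of_ratio_norm_eventually_le (r := 1/2) (by norm_num)
  filter_upwards [htend.eventually_ge_atTop (max 2 (R ^ (1/m)))] with k hk
  have hy2 : 2 ≤ b + a * k := le_trans (le_max_left _ _) hk
  have hyR : R ^ (1/m) ≤ b + a * k := le_trans (le_max_right _ _) hk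
  have hGy : 0 < Real.Gamma (b + a * k) := Real.Gamma_pos_of_pos (by linarith)
  have harg : b + a * ((k+1 : ℕ):ℝ) = (b + a * k) + a := by push_cast; ring
  have hGya : 0 < Real.Gamma ((b + a * k) + a) := Real.Gamma_pos_of_pos (by linarith)
  have hRm : R ≤ ((b + a * k) + 1) ^ m := by
    calc R = (R ^ (1/m)) ^ m := by
          rw [← Real.rpow_mul hR0.le, one_div, inv_mul_cancel₀ (ne_of_gt hm0), Real.rpow_one]
      _ ≤ ((b + a * k) + 1) ^ m :=
          Real.rpow_le_rpow (Real.rpow_nonneg hR0.le _) (by linarith) hm0.le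
  have hg := gamma_growth (y := b + a * k) ha hy2
  rw [Real.norm_eq_abs, Real.norm_eq_abs, harg, abs_of_pos hGya, abs_of_pos hGy,
    abs_of_nonneg (div_nonneg (pow_nonneg hx _) hGya.le),
    abs_of_nonneg (div_nonneg (pow_nonneg hx _) hGy.le)]
  rw [show (1:ℝ)/2 * (x ^ k / Real.Gamma (b + a * k))
      = (1/2 * x ^ k) / Real.Gamma (b + a * k) by ring,
    div_le_div_iff₀ hGya hGy]
  have hxk : (0:ℝ) ≤ x ^ k := pow_nonneg hx k
  rw [pow_succ]
  nlinarith [mul_le_mul_of_nonneg_left hg (by positivity : (0:ℝ) ≤ 1/2 * x ^ k),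
    mul_le_mul_of_nonneg_left hRm (mul_nonneg hxk hGy.le),
    mul_nonneg hxk hGy.le]

lemma four_rpow (u : ℝ) : (4:ℝ) ^ u = (2:ℝ) ^ (2*u) := by
  have h24 : ((2:ℝ) ^ (2:ℝ)) = 4 := by
    rw [show (2:ℝ) = ((2:ℕ):ℝ) from by norm_num, Real.rpow_natCast]
    norm_num
  rw [Real.rpow_mul (by norm_num : (0:ℝ) ≤ 2), h24]


/-- Integral duplication formula: for real `a > 0`, `b > −1/2` and `z ≥ 0`,
`E_{a,b}(−z) = (2^{2b−1}/√π) ∫_0^∞ t^{b−1/2} e^{−t} E_{2a,2b}(−z (4t)^a) dt`. -/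
theorem mittagLeffler_duplication (a b z : ℝ) (ha : 0 < a) (hb : -(1/2) < b) (hz : 0 ≤ z) :
    mittagLefflerReal a b (-z)
      = ((2:ℝ) ^ (2 * b - 1) / Real.sqrt Real.pi) *
          ∫ t in Set.Ioi (0:ℝ),
            t ^ (b - 1/2) * Real.exp (-t) * mittagLefflerReal (2 * a) (2 * b) (-(z * (4 * t) ^ a)) := by
  have hπ : (0:ℝ) < Real.sqrt Real.pi := Real.sqrt_pos.mpr Real.pi_pos
  -- basic positivity facts
  have hak : ∀ k : ℕ, (0:ℝ) ≤ a * k := fun k => by positivity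
  have hsk : ∀ k : ℕ, (0:ℝ) < b + 1/2 + a * k := fun k => by have := hak k; linarith
  have hGhalf : ∀ k : ℕ, (0:ℝ) < Real.Gamma (b + 1/2 + a * k) :=
    fun k => Real.Gamma_pos_of_pos (hsk k)
  -- the coefficients and summands
  set C : ℕ → ℝ := fun k => (-z)^k * (4:ℝ)^(a*k) / Real.Gamma (2*b + 2*a*k) with hC
  set F : ℕ → ℝ → ℝ := fun k t => C k * (Real.exp (-t) * t ^ (b - 1/2 + a*k)) with hF
  -- duplication facts per k
  have hdup : ∀ k : ℕ, Real.Gamma (b + a*k) * Real.Gamma (b + 1/2 + a*k)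
      = Real.Gamma (2*b + 2*a*k) * (2:ℝ) ^ (1 - (2*b + 2*a*k)) * Real.sqrt Real.pi := by
    intro k
    have h := Real.Gamma_mul_Gamma_add_half (b + a*k)
    rw [show (b + a*(k:ℝ)) + 1/2 = b + 1/2 + a*k by ring,
      show 2*(b + a*(k:ℝ)) = 2*b + 2*a*k by ring] at h
    exact h
  have hzero : ∀ k : ℕ, Real.Gamma (2*b + 2*a*k) = 0 → Real.Gamma (b + a*k) = 0 := by
    intro k h2
    have h := hdup k
    rw [h2, zero_mul, zero_mul] at h
    rcases mul_eq_zero.mp h with h' | h'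
    · exact h'
    · exact absurd h' (ne_of_gt (hGhalf k))
  -- integrability of F k
  have hInt : ∀ k : ℕ, IntegrableOn (F k) (Set.Ioi 0) := by
    intro k
    have h := (Real.GammaIntegral_convergent (hsk k)).const_mul (C k)
    simp only [show b + 1/2 + a*(k:ℝ) - 1 = b - 1/2 + a*(k:ℝ) from by ring] at h
    exact h
  -- value of the integral of F k
  have hFint : ∀ k : ℕ, ∫ t in Set.Ioi (0:ℝ), F k t = C k * Real.Gamma (b + 1/2 + a*k) := by
    intro k
    have h := Real.Gamma_eq_integral (hsk k)
    rw [show b + 1/2 + a*(k:ℝ) - 1 = b - 1/2 + a*k by ring] at h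
    rw [hF]
    simp only []
    rw [MeasureTheory.integral_const_mul, ← h]
  -- lintegral of norms
  have hFlin : ∀ k : ℕ, (∫⁻ t in Set.Ioi (0:ℝ), ‖F k t‖ₑ)
      = ENNReal.ofReal (|C k| * Real.Gamma (b + 1/2 + a*k)) := by
    intro k
    rw [← MeasureTheory.ofReal_integral_norm_eq_lintegral_enorm (hInt k)]
    congr 1
    have heq : ∀ t ∈ Set.Ioi (0:ℝ), ‖F k t‖ = |C k| * (Real.exp (-t) * t ^ (b - 1/2 + a*k)) := by
      intro t ht
      rw [Set.mem_Ioi] at ht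
      rw [hF]
      simp only []
      rw [Real.norm_eq_abs, abs_mul, abs_of_pos (by positivity : (0:ℝ) < Real.exp (-t) * t ^ (b - 1/2 + a*(k:ℝ)))]
    rw [MeasureTheory.setIntegral_congr_fun measurableSet_Ioi heq,
      MeasureTheory.integral_const_mul]
    have h := Real.Gamma_eq_integral (hsk k)
    rw [show b + 1/2 + a*(k:ℝ) - 1 = b - 1/2 + a*k by ring] at h
    rw [← h]
  -- summability of the integral norms
  have hGsum : Summable (fun k : ℕ => |C k| * Real.Gamma (b + 1/2 + a*k)) := by
    apply Summable.congr ((ml_abs_summable ha hz).mul_left (Real.sqrt Real.pi * (2:ℝ)^(1-2*b)))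
    intro k
    by_cases h2 : Real.Gamma (2*b + 2*a*k) = 0
    · have hs0 := hzero k h2
      rw [hC]
      simp only []
      rw [h2, hs0]
      simp
    · have hs0 : Real.Gamma (b + a*k) ≠ 0 := by
        intro h
        have hd := hdup k
        rw [h, zero_mul] at hd
        apply h2
        rcases mul_eq_zero.mp hd.symm with h' | h'
        · rcases mul_eq_zero.mp h' with h'' | h''
          · exact h''
          · exact absurd h'' (ne_of_gt (Real.rpow_pos_of_pos two_pos _))
        · exact absurd h' (ne_of_gt hπ)
      have habs : |Real.Gamma (b + a*k)| * Real.Gamma (b + 1/2 + a*k)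
          = |Real.Gamma (2*b + 2*a*k)| * (2:ℝ) ^ (1 - (2*b + 2*a*k)) * Real.sqrt Real.pi := by
        have h := congrArg abs (hdup k)
        rwa [abs_mul, abs_mul, abs_mul, abs_of_pos (hGhalf k),
          abs_of_pos (Real.rpow_pos_of_pos two_pos _), abs_of_pos hπ] at h
      have hpow' : (2:ℝ)^(1 - (2*b + 2*a*(k:ℝ))) * (4:ℝ)^(a*(k:ℝ)) = (2:ℝ)^(1-2*b) := by
        rw [four_rpow, ← Real.rpow_add two_pos]
        congr 1; ring
      have hCabs : |C k| = z^k * (4:ℝ)^(a*(k:ℝ)) / |Real.Gamma (2*b + 2*a*k)| := by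
        rw [hC]
        simp only []
        rw [abs_div, abs_mul, abs_pow, abs_neg, abs_of_nonneg hz,
          abs_of_pos (Real.rpow_pos_of_pos (by norm_num : (0:ℝ) < 4) _)]
      rw [hCabs]
      have hΓ2 : |Real.Gamma (2*b + 2*a*(k:ℝ))| ≠ 0 := fun h => h2 (abs_eq_zero.mp h)
      have hΓs : |Real.Gamma (b + a*(k:ℝ))| ≠ 0 := fun h => hs0 (abs_eq_zero.mp h)
      set G1 : ℝ := |Real.Gamma (b + a*(k:ℝ))| with hG1
      set G2 : ℝ := Real.Gamma (b + 1/2 + a*(k:ℝ)) with hG2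
      set G3 : ℝ := |Real.Gamma (2*b + 2*a*(k:ℝ))| with hG3
      set P2 : ℝ := (2:ℝ)^(1 - (2*b + 2*a*(k:ℝ))) with hP2
      set P4 : ℝ := (4:ℝ)^(a*(k:ℝ)) with hP4
      field_simp
      linear_combination (-(z^k * P4)) * habs + (-(z^k * Real.sqrt Real.pi * G3)) * hpow'
  -- pointwise identity of the integrand
  have hkey : ∀ t ∈ Set.Ioi (0:ℝ),
      t ^ (b - 1/2) * Real.exp (-t) * mittagLefflerReal (2*a) (2*b) (-(z * (4*t)^a))
        = ∑' k : ℕ, F k t := by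
    intro t ht
    rw [Set.mem_Ioi] at ht
    rw [mittagLefflerReal, ← tsum_mul_left]
    apply tsum_congr
    intro k
    have h4t : (0:ℝ) < 4 * t := by linarith
    have hnum : (-(z * (4*t)^a))^k = (-z)^k * ((4:ℝ)^(a*(k:ℝ)) * t^(a*(k:ℝ))) := by
      rw [show -(z * (4*t)^a) = (-z) * (4*t)^a by ring, mul_pow,
        ← Real.rpow_natCast ((4*t)^a) k, ← Real.rpow_mul h4t.le,
        Real.mul_rpow (by norm_num : (0:ℝ) ≤ 4) ht.le]
    rw [hnum, hF, hC]
    simp only []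
    rw [show 2*b + (2*a)*(k:ℝ) = 2*b + 2*a*k by ring]
    rw [show b - 1/2 + a*(k:ℝ) = (b - 1/2) + a*k by ring,
      Real.rpow_add ht]
    ring
  -- put everything together
  calc mittagLefflerReal a b (-z)
      = ∑' k : ℕ, ((2:ℝ) ^ (2*b - 1) / Real.sqrt Real.pi) * (C k * Real.Gamma (b + 1/2 + a*k)) := by
        rw [mittagLefflerReal]
        apply tsum_congr
        intro k
        by_cases h2 : Real.Gamma (2*b + 2*a*k) = 0
        · rw [hC]
          simp only []
          rw [h2, hzero k h2]
          simp
        · have hs0 : Real.Gamma (b + a*k) ≠ 0 := by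
            intro h
            have hd := hdup k
            rw [h, zero_mul] at hd
            rcases mul_eq_zero.mp hd.symm with h' | h'
            · rcases mul_eq_zero.mp h' with h'' | h''
              · exact h2 h''
              · exact absurd h'' (ne_of_gt (Real.rpow_pos_of_pos two_pos _))
            · exact absurd h' (ne_of_gt hπ)
          have hpow : (2:ℝ)^(1 - (2*b + 2*a*(k:ℝ))) * ((2:ℝ)^(2*b-1) * (4:ℝ)^(a*(k:ℝ))) = 1 := by
            rw [four_rpow, ← Real.rpow_add two_pos, ← Real.rpow_add two_pos,
              show 1 - (2*b + 2*a*(k:ℝ)) + (2*b - 1 + 2*(a*(k:ℝ))) = (0:ℝ) by ring,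
              Real.rpow_zero]
          rw [hC]
          simp only []
          have hd := hdup k
          set G1 : ℝ := Real.Gamma (b + a*(k:ℝ)) with hG1
          set G2 : ℝ := Real.Gamma (b + 1/2 + a*(k:ℝ)) with hG2
          set G3 : ℝ := Real.Gamma (2*b + 2*a*(k:ℝ)) with hG3
          set P2 : ℝ := (2:ℝ)^(1 - (2*b + 2*a*(k:ℝ))) with hP2
          set P4 : ℝ := (4:ℝ)^(a*(k:ℝ)) with hP4
          set A : ℝ := (2:ℝ)^(2*b-1) with hA
          field_simp
          linear_combination (-((-z)^k * A * P4)) * hd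
            + (-((-z)^k * Real.sqrt Real.pi * G3)) * hpow
    _ = ((2:ℝ) ^ (2*b - 1) / Real.sqrt Real.pi) * ∑' k : ℕ, (C k * Real.Gamma (b + 1/2 + a*k)) :=
        tsum_mul_left
    _ = ((2:ℝ) ^ (2*b - 1) / Real.sqrt Real.pi) * ∑' k : ℕ, ∫ t in Set.Ioi (0:ℝ), F k t := by
        rw [tsum_congr fun k => (hFint k).symm]
    _ = ((2:ℝ) ^ (2*b - 1) / Real.sqrt Real.pi) * ∫ t in Set.Ioi (0:ℝ), ∑' k : ℕ, F k t := by
        rw [MeasureTheory.integral_tsum (fun k => (hInt k).aestronglyMeasurable)]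
        rw [tsum_congr hFlin, ← ENNReal.ofReal_tsum_of_nonneg
          (fun k => mul_nonneg (abs_nonneg _) (hGhalf k).le) hGsum]
        exact ENNReal.ofReal_ne_top
    _ = ((2:ℝ) ^ (2*b - 1) / Real.sqrt Real.pi) *
          ∫ t in Set.Ioi (0:ℝ),
            t ^ (b - 1/2) * Real.exp (-t) * mittagLefflerReal (2*a) (2*b) (-(z * (4*t)^a)) := by
        rw [MeasureTheory.setIntegral_congr_fun measurableSet_Ioi hkey]
end

section
/- Möbius inversion for the Mittag-Leffler series: let x > 0 be a real number, b a complex number, and z a nonzero complex number, with z^t := exp(t·Log z) for real t (principal logarithm). Then z^x / Γ(b + x) = ∑_{n=1}^∞ μ(n) · ( E_{n·x, b}(z^{n·x}) − 1/Γ(b) ), where μ is the Möbius function, and the series converges absolutely. -/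
open Filter Finset Topology

namespace MLaux

lemma Gamma_add_nat (u : ℂ) (hu : 0 < u.re) (p : ℕ) :
    Complex.Gamma (u + p) = Complex.Gamma u * ∏ j ∈ Finset.range p, (u + j) := by
  induction p with
  | zero => simp
  | succ p ih =>
    have hre : 0 < (u + (p : ℂ)).re := by
      simp only [Complex.add_re, Complex.natCast_re]
      positivity
    have h1 : u + (p : ℂ) ≠ 0 := by
      intro h; rw [h] at hre; simp at hre
    have h2 : u + ((p + 1 : ℕ) : ℂ) = (u + p) + 1 := by push_cast; ring
    rw [h2, Complex.Gamma_add_one _ h1, ih, Finset.prod_range_succ]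
    ring

lemma inv_Gamma_bound (u : ℂ) (hu : 1 ≤ u.re) (p : ℕ) :
    ‖(Complex.Gamma (u + p))⁻¹‖ ≤ ‖(Complex.Gamma u)⁻¹‖ / p.factorial := by
  have hre : 0 < u.re := lt_of_lt_of_le one_pos hu
  rw [Gamma_add_nat u hre p, mul_inv, norm_mul]
  have hprod : (p.factorial : ℝ) ≤ ‖∏ j ∈ Finset.range p, (u + (j : ℂ))‖ := by
    rw [norm_prod]
    calc (p.factorial : ℝ) = ∏ j ∈ Finset.range p, ((j : ℝ) + 1) := by
          rw_mod_cast [Finset.prod_range_add_one_eq_factorial]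
      _ ≤ ∏ j ∈ Finset.range p, ‖u + (j : ℂ)‖ := by
          refine Finset.prod_le_prod (fun j _ => by positivity) (fun j _ => ?_)
          calc (j : ℝ) + 1 ≤ (u + (j : ℂ)).re := by
                simp only [Complex.add_re, Complex.natCast_re]; linarith
            _ ≤ ‖u + (j : ℂ)‖ := Complex.re_le_norm _
  have h2 : ‖(∏ j ∈ Finset.range p, (u + (j : ℂ)))⁻¹‖ ≤ (p.factorial : ℝ)⁻¹ := by
    rw [norm_inv]
    exact inv_anti₀ (by positivity) hprod
  calc ‖(Complex.Gamma u)⁻¹‖ * ‖(∏ j ∈ Finset.range p, (u + (j : ℂ)))⁻¹‖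
      ≤ ‖(Complex.Gamma u)⁻¹‖ * (p.factorial : ℝ)⁻¹ :=
        mul_le_mul_of_nonneg_left h2 (norm_nonneg _)
    _ = ‖(Complex.Gamma u)⁻¹‖ / p.factorial := by rw [div_eq_mul_inv]

lemma tendsto_pow_mul_inv_Gamma (b : ℂ) (x : ℝ) (hx : 0 < x) (B : ℝ) (hB : 0 < B) :
    Tendsto (fun m : ℕ => B ^ m * ‖(Complex.Gamma (b + (((m : ℝ) * x : ℝ) : ℂ)))⁻¹‖)
      atTop (𝓝 0) := by
  set K : ℕ := ⌈‖b‖⌉₊ + 2 with hK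
  have hKb : ‖b‖ + 2 ≤ (K : ℝ) := by
    have := Nat.le_ceil ‖b‖
    push_cast [hK]; linarith
  -- uniform bound on the compact segment
  have hcont : ContinuousOn (fun t : ℝ => (Complex.Gamma (b + t + K))⁻¹) (Set.Icc 0 1) := by
    apply Continuous.continuousOn
    exact Complex.differentiable_one_div_Gamma.continuous.comp
      (by continuity)
  obtain ⟨M, hM⟩ := (isCompact_Icc).exists_bound_of_continuousOn hcont
  have hM0 : 0 ≤ M := le_trans (norm_nonneg _) (hM 0 (by norm_num))
  -- B' setup
  set B' : ℝ := max (B ^ (x⁻¹ : ℝ)) 1 with hB'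
  have hB'1 : (1 : ℝ) ≤ B' := le_max_right _ _
  have hB'0 : (0 : ℝ) < B' := lt_of_lt_of_le one_pos hB'1
  have hBB' : B ≤ B' ^ x := by
    calc B = (B ^ (x⁻¹ : ℝ)) ^ x := by
          rw [← Real.rpow_mul hB.le, inv_mul_cancel₀ hx.ne', Real.rpow_one]
      _ ≤ B' ^ x := Real.rpow_le_rpow (Real.rpow_nonneg hB.le _) (le_max_left _ _) hx.le
  set c : ℝ := M * B' ^ (K + 1) with hc
  -- floor function tendsto
  have hmx : Tendsto (fun m : ℕ => (m : ℝ) * x) atTop atTop :=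
    tendsto_natCast_atTop_atTop.atTop_mul_const hx
  have hfloor : Tendsto (fun m : ℕ => ⌊(m : ℝ) * x⌋₊) atTop atTop :=
    tendsto_nat_floor_atTop.comp hmx
  have hφ : Tendsto (fun m : ℕ => ⌊(m : ℝ) * x⌋₊ - K) atTop atTop :=
    (tendsto_sub_atTop_nat K).comp hfloor
  have hψ : Tendsto (fun q : ℕ => B' ^ q / q.factorial) atTop (𝓝 0) :=
    FloorSemiring.tendsto_pow_div_factorial_atTop B'
  have hRHS : Tendsto (fun m : ℕ => c * (B' ^ (⌊(m : ℝ) * x⌋₊ - K) /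
      (⌊(m : ℝ) * x⌋₊ - K).factorial)) atTop (𝓝 0) := by
    have := (hψ.comp hφ).const_mul c
    simpa using this
  apply squeeze_zero' (Eventually.of_forall fun m => by positivity) _ hRHS
  -- the eventual bound
  filter_upwards [hfloor.eventually_ge_atTop K] with m hm
  set n : ℕ := ⌊(m : ℝ) * x⌋₊ with hn
  set p : ℕ := n - K with hp
  set t : ℝ := (m : ℝ) * x - n with ht
  have hmx0 : (0 : ℝ) ≤ (m : ℝ) * x := by positivity
  have ht0 : 0 ≤ t := by
    rw [ht]; simp only [sub_nonneg, hn]; exact Nat.floor_le hmx0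
  have ht1 : t ≤ 1 := by
    have := Nat.lt_floor_add_one ((m : ℝ) * x)
    rw [ht]; rw [hn]; linarith
  set u : ℂ := b + (t : ℂ) + (K : ℂ) with hu
  have hure : 1 ≤ u.re := by
    have hbre : -‖b‖ ≤ b.re := neg_le_of_abs_le (Complex.abs_re_le_norm b)
    simp only [hu, Complex.add_re, Complex.ofReal_re, Complex.natCast_re]
    linarith
  have harg : b + (((m : ℝ) * x : ℝ) : ℂ) = u + p := by
    have hcast : ((p : ℕ) : ℂ) = (n : ℂ) - (K : ℂ) := by
      rw [hp]; push_cast [Nat.cast_sub hm]; ring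
    rw [hu, hcast, ht]
    push_cast
    ring
  have hGbound : ‖(Complex.Gamma (b + (((m : ℝ) * x : ℝ) : ℂ)))⁻¹‖ ≤ M / p.factorial := by
    rw [harg]
    calc ‖(Complex.Gamma (u + p))⁻¹‖ ≤ ‖(Complex.Gamma u)⁻¹‖ / p.factorial :=
          inv_Gamma_bound u hure p
      _ ≤ M / p.factorial := by
          gcongr
          exact hM t ⟨ht0, ht1⟩
  have hBm : B ^ m ≤ B' ^ p * B' ^ (K + 1) := by
    have h1 : B ^ m ≤ (B' ^ x) ^ m := pow_le_pow_left₀ hB.le hBB' m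
    have h2 : (B' ^ x) ^ m = B' ^ ((m : ℝ) * x) := by
      rw [← Real.rpow_natCast (B' ^ x) m, ← Real.rpow_mul hB'0.le, mul_comm]
    have h3 : B' ^ ((m : ℝ) * x) ≤ B' ^ (((n + 1 : ℕ) : ℝ)) := by
      apply Real.rpow_le_rpow_of_exponent_le hB'1
      push_cast
      have := Nat.lt_floor_add_one ((m : ℝ) * x)
      rw [hn]; linarith
    have h4 : B' ^ (((n + 1 : ℕ) : ℝ)) = B' ^ (n + 1 : ℕ) := Real.rpow_natCast _ _
    have h5 : n + 1 = p + (K + 1) := by omega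
    calc B ^ m ≤ (B' ^ x) ^ m := h1
      _ = B' ^ ((m : ℝ) * x) := h2
      _ ≤ B' ^ (((n + 1 : ℕ) : ℝ)) := h3
      _ = B' ^ (n + 1 : ℕ) := h4
      _ = B' ^ p * B' ^ (K + 1) := by rw [h5, pow_add]
  calc B ^ m * ‖(Complex.Gamma (b + (((m : ℝ) * x : ℝ) : ℂ)))⁻¹‖
      ≤ (B' ^ p * B' ^ (K + 1)) * (M / p.factorial) :=
        mul_le_mul hBm hGbound (norm_nonneg _) (by positivity)
    _ = c * (B' ^ p / p.factorial) := by rw [hc]; ring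

/-- The basic term `z^{mx} / Γ(b + m x)`. -/
noncomputable def Faux (x : ℝ) (b z : ℂ) (m : ℕ) : ℂ :=
  z ^ ((((m : ℝ) * x : ℝ)) : ℂ) / Complex.Gamma (b + (((m : ℝ) * x : ℝ) : ℂ))

lemma Faux_zero (x : ℝ) (b z : ℂ) : Faux x b z 0 = 1 / Complex.Gamma b := by
  simp [Faux]

lemma Faux_bound (x : ℝ) (hx : 0 < x) (b z : ℂ) (hz : z ≠ 0) :
    ∃ C : ℝ, 0 ≤ C ∧ ∀ m : ℕ, ‖Faux x b z m‖ ≤ C * (2 : ℝ)⁻¹ ^ m := by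
  set A : ℝ := Real.exp (x * (Complex.log z).re) with hA
  have hA0 : 0 < A := Real.exp_pos _
  have hnorm : ∀ m : ℕ, ‖z ^ ((((m : ℝ) * x : ℝ)) : ℂ)‖ = A ^ m := by
    intro m
    rw [Complex.cpow_def_of_ne_zero hz, Complex.norm_exp]
    have h : (Complex.log z * ((((m : ℝ) * x : ℝ)) : ℂ)).re
        = (m : ℝ) * (x * (Complex.log z).re) := by
      simp [Complex.mul_re, Complex.ofReal_re, Complex.ofReal_im]; ring
    rw [h, Real.exp_nat_mul]
  obtain ⟨C0, hC0⟩ := (tendsto_pow_mul_inv_Gamma b x hx (2 * A) (by positivity)).bddAbove_range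
  simp only [upperBounds, Set.mem_range, forall_exists_index, Set.mem_setOf_eq] at hC0
  refine ⟨max C0 0, le_max_right _ _, fun m => ?_⟩
  have hb : (2 * A) ^ m * ‖(Complex.Gamma (b + (((m : ℝ) * x : ℝ) : ℂ)))⁻¹‖ ≤ C0 :=
    hC0 m rfl
  have hF : ‖Faux x b z m‖
      = A ^ m * ‖(Complex.Gamma (b + (((m : ℝ) * x : ℝ) : ℂ)))⁻¹‖ := by
    rw [Faux, div_eq_mul_inv, norm_mul, hnorm, norm_inv]
  rw [hF]
  have h2 : A ^ m * ‖(Complex.Gamma (b + (((m : ℝ) * x : ℝ) : ℂ)))⁻¹‖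
      = ((2 * A) ^ m * ‖(Complex.Gamma (b + (((m : ℝ) * x : ℝ) : ℂ)))⁻¹‖) * (2 : ℝ)⁻¹ ^ m := by
    have key : ((2:ℝ) * A) ^ m * (2:ℝ)⁻¹ ^ m = A ^ m := by
      rw [← mul_pow]; congr 1; ring
    rw [← key]; ring
  rw [h2]
  have : (0:ℝ) ≤ (2 : ℝ)⁻¹ ^ m := by positivity
  calc ((2 * A) ^ m * ‖(Complex.Gamma (b + (((m : ℝ) * x : ℝ) : ℂ)))⁻¹‖) * (2 : ℝ)⁻¹ ^ m
      ≤ C0 * (2 : ℝ)⁻¹ ^ m := mul_le_mul_of_nonneg_right hb this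
    _ ≤ max C0 0 * (2 : ℝ)⁻¹ ^ m := mul_le_mul_of_nonneg_right (le_max_left _ _) this

lemma ML_eq (x : ℝ) (b z : ℂ) (hz : z ≠ 0) (n : ℕ) :
    mittagLeffler ((((n : ℝ) + 1) * x : ℝ) : ℂ) b (z ^ ((((n : ℝ) + 1) * x : ℝ) : ℂ))
      = ∑' k : ℕ, Faux x b z ((n + 1) * k) := by
  unfold mittagLeffler Faux
  refine tsum_congr fun k => ?_
  have ha : ((((n : ℝ) + 1) * x : ℝ) : ℂ) * (k : ℂ)
      = ((((((n + 1) * k : ℕ) : ℝ)) * x : ℝ) : ℂ) := by push_cast; ring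
  have h1 : (z ^ ((((n : ℝ) + 1) * x : ℝ) : ℂ)) ^ (k : ℕ)
      = z ^ ((((((n + 1) * k : ℕ) : ℝ)) * x : ℝ) : ℂ) := by
    rw [Complex.cpow_def_of_ne_zero hz, Complex.cpow_def_of_ne_zero hz,
      ← Complex.exp_nat_mul]
    congr 1
    rw [← ha]; ring
  rw [h1, ha]

lemma moeb_norm (n : ℕ) : ‖((ArithmeticFunction.moebius n : ℤ) : ℂ)‖ ≤ 1 := by
  by_cases hsq : Squarefree n
  · rw [ArithmeticFunction.moebius_apply_of_squarefree hsq]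
    push_cast
    rw [norm_pow, norm_neg, norm_one, one_pow]
  · rw [ArithmeticFunction.moebius_eq_zero_of_not_squarefree hsq]
    simp

end MLaux

/-- Möbius inversion for the Mittag-Leffler series: for real `x > 0`, complex `b` and
`z ≠ 0` (with `z^t := exp(t Log z)` for real `t`, i.e. the principal power),
`z^x / Γ(b + x) = ∑_{n=1}^∞ μ(n) (E_{nx,b}(z^{nx}) − 1/Γ(b))`,
the series converging absolutely. -/
theorem mittagLeffler_moebius_inversion (x : ℝ) (hx : 0 < x) (b z : ℂ) (hz : z ≠ 0) :
    Summable (fun n : ℕ =>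
      ‖(ArithmeticFunction.moebius (n + 1) : ℂ) *
        (mittagLeffler ((((n : ℕ) + 1) * x : ℝ) : ℂ) b (z ^ (((((n : ℕ) + 1) * x : ℝ)) : ℂ))
          - 1 / Complex.Gamma b)‖) ∧
    z ^ (x : ℂ) / Complex.Gamma (b + (x : ℂ))
      = ∑' n : ℕ,
          (ArithmeticFunction.moebius (n + 1) : ℂ) *
            (mittagLeffler ((((n : ℕ) + 1) * x : ℝ) : ℂ) b (z ^ (((((n : ℕ) + 1) * x : ℝ)) : ℂ))
              - 1 / Complex.Gamma b) := by
  obtain ⟨C, hC0, hC⟩ := MLaux.Faux_bound x hx b z hz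
  set F : ℕ → ℂ := MLaux.Faux x b z with hF
  -- summability of the inner series
  have hhalf : Summable fun k : ℕ => (2 : ℝ)⁻¹ ^ k :=
    summable_geometric_of_lt_one (by norm_num) (by norm_num)
  have hmono : ∀ {i j : ℕ}, i ≤ j → (2 : ℝ)⁻¹ ^ j ≤ (2 : ℝ)⁻¹ ^ i := fun h =>
    pow_le_pow_of_le_one (by norm_num) (by norm_num) h
  have hsum_mul : ∀ n : ℕ, Summable fun k : ℕ => F ((n + 1) * k) := by
    intro n
    apply Summable.of_norm_bounded (hhalf.mul_left C)
    intro k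
    exact (hC _).trans (mul_le_mul_of_nonneg_left
      (hmono (Nat.le_mul_of_pos_left k n.succ_pos)) hC0)
  -- the double sequence
  set G : ℕ × ℕ → ℂ := fun p =>
    ((ArithmeticFunction.moebius (p.1 + 1) : ℤ) : ℂ) * F ((p.1 + 1) * (p.2 + 1)) with hG
  have hGnorm : Summable fun p : ℕ × ℕ => ‖G p‖ := by
    apply Summable.of_nonneg_of_le (fun p => norm_nonneg _) (fun p => ?_)
      (Summable.mul_of_nonneg (hhalf.mul_left C) hhalf
        (fun n => by positivity) (fun k => by positivity))
    have hle : p.1 + p.2 ≤ (p.1 + 1) * (p.2 + 1) := by nlinarith [p.1.zero_le, p.2.zero_le]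
    calc ‖G p‖ ≤ 1 * (C * (2 : ℝ)⁻¹ ^ ((p.1 + 1) * (p.2 + 1))) := by
          rw [hG, norm_mul]
          exact mul_le_mul (MLaux.moeb_norm _) (hC _) (norm_nonneg _) zero_le_one
      _ ≤ 1 * (C * (2 : ℝ)⁻¹ ^ (p.1 + p.2)) := by
          rw [one_mul, one_mul]
          exact mul_le_mul_of_nonneg_left (hmono hle) hC0
      _ = C * (2 : ℝ)⁻¹ ^ p.1 * (2 : ℝ)⁻¹ ^ p.2 := by rw [pow_add]; ring
  have hGsum : Summable G := hGnorm.of_norm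
  -- inner sums
  have hML : ∀ n : ℕ,
      mittagLeffler ((((n : ℝ) + 1) * x : ℝ) : ℂ) b (z ^ ((((n : ℝ) + 1) * x : ℝ) : ℂ))
        - 1 / Complex.Gamma b = ∑' k : ℕ, F ((n + 1) * (k + 1)) := by
    intro n
    rw [MLaux.ML_eq x b z hz n, (hsum_mul n).tsum_eq_zero_add]
    have h0 : F ((n + 1) * 0) = 1 / Complex.Gamma b := by
      rw [Nat.mul_zero, hF, MLaux.Faux_zero]
    rw [h0]
    ring
  have hInner : ∀ n : ℕ, ∑' k : ℕ, G (n, k)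
      = ((ArithmeticFunction.moebius (n + 1) : ℤ) : ℂ) *
        (mittagLeffler ((((n : ℝ) + 1) * x : ℝ) : ℂ) b (z ^ ((((n : ℝ) + 1) * x : ℝ) : ℂ))
          - 1 / Complex.Gamma b) := by
    intro n
    rw [hML n, hG]
    show ∑' k : ℕ, ((ArithmeticFunction.moebius (n + 1) : ℤ) : ℂ) * F ((n + 1) * (k + 1))
      = _
    exact tsum_mul_left
  constructor
  · apply Summable.of_nonneg_of_le (fun n => norm_nonneg _) (fun n => ?_) hGnorm.prod
    rw [← hInner n]
    exact norm_tsum_le_tsum_norm (hGnorm.prod_factor n)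
  · -- the fiberwise regrouping
    set e : ℕ × ℕ → ℕ × ℕ := fun p => (p.1 + 1, p.2 + 1) with he'
    have he : Function.Injective e := by
      intro p q h
      rw [he', Prod.ext_iff] at h
      simp only at h
      exact Prod.ext (by omega) (by omega)
    set H : ℕ × ℕ → ℂ := fun q =>
      if q.1 = 0 ∨ q.2 = 0 then 0
      else ((ArithmeticFunction.moebius q.1 : ℤ) : ℂ) * F (q.1 * q.2) with hH'
    have hrange : ∀ q ∉ Set.range e, H q = 0 := by
      intro q hq
      rw [hH']
      apply if_pos
      by_contra h
      push_neg at h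
      exact hq ⟨(q.1 - 1, q.2 - 1), Prod.ext (by simp [he']; omega) (by simp [he']; omega)⟩
    have hcomp : H ∘ e = G := by
      funext p
      simp only [Function.comp_apply, hH', he', hG, Nat.succ_ne_zero, or_self, if_false]
    have hHsum : HasSum H (∑' p : ℕ × ℕ, G p) := by
      rw [← he.hasSum_iff hrange, hcomp]
      exact hGsum.hasSum
    have hfib := hHsum.tsum_fiberwise (fun q => q.1 * q.2)
    have hfibeq : (fun m : ℕ => ∑' q : ((fun q : ℕ × ℕ => q.1 * q.2) ⁻¹' {m}), H q)
        = fun m : ℕ => if m = 1 then F 1 else 0 := by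
      funext m
      rcases eq_or_ne m 0 with rfl | hm
      · rw [if_neg (by norm_num)]
        have hz0 : ∀ q : ((fun q : ℕ × ℕ => q.1 * q.2) ⁻¹' ({0} : Set ℕ)), H q.1 = 0 := by
          rintro ⟨⟨q1, q2⟩, hq⟩
          have hq0 : q1 * q2 = 0 := hq
          rw [hH']
          exact if_pos (Nat.mul_eq_zero.mp hq0)
        rw [tsum_congr hz0, tsum_zero]
      · have hset : ((fun q : ℕ × ℕ => q.1 * q.2) ⁻¹' {m} : Set (ℕ × ℕ))
            = ↑(m.divisorsAntidiagonal) := by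
          ext q
          simp [Nat.mem_divisorsAntidiagonal, hm]
        rw [hset, Finset.tsum_subtype' (m.divisorsAntidiagonal) H]
        have hsum_eq : ∑ q ∈ m.divisorsAntidiagonal, H q
            = (∑ q ∈ m.divisorsAntidiagonal, ((ArithmeticFunction.moebius q.1 : ℤ) : ℂ)) * F m := by
          rw [Finset.sum_mul]
          refine Finset.sum_congr rfl fun q hq => ?_
          obtain ⟨h1, h2⟩ := Nat.ne_zero_of_mem_divisorsAntidiagonal hq
          have hqm : q.1 * q.2 = m := (Nat.mem_divisorsAntidiagonal.mp hq).1
          rw [hH']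
          simp only [h1, h2, or_self, if_false, hqm]
        have hmoeb : ∑ q ∈ m.divisorsAntidiagonal, ((ArithmeticFunction.moebius q.1 : ℤ) : ℂ)
            = if m = 1 then 1 else 0 := by
          rw [Nat.sum_divisorsAntidiagonal (fun d _ => ((ArithmeticFunction.moebius d : ℤ) : ℂ))]
          have h2 : ∑ d ∈ m.divisors, (ArithmeticFunction.moebius d : ℤ)
              = if m = 1 then 1 else 0 := by
            calc ∑ d ∈ m.divisors, (ArithmeticFunction.moebius d : ℤ)
                = (ArithmeticFunction.moebius * ArithmeticFunction.zeta :
                    ArithmeticFunction ℤ) m := ArithmeticFunction.coe_mul_zeta_apply.symm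
              _ = (1 : ArithmeticFunction ℤ) m := by
                  rw [ArithmeticFunction.moebius_mul_coe_zeta]
              _ = if m = 1 then 1 else 0 := ArithmeticFunction.one_apply
          rw [← Int.cast_sum, h2]
          split_ifs <;> simp
        rw [hsum_eq, hmoeb]
        split_ifs with h
        · rw [h, one_mul]
        · rw [zero_mul]
    rw [hfibeq] at hfib
    have hF1 : F 1 = z ^ (x : ℂ) / Complex.Gamma (b + (x : ℂ)) := by
      rw [hF, MLaux.Faux]
      norm_num
    have huniq : F 1 = ∑' p : ℕ × ℕ, G p := (hasSum_ite_eq 1 (F 1)).unique hfib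
    rw [← hF1, huniq, hGsum.tsum_prod' hGsum.prod_factor]
    refine tsum_congr fun n => ?_
    rw [hInner n]
end
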